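/- arXiv:1512.09123 — 15 statements merged into one kernel-verified Lean document; each statement's English description precedes it below -/
import Mathlib

section
/- Let v : ℤ → ℝ → ℂ be such that for every n ∈ ℤ and t ∈ ℝ the derivative ∂_t v(n,t) exists and equals v(n,t)^2·(v(n+1,t) − v(n−1,t)) (the modified Volterra equation). Define u(n,t) := v(n,t)·v(n+1,t). Then for every n and t, ∂_t u(n,t) = u(n,t)·(u(n+1,t) − u(n−1,t)), i.e. u satisfies the Volterra equation. Thus u = v·v₁ is a Miura-type transformation from the modified Volterra equation to the Volterra equation. -/
/-- The formula `u = v·v₁` is a Miura-type transformation from the modified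
Volterra equation `v_t = v²(v₁ − v₋₁)` to the Volterra equation
`u_t = u(u₁ − u₋₁)`. -/
theorem miura_modified_volterra_to_volterra
    (v : ℤ → ℝ → ℂ)
    (hv : ∀ (n : ℤ) (t : ℝ),
      HasDerivAt (v n) ((v n t) ^ 2 * (v (n + 1) t - v (n - 1) t)) t)
    (u : ℤ → ℝ → ℂ)
    (hu : ∀ (n : ℤ) (t : ℝ), u n t = v n t * v (n + 1) t) :
    ∀ (n : ℤ) (t : ℝ),
      HasDerivAt (u n) (u n t * (u (n + 1) t - u (n - 1) t)) t := by
  intro n t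
  have hun : u n = fun s => v n s * v (n + 1) s := funext fun s => hu n s
  rw [hun]
  have h : HasDerivAt (fun s => v n s * v (n + 1) s) _ t := (hv n t).mul (hv (n + 1) t)
  convert h using 1
  simp only [hu]
  have e1 : n + 1 + 1 = n + 2 := by ring
  have e2 : n + 1 - 1 = n := by ring
  have e3 : n - 1 + 1 = n := by ring
  rw [e1, e2, e3]
  ring
end

section
/- Fix λ ∈ ℂ. Let u : ℤ → ℝ → ℂ be nowhere zero and t-differentiable, and define 2×2 matrices M(n,t) := [[0, u(n,t)], [−1, λ]] and 𝒰(n,t) := [[u(n,t), λ·u(n−1,t)], [−λ, λ² + u(n−1,t)]]. Then the Darboux–Lax equation ∂_t M(n,t) = 𝒰(n+1,t)·M(n,t) − M(n,t)·𝒰(n,t) holds for all n ∈ ℤ and t ∈ ℝ if and only if u satisfies the Volterra equation ∂_t u(n,t) = u(n,t)·(u(n+1,t) − u(n−1,t)) for all n and t. -/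
/-- For a nowhere-zero, t-differentiable `u : ℤ → ℝ → ℂ` and fixed `λ ∈ ℂ`, the
Darboux–Lax equation `∂ₜ M = S(𝒰)·M − M·𝒰` for
`M = [[0, u],[−1, λ]]`, `𝒰 = [[u, λu₋₁],[−λ, λ² + u₋₁]]`
holds (for all n, t) if and only if `u` satisfies the Volterra equation
`uₜ = u(u₁ − u₋₁)`. -/
theorem DLR_volterra_iff
    (lam : ℂ) (u : ℤ → ℝ → ℂ)
    (hne : ∀ (n : ℤ) (t : ℝ), u n t ≠ 0)
    (hdiff : ∀ (n : ℤ) (t : ℝ), DifferentiableAt ℝ (u n) t)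
    (M 𝒰 : ℤ → ℝ → Matrix (Fin 2) (Fin 2) ℂ)
    (hM : ∀ (n : ℤ) (t : ℝ), M n t = !![0, u n t; -1, lam])
    (hU : ∀ (n : ℤ) (t : ℝ),
      𝒰 n t = !![u n t, lam * u (n - 1) t; -lam, lam ^ 2 + u (n - 1) t]) :
    (∀ (n : ℤ) (t : ℝ) (i j : Fin 2),
        HasDerivAt (fun s => M n s i j)
          ((𝒰 (n + 1) t * M n t - M n t * 𝒰 n t) i j) t)
    ↔ (∀ (n : ℤ) (t : ℝ),
        HasDerivAt (u n) (u n t * (u (n + 1) t - u (n - 1) t)) t) := by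
  have key : ∀ (n : ℤ) (t : ℝ), 𝒰 (n + 1) t * M n t - M n t * 𝒰 n t
      = !![0, u n t * (u (n + 1) t - u (n - 1) t); 0, 0] := by
    intro n t
    rw [hM, hU, hU]
    simp only [add_sub_cancel_right]
    ext i j
    fin_cases i <;> fin_cases j <;>
      simp [Matrix.mul_apply, Fin.sum_univ_two] <;> ring
  constructor
  · intro h n t
    have h01 := h n t 0 1
    rw [key] at h01
    simpa [hM] using h01
  · intro h n t i j
    rw [key]
    fin_cases i <;> fin_cases j <;>
      simp only [hM, Matrix.cons_val', Matrix.cons_val_zero, Matrix.cons_val_one,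
        Matrix.head_cons, Matrix.empty_val', Matrix.cons_val_fin_one, Matrix.head_fin_const,
        Matrix.of_apply]
    · exact hasDerivAt_const _ _
    · exact h n t
    · exact hasDerivAt_const _ _
    · exact hasDerivAt_const _ _
end

section
/- Work in GL₂ over the field F = ℂ(λ) of rational functions in one variable λ. For each u ∈ ℂ with u ≠ 0 let M(u) ∈ GL₂(F) be the matrix [[0, u], [−1, λ]] (its determinant is u ≠ 0). Then the subgroup of GL₂(F) generated by the set { M(ũ)·M(u)⁻¹ : u, ũ ∈ ℂ, u ≠ 0, ũ ≠ 0 } is exactly the set of constant diagonal matrices { [[a, 0], [0, 1]] : a ∈ ℂ, a ≠ 0 }. (This is the group ℋ₁ associated with the Darboux–Lax representation of the Volterra equation.) -/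
open Matrix

/-- The Darboux matrix `M(u) = [[0, u],[−1, λ]]` of the Volterra equation,
as a matrix over the field `ℂ(λ)` of rational functions. -/
noncomputable def volterraDarbouxMatrix (u : ℂ) :
    Matrix (Fin 2) (Fin 2) (RatFunc ℂ) :=
  !![0, algebraMap ℂ (RatFunc ℂ) u; -1, RatFunc.X]

lemma amap_ne (u : ℂ) (hu : u ≠ 0) : algebraMap ℂ (RatFunc ℂ) u ≠ 0 := by
  simpa using hu

lemma vdm_inv (u : ℂ) (hu : u ≠ 0) :
    (volterraDarbouxMatrix u)⁻¹ =
      !![RatFunc.X * (algebraMap ℂ (RatFunc ℂ) u)⁻¹, -1;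
        (algebraMap ℂ (RatFunc ℂ) u)⁻¹, 0] := by
  apply Matrix.inv_eq_right_inv
  have h := amap_ne u hu
  have h2 : RatFunc.C u ≠ 0 := by simpa using hu
  rw [volterraDarbouxMatrix, Matrix.mul_fin_two, Matrix.one_fin_two]
  congr 1 <;> field_simp <;> simp [mul_inv_cancel₀ h2, hu]

lemma vdm_key (u v : ℂ) (hu : u ≠ 0) :
    volterraDarbouxMatrix v * (volterraDarbouxMatrix u)⁻¹ =
      !![algebraMap ℂ (RatFunc ℂ) (v / u), 0; 0, 1] := by
  have h := amap_ne u hu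
  rw [vdm_inv u hu, volterraDarbouxMatrix, Matrix.mul_fin_two]
  congr 1 <;> simp [div_eq_mul_inv, _root_.map_mul] <;> field_simp <;> ring

noncomputable def diagGL : ℂˣ →* GL (Fin 2) (RatFunc ℂ) where
  toFun a :=
    ⟨!![algebraMap ℂ (RatFunc ℂ) a, 0; 0, 1],
     !![algebraMap ℂ (RatFunc ℂ) (a⁻¹ : ℂˣ), 0; 0, 1],
     by rw [Matrix.mul_fin_two, Matrix.one_fin_two]; simp [← _root_.map_mul],
     by rw [Matrix.mul_fin_two, Matrix.one_fin_two]; simp [← _root_.map_mul]⟩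
  map_one' := by ext i j; simp [Matrix.one_fin_two]
  map_mul' a b := by
    ext i j
    simp [Matrix.mul_fin_two, _root_.map_mul]

/-- The group `ℋ₁` for the Darboux–Lax representation of the Volterra equation:
the subgroup of `GL₂(ℂ(λ))` generated by the products `M(ũ)·M(u)⁻¹`
(for nonzero `u, ũ ∈ ℂ`) is exactly the set of constant diagonal matrices
`[[a, 0],[0, 1]]` with `a ∈ ℂ`, `a ≠ 0`. -/
theorem volterra_H1_group :
    (Subgroup.closure
      { g : GL (Fin 2) (RatFunc ℂ) |
        ∃ u utilde : ℂ, u ≠ 0 ∧ utilde ≠ 0 ∧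
          (g : Matrix (Fin 2) (Fin 2) (RatFunc ℂ)) =
            volterraDarbouxMatrix utilde * (volterraDarbouxMatrix u)⁻¹ } :
      Set (GL (Fin 2) (RatFunc ℂ)))
    = { g : GL (Fin 2) (RatFunc ℂ) |
        ∃ a : ℂ, a ≠ 0 ∧
          (g : Matrix (Fin 2) (Fin 2) (RatFunc ℂ)) =
            !![algebraMap ℂ (RatFunc ℂ) a, 0; 0, 1] } := by
  have hmem : ∀ g : GL (Fin 2) (RatFunc ℂ),
      g ∈ diagGL.range ↔ ∃ a : ℂ, a ≠ 0 ∧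
        (g : Matrix (Fin 2) (Fin 2) (RatFunc ℂ)) =
          !![algebraMap ℂ (RatFunc ℂ) a, 0; 0, 1] := by
    intro g
    constructor
    · rintro ⟨a, rfl⟩
      exact ⟨(a : ℂ), a.ne_zero, rfl⟩
    · rintro ⟨a, ha, hg⟩
      exact ⟨Units.mk0 a ha, Units.ext hg.symm⟩
  have hcl : Subgroup.closure
      { g : GL (Fin 2) (RatFunc ℂ) |
        ∃ u utilde : ℂ, u ≠ 0 ∧ utilde ≠ 0 ∧
          (g : Matrix (Fin 2) (Fin 2) (RatFunc ℂ)) =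
            volterraDarbouxMatrix utilde * (volterraDarbouxMatrix u)⁻¹ }
      = diagGL.range := by
    apply le_antisymm
    · rw [Subgroup.closure_le]
      rintro g ⟨u, v, hu, hv, hg⟩
      exact (hmem g).mpr ⟨v / u, div_ne_zero hv hu, by rw [hg, vdm_key u v hu]⟩
    · rintro g ⟨a, rfl⟩
      apply Subgroup.subset_closure
      refine ⟨1, (a : ℂ), one_ne_zero, a.ne_zero, ?_⟩
      rw [vdm_key 1 (a : ℂ) one_ne_zero, div_one]
      rfl
  rw [hcl]
  ext g
  exact hmem g
end

section
/- Fix c₁ ∈ ℂ. Let v : ℤ → ℝ → ℂ be nowhere zero and t-differentiable, satisfying for all n, t: ∂_t v(n,t) = (c₁·v(n,t)² + c₁·v(n−1,t)·v(n+1,t) − v(n+1,t)·v(n,t)) / v(n−1,t). Define u(n,t) := (c₁·v(n+1,t) − v(n+2,t)) / v(n,t). Then u satisfies the Volterra equation ∂_t u(n,t) = u(n,t)·(u(n+1,t) − u(n−1,t)) for all n and t. Thus u = (c₁v₁ − v₂)/v is a Miura-type transformation of order 2 to the Volterra equation. -/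
/-- The formula `u = (c₁v₁ − v₂)/v` is a Miura-type transformation (of order 2)
from the modified equation `vₜ = (c₁v² + c₁v₋₁v₁ − v₁v)/v₋₁` to the Volterra
equation `uₜ = u(u₁ − u₋₁)`. -/
theorem miura_order2_to_volterra
    (c₁ : ℂ) (v : ℤ → ℝ → ℂ)
    (hne : ∀ (n : ℤ) (t : ℝ), v n t ≠ 0)
    (hv : ∀ (n : ℤ) (t : ℝ),
      HasDerivAt (v n)
        ((c₁ * (v n t) ^ 2 + c₁ * v (n - 1) t * v (n + 1) t
            - v (n + 1) t * v n t) / v (n - 1) t) t)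
    (u : ℤ → ℝ → ℂ)
    (hu : ∀ (n : ℤ) (t : ℝ),
      u n t = (c₁ * v (n + 1) t - v (n + 2) t) / v n t) :
    ∀ (n : ℤ) (t : ℝ),
      HasDerivAt (u n) (u n t * (u (n + 1) t - u (n - 1) t)) t := by
  intro n t
  have hfun : u n = fun s => (c₁ * v (n + 1) s - v (n + 2) s) / v n s := funext (hu n)
  rw [hfun]
  have hd := (((hv (n + 1) t).const_mul c₁).sub (hv (n + 2) t)).div (hv n t) (hne n t)
  convert hd using 1
  · rfl
  · rfl
  simp only [hu]
  simp only [show n + 1 - 1 = n from by ring, show n + 2 - 1 = n + 1 from by ring,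
    show n - 1 + 1 = n from by ring, show n - 1 + 2 = n + 1 from by ring,
    show n + 1 + 1 = n + 2 from by ring, show n + 2 + 1 = n + 3 from by ring]
  simp only [Pi.sub_apply]
  have h0 := hne n t
  have h1 := hne (n - 1) t
  have h2 := hne (n + 1) t
  field_simp
  ring_nf
end

section
/- Fix c₁ ∈ ℂ. Let v : ℤ → ℝ → ℂ be t-differentiable with v(n,t) + v(n−1,t) ≠ 0 and v(n,t) + v(n+1,t) ≠ 0 for all n, t, satisfying for all n, t: ∂_t v(n,t) = v(n,t)²·(v(n−1,t) − v(n+1,t))·(v(n,t) − c₁)·(v(n,t) + c₁) / ((v(n,t)+v(n−1,t))·(v(n,t)+v(n+1,t))). Define u(n,t) := v(n+1,t)²·(c₁ − v(n,t))·(c₁ + v(n+2,t)) / ((v(n,t)+v(n+1,t))·(v(n+1,t)+v(n+2,t))). Then u satisfies the Volterra equation ∂_t u(n,t) = u(n,t)·(u(n+1,t) − u(n−1,t)) for all n and t. -/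
set_option maxHeartbeats 1000000 in
/-- The formula `u = v₁²(c₁ − v)(c₁ + v₂)/((v + v₁)(v₁ + v₂))` is a Miura-type
transformation from the modified equation
`vₜ = v²(v₋₁ − v₁)(v − c₁)(v + c₁)/((v + v₋₁)(v + v₁))`
to the Volterra equation `uₜ = u(u₁ − u₋₁)`. -/
theorem miura_V2_to_volterra
    (c₁ : ℂ) (v : ℤ → ℝ → ℂ)
    (hne₁ : ∀ (n : ℤ) (t : ℝ), v n t + v (n - 1) t ≠ 0)
    (hne₂ : ∀ (n : ℤ) (t : ℝ), v n t + v (n + 1) t ≠ 0)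
    (hv : ∀ (n : ℤ) (t : ℝ),
      HasDerivAt (v n)
        ((v n t) ^ 2 * (v (n - 1) t - v (n + 1) t)
            * (v n t - c₁) * (v n t + c₁)
          / ((v n t + v (n - 1) t) * (v n t + v (n + 1) t))) t)
    (u : ℤ → ℝ → ℂ)
    (hu : ∀ (n : ℤ) (t : ℝ),
      u n t = (v (n + 1) t) ^ 2 * (c₁ - v n t) * (c₁ + v (n + 2) t)
        / ((v n t + v (n + 1) t) * (v (n + 1) t + v (n + 2) t))) :
    ∀ (n : ℤ) (t : ℝ),
      HasDerivAt (u n) (u n t * (u (n + 1) t - u (n - 1) t)) t := by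
  intro n t
  have e1 : n + 1 - 1 = n := by ring
  have e2 : n + 1 + 1 = n + 2 := by ring
  have e3 : n + 2 - 1 = n + 1 := by ring
  have e4 : n + 2 + 1 = n + 3 := by ring
  have e5 : n - 1 + 1 = n := by ring
  have e6 : n - 1 + 2 = n + 1 := by ring
  have e7 : n + 1 + 2 = n + 3 := by ring
  have ha := hv n t
  have hb := hv (n+1) t
  rw [e1, e2] at hb
  have hc := hv (n+2) t
  rw [e3, e4] at hc
  have hab := hne₂ n t
  have hbc := hne₂ (n+1) t
  rw [e2] at hbc
  have hcd := hne₂ (n+2) t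
  rw [e4] at hcd
  have hpa := hne₁ n t
  have hpa' : v (n-1) t + v n t ≠ 0 := by rw [add_comm]; exact hpa
  have hba : v (n+1) t + v n t ≠ 0 := by rw [add_comm]; exact hab
  have hcb : v (n+2) t + v (n+1) t ≠ 0 := by rw [add_comm]; exact hbc
  obtain ⟨da, ha, hda⟩ : ∃ d, HasDerivAt (v n) d t ∧
      d = v n t ^ 2 * (v (n - 1) t - v (n + 1) t) * (v n t - c₁) * (v n t + c₁) /
        ((v n t + v (n - 1) t) * (v n t + v (n + 1) t)) := ⟨_, ha, rfl⟩
  obtain ⟨db, hb, hdb⟩ : ∃ d, HasDerivAt (v (n+1)) d t ∧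
      d = v (n + 1) t ^ 2 * (v n t - v (n + 2) t) * (v (n + 1) t - c₁) * (v (n + 1) t + c₁) /
        ((v (n + 1) t + v n t) * (v (n + 1) t + v (n + 2) t)) := ⟨_, hb, rfl⟩
  obtain ⟨dc, hc, hdc⟩ : ∃ d, HasDerivAt (v (n+2)) d t ∧
      d = v (n + 2) t ^ 2 * (v (n + 1) t - v (n + 3) t) * (v (n + 2) t - c₁) * (v (n + 2) t + c₁) /
        ((v (n + 2) t + v (n + 1) t) * (v (n + 2) t + v (n + 3) t)) := ⟨_, hc, rfl⟩
  have hb2 : HasDerivAt (fun s => (v (n+1) s)^2) (db * v (n+1) t + v (n+1) t * db) t := by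
    simp only [pow_two]; exact hb.mul hb
  have h3 : HasDerivAt (fun s => c₁ - v n s) (0 - da) t := (hasDerivAt_const t c₁).sub ha
  have h4 : HasDerivAt (fun s => c₁ + v (n+2) s) (0 + dc) t := (hasDerivAt_const t c₁).add hc
  have hN := (hb2.mul h3).mul h4
  have hD := (ha.add hb).mul (hb.add hc)
  have hDne : (v n t + v (n+1) t) * (v (n+1) t + v (n+2) t) ≠ 0 :=
    mul_ne_zero hab hbc
  have key := hN.div hD hDne
  have hfun : u n = fun s => (v (n + 1) s) ^ 2 * (c₁ - v n s) * (c₁ + v (n + 2) s)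
      / ((v n s + v (n + 1) s) * (v (n + 1) s + v (n + 2) s)) := funext (hu n)
  -- polynomial relations for the atoms
  have hU : u n t * ((v n t + v (n+1) t) * (v (n+1) t + v (n+2) t))
      = v (n+1) t ^ 2 * (c₁ - v n t) * (c₁ + v (n+2) t) := by
    rw [hu n t]; exact div_mul_cancel₀ _ hDne
  have hUp : u (n+1) t * ((v (n+1) t + v (n+2) t) * (v (n+2) t + v (n+3) t))
      = v (n+2) t ^ 2 * (c₁ - v (n+1) t) * (c₁ + v (n+3) t) := by
    have h := hu (n+1) t; rw [e2, e7] at h; rw [h]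
    exact div_mul_cancel₀ _ (mul_ne_zero hbc hcd)
  have hUm : u (n-1) t * ((v (n-1) t + v n t) * (v n t + v (n+1) t))
      = v n t ^ 2 * (c₁ - v (n-1) t) * (c₁ + v (n+1) t) := by
    have h := hu (n-1) t; rw [e5, e6] at h; rw [h]
    exact div_mul_cancel₀ _ (mul_ne_zero hpa' hab)
  have hda' : da * ((v n t + v (n-1) t) * (v n t + v (n+1) t))
      = v n t ^ 2 * (v (n-1) t - v (n+1) t) * (v n t - c₁) * (v n t + c₁) := by
    rw [hda]; exact div_mul_cancel₀ _ (mul_ne_zero hpa hab)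
  have hdb' : db * ((v (n+1) t + v n t) * (v (n+1) t + v (n+2) t))
      = v (n+1) t ^ 2 * (v n t - v (n+2) t) * (v (n+1) t - c₁) * (v (n+1) t + c₁) := by
    rw [hdb]; exact div_mul_cancel₀ _ (mul_ne_zero hba hbc)
  have hdc' : dc * ((v (n+2) t + v (n+1) t) * (v (n+2) t + v (n+3) t))
      = v (n+2) t ^ 2 * (v (n+1) t - v (n+3) t) * (v (n+2) t - c₁) * (v (n+2) t + c₁) := by
    rw [hdc]; exact div_mul_cancel₀ _ (mul_ne_zero hcb hcd)
  suffices h : u n t * (u (n + 1) t - u (n - 1) t) =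
      ((((db * v (n + 1) t + v (n + 1) t * db) * (c₁ - v n t) + v (n + 1) t ^ 2 * (0 - da)) *
            (c₁ + v (n + 2) t) +
          v (n + 1) t ^ 2 * (c₁ - v n t) * (0 + dc)) *
            ((v n t + v (n + 1) t) * (v (n + 1) t + v (n + 2) t)) -
        v (n + 1) t ^ 2 * (c₁ - v n t) * (c₁ + v (n + 2) t) *
          ((da + db) * (v (n + 1) t + v (n + 2) t) + (v n t + v (n + 1) t) * (db + dc))) /
        ((v n t + v (n + 1) t) * (v (n + 1) t + v (n + 2) t)) ^ 2 by
    rw [h, hfun]; exact key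
  rw [eq_div_iff (pow_ne_zero 2 hDne)]
  refine mul_right_cancel₀
    (mul_ne_zero (mul_ne_zero (mul_ne_zero hpa' hab) hbc) hcd) ?_
  linear_combination
    ((u (n+1) t - u (n-1) t) *
        ((v (n-1) t + v n t) * (v n t + v (n+1) t)^2 * (v (n+1) t + v (n+2) t)^2 *
          (v (n+2) t + v (n+3) t))) * hU
    + (v (n+1) t ^ 2 * (c₁ - v n t) * (c₁ + v (n+2) t) * (v (n-1) t + v n t) *
        (v n t + v (n+1) t)^2 * (v (n+1) t + v (n+2) t)) * hUp
    - (v (n+1) t ^ 2 * (c₁ - v n t) * (c₁ + v (n+2) t) * (v n t + v (n+1) t) *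
        (v (n+1) t + v (n+2) t)^2 * (v (n+2) t + v (n+3) t)) * hUm
    + ((v (n+1) t ^ 2 * (c₁ + v (n+2) t) * (v n t + v (n+1) t) +
          v (n+1) t ^ 2 * (c₁ - v n t) * (c₁ + v (n+2) t)) *
        (v (n+1) t + v (n+2) t)^2 * (v (n+2) t + v (n+3) t)) * hda'
    - ((2 * v (n+1) t * (c₁ - v n t) * (c₁ + v (n+2) t) * (v n t + v (n+1) t) *
          (v (n+1) t + v (n+2) t) -
        v (n+1) t ^ 2 * (c₁ - v n t) * (c₁ + v (n+2) t) *
          ((v (n+1) t + v (n+2) t) + (v n t + v (n+1) t))) *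
        ((v (n-1) t + v n t) * (v (n+2) t + v (n+3) t))) * hdb'
    - ((v (n+1) t ^ 2 * (c₁ - v n t) * (v n t + v (n+1) t) * (v (n+1) t + v (n+2) t) -
        v (n+1) t ^ 2 * (c₁ - v n t) * (c₁ + v (n+2) t) * (v n t + v (n+1) t)) *
        ((v (n-1) t + v n t) * (v n t + v (n+1) t))) * hdc'
end

section
/- Fix λ ∈ ℂ. Let u : ℤ → ℝ → ℂ be nowhere zero and t-differentiable. Define 3×3 matrices M(n,t) := [[0,1,0],[0,0,1],[−u(n,t),0,λ]] and 𝒰(n,t) := [[u(n−2,t)+u(n−1,t), 0, λ],[−λ·u(n,t), u(n−1,t)+u(n,t), λ²],[−λ²·u(n,t), −λ·u(n+1,t), λ³+u(n+1,t)+u(n,t)]]. Then the Darboux–Lax equation ∂_t M(n,t) = 𝒰(n+1,t)·M(n,t) − M(n,t)·𝒰(n,t) holds for all n and t, and for all λ ∈ ℂ, if and only if u satisfies the Narita–Itoh–Bogoyavlensky lattice with p = 2: ∂_t u(n,t) = u(n,t)·(u(n+2,t)+u(n+1,t)−u(n−1,t)−u(n−2,t)) for all n and t. -/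
set_option maxHeartbeats 800000

/-- For a nowhere-zero, t-differentiable `u : ℤ → ℝ → ℂ`, the Darboux–Lax
equation `∂ₜ M = S(𝒰)·M − M·𝒰` for the 3×3 matrices
`M = [[0,1,0],[0,0,1],[−u,0,λ]]` and
`𝒰 = [[u₋₂+u₋₁, 0, λ],[−λu, u₋₁+u, λ²],[−λ²u, −λu₁, λ³+u₁+u]]`
holds for all `n`, `t` and all `λ ∈ ℂ` if and only if `u` satisfies the
Narita–Itoh–Bogoyavlensky lattice with `p = 2`:
`uₜ = u(u₂ + u₁ − u₋₁ − u₋₂)`. -/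
theorem DLR_bogoyavlensky_p2_iff
    (u : ℤ → ℝ → ℂ)
    (hne : ∀ (n : ℤ) (t : ℝ), u n t ≠ 0)
    (hdiff : ∀ (n : ℤ) (t : ℝ), DifferentiableAt ℝ (u n) t)
    (M 𝒰 : ℂ → ℤ → ℝ → Matrix (Fin 3) (Fin 3) ℂ)
    (hM : ∀ (lam : ℂ) (n : ℤ) (t : ℝ),
      M lam n t = !![0, 1, 0; 0, 0, 1; -u n t, 0, lam])
    (hU : ∀ (lam : ℂ) (n : ℤ) (t : ℝ),
      𝒰 lam n t =
        !![u (n - 2) t + u (n - 1) t, 0, lam;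
           -lam * u n t, u (n - 1) t + u n t, lam ^ 2;
           -lam ^ 2 * u n t, -lam * u (n + 1) t,
             lam ^ 3 + u (n + 1) t + u n t]) :
    (∀ (lam : ℂ) (n : ℤ) (t : ℝ) (i j : Fin 3),
        HasDerivAt (fun s => M lam n s i j)
          ((𝒰 lam (n + 1) t * M lam n t - M lam n t * 𝒰 lam n t) i j) t)
    ↔ (∀ (n : ℤ) (t : ℝ),
        HasDerivAt (u n)
          (u n t * (u (n + 2) t + u (n + 1) t - u (n - 1) t - u (n - 2) t))
          t) := by
  have e1 : ∀ n : ℤ, n + 1 - 2 = n - 1 := fun n => by ring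
  have e2 : ∀ n : ℤ, n + 1 - 1 = n := fun n => by ring
  have e3 : ∀ n : ℤ, n + 1 + 1 = n + 2 := fun n => by ring
  have key : ∀ (lam : ℂ) (n : ℤ) (t : ℝ),
      𝒰 lam (n + 1) t * M lam n t - M lam n t * 𝒰 lam n t =
        !![0, 0, 0; 0, 0, 0;
           -(u n t * (u (n + 2) t + u (n + 1) t - u (n - 1) t - u (n - 2) t)),
           0, 0] := by
    intro lam n t
    rw [hU, hU, hM, e1, e2, e3]
    ext i j
    fin_cases i <;> fin_cases j <;>
      simp [Matrix.mul_apply, Fin.sum_univ_three, Matrix.vecHead, Matrix.vecTail] <;> ring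
  constructor
  · intro h n t
    have := h 0 n t 2 0
    rw [key] at this
    simp only [hM] at this
    simp at this
    simpa [Pi.neg_def] using this.neg
  · intro h lam n t i j
    rw [key]
    simp only [hM]
    fin_cases i <;> fin_cases j <;>
      simp only [Matrix.cons_val_zero, Matrix.cons_val_one, Matrix.head_cons,
        Matrix.cons_val_two, Matrix.tail_cons, Fin.mk_zero, Fin.mk_one]
    · exact hasDerivAt_const t 0
    · exact hasDerivAt_const t 1
    · exact hasDerivAt_const t 0
    · exact hasDerivAt_const t 0
    · exact hasDerivAt_const t 0
    · exact hasDerivAt_const t 1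
    · exact (h n t).neg
    · exact hasDerivAt_const t 0
    · exact hasDerivAt_const t lam
end

section
/- Fix c₁ ∈ ℂ. Let v : ℤ → ℝ → ℂ be nowhere zero and t-differentiable, satisfying for all n, t: ∂_t v(n,t) = ((c₁·v(n,t) − v(n+1,t))/v(n−2,t) + (c₁·v(n+1,t) − v(n+2,t))/v(n−1,t))·v(n,t) + c₁·v(n+2,t). Define u(n,t) := (c₁·v(n+2,t) − v(n+3,t)) / v(n,t). Then u satisfies the Bogoyavlensky lattice with p = 2: ∂_t u(n,t) = u(n,t)·(u(n+2,t)+u(n+1,t)−u(n−1,t)−u(n−2,t)) for all n and t. -/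
set_option maxHeartbeats 1000000


/-- The formula `u = (c₁v₂ − v₃)/v` is a Miura-type transformation from the
modified equation
`vₜ = ((c₁v − v₁)/v₋₂ + (c₁v₁ − v₂)/v₋₁)·v + c₁v₂`
to the Bogoyavlensky lattice with `p = 2`: `uₜ = u(u₂ + u₁ − u₋₁ − u₋₂)`. -/
theorem miura_to_bogoyavlensky_p2
    (c₁ : ℂ) (v : ℤ → ℝ → ℂ)
    (hne : ∀ (n : ℤ) (t : ℝ), v n t ≠ 0)
    (hv : ∀ (n : ℤ) (t : ℝ),
      HasDerivAt (v n)
        (((c₁ * v n t - v (n + 1) t) / v (n - 2) t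
            + (c₁ * v (n + 1) t - v (n + 2) t) / v (n - 1) t) * v n t
          + c₁ * v (n + 2) t) t)
    (u : ℤ → ℝ → ℂ)
    (hu : ∀ (n : ℤ) (t : ℝ),
      u n t = (c₁ * v (n + 2) t - v (n + 3) t) / v n t) :
    ∀ (n : ℤ) (t : ℝ),
      HasDerivAt (u n)
        (u n t * (u (n + 2) t + u (n + 1) t - u (n - 1) t - u (n - 2) t))
        t := by
  intro n t
  have h0 := hv n t
  have h2 := hv (n + 2) t
  have h3 := hv (n + 3) t
  -- normalize indices
  have e1 : n + 2 + 1 = n + 3 := by ring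
  have e2 : n + 2 + 2 = n + 4 := by ring
  have e3 : n + 2 - 2 = n := by ring
  have e4 : n + 2 - 1 = n + 1 := by ring
  have e5 : n + 3 + 1 = n + 4 := by ring
  have e6 : n + 3 + 2 = n + 5 := by ring
  have e7 : n + 3 - 2 = n + 1 := by ring
  have e8 : n + 3 - 1 = n + 2 := by ring
  rw [e1, e2, e3, e4] at h2
  rw [e5, e6, e7, e8] at h3
  have hfun : u n = fun s => (c₁ * v (n + 2) s - v (n + 3) s) / v n s :=
    funext (hu n)
  have key := ((h2.const_mul c₁).sub h3).div h0 (hne n t)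
  rw [hfun]
  refine key.congr_deriv ?_
  simp only [hu]
  have f1 : n + 2 + 2 = n + 4 := by ring
  have f2 : n + 2 + 3 = n + 5 := by ring
  have f3 : n + 1 + 2 = n + 3 := by ring
  have f4 : n + 1 + 3 = n + 4 := by ring
  have f5 : n - 1 + 2 = n + 1 := by ring
  have f6 : n - 1 + 3 = n + 2 := by ring
  have f7 : n - 2 + 2 = n := by ring
  have f8 : n - 2 + 3 = n + 1 := by ring
  rw [f1, f2, f3, f4, f5, f6, f7, f8]
  have n0 := hne n t
  have n1 := hne (n + 1) t
  have n2 := hne (n + 2) t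
  have m1 := hne (n - 1) t
  have m2 := hne (n - 2) t
  field_simp
  simp only [Pi.sub_apply]
  ring
end

section
/- Fix c₁ ∈ ℂ. Let v : ℤ → ℝ → ℂ be t-differentiable, satisfying for all n, t: ∂_t v(n,t) = v(n,t)·(c₁+v(n,t))·((c₁+v(n−2,t))·(c₁+v(n−1,t)) − (c₁+v(n+1,t))·(c₁+v(n+2,t))). Define u(n,t) := −v(n+2,t)·(c₁+v(n,t))·(c₁+v(n+1,t)). Then u satisfies the Bogoyavlensky lattice with p = 2: ∂_t u(n,t) = u(n,t)·(u(n+2,t)+u(n+1,t)−u(n−1,t)−u(n−2,t)) for all n and t. -/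
/-- The formula `u = −v₂(c₁+v)(c₁+v₁)` is a Miura-type transformation from the
modified equation
`vₜ = v(c₁+v)((c₁+v₋₂)(c₁+v₋₁) − (c₁+v₁)(c₁+v₂))`
to the Bogoyavlensky lattice with `p = 2`: `uₜ = u(u₂ + u₁ − u₋₁ − u₋₂)`. -/
theorem miura_projective_to_bogoyavlensky_p2
    (c₁ : ℂ) (v : ℤ → ℝ → ℂ)
    (hv : ∀ (n : ℤ) (t : ℝ),
      HasDerivAt (v n)
        (v n t * (c₁ + v n t) *
          ((c₁ + v (n - 2) t) * (c₁ + v (n - 1) t)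
            - (c₁ + v (n + 1) t) * (c₁ + v (n + 2) t))) t)
    (u : ℤ → ℝ → ℂ)
    (hu : ∀ (n : ℤ) (t : ℝ),
      u n t = -(v (n + 2) t) * (c₁ + v n t) * (c₁ + v (n + 1) t)) :
    ∀ (n : ℤ) (t : ℝ),
      HasDerivAt (u n)
        (u n t * (u (n + 2) t + u (n + 1) t - u (n - 1) t - u (n - 2) t))
        t := by
  intro n t
  have hfun : u n = fun t => -(v (n + 2) t) * (c₁ + v n t) * (c₁ + v (n + 1) t) :=
    funext (hu n)
  rw [hfun]
  have h0 := hv n t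
  have h1 := hv (n + 1) t
  have h2 := hv (n + 2) t
  have D := ((h2.neg.mul ((hasDerivAt_const t c₁).add h0)).mul
    ((hasDerivAt_const t c₁).add h1))
  convert D using 1
  · rfl
  · rfl
  simp only [hu, Pi.add_apply, Pi.neg_apply, Pi.mul_apply, show n + 2 - 2 = n from by ring, show n + 2 - 1 = n + 1 from by ring,
    show n + 2 + 1 = n + 3 from by ring, show n + 2 + 2 = n + 4 from by ring,
    show n + 1 - 2 = n - 1 from by ring, show n + 1 - 1 = n from by ring,
    show n + 1 + 1 = n + 2 from by ring, show n + 1 + 2 = n + 3 from by ring,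
    show n - 1 + 2 = n + 1 from by ring, show n - 1 + 1 = n from by ring,
    show n - 2 + 2 = n from by ring, show n - 2 + 1 = n - 1 from by ring]
  ring
end

section
/- Fix c₁, c₂ ∈ ℂ. Let v : ℤ → ℝ → ℂ be t-differentiable with v(n,t)·v(n+1,t)·v(n+2,t) ≠ 1 for all n, t, satisfying for all n, t the equation ∂_t v = v·(v₋₂v₋₁ − v₁v₂)·(c₂ − c₁v)·(c₂vv₋₁ − c₁)·(c₂vv₁ − c₁) / ((vv₋₂v₋₁ − 1)·(vv₋₁v₁ − 1)·(vv₁v₂ − 1)), where v_k(n,t) := v(n+k,t). Define u(n,t) := v₂v₃·(c₁v₄ − c₂)·(c₂vv₁ − c₁)·(c₂v₁v₂ − c₁) / ((vv₁v₂ − 1)·(v₁v₂v₃ − 1)·(v₂v₃v₄ − 1)) (evaluated at (n,t)). Then u satisfies the Bogoyavlensky lattice with p = 2: ∂_t u(n,t) = u(n,t)·(u(n+2,t)+u(n+1,t)−u(n−1,t)−u(n−2,t)) for all n and t. Thus this is a Miura-type transformation of order 4 to the Bogoyavlensky lattice with p = 2. -/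
set_option maxHeartbeats 1600000

theorem coreA_miura (c₁ c₂ y0 y1 y2 y3 y4 y5 y6 d2 d3 d4 p0 p1 p2 p3 p4 q0 q1 q2 q3 q4 : ℂ)
    (hp0 : p0 = (y0 * y1 * y2 - 1))
    (hp1 : p1 = (y1 * y2 * y3 - 1))
    (hp2 : p2 = (y2 * y3 * y4 - 1))
    (hp3 : p3 = (y3 * y4 * y5 - 1))
    (hp4 : p4 = (y4 * y5 * y6 - 1))
    (hq0 : q0 = (c₂ * y0 * y1 - c₁))
    (hq1 : q1 = (c₂ * y1 * y2 - c₁))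
    (hq2 : q2 = (c₂ * y2 * y3 - c₁))
    (hq3 : q3 = (c₂ * y3 * y4 - c₁))
    (hq4 : q4 = (c₂ * y4 * y5 - c₁))
    (h0 : p0 ≠ 0)
    (h1 : p1 ≠ 0)
    (h2 : p2 ≠ 0)
    (h3 : p3 ≠ 0)
    (h4 : p4 ≠ 0)
    (hd2 : d2 = y2 * (y0 * y1 - y3 * y4) * (c₂ - c₁ * y2) * (c₂ * y2 * y1 - c₁) * (c₂ * y2 * y3 - c₁) / ((y2 * y0 * y1 - 1) * (y2 * y1 * y3 - 1) * (y2 * y3 * y4 - 1)))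
    (hd3 : d3 = y3 * (y1 * y2 - y4 * y5) * (c₂ - c₁ * y3) * (c₂ * y3 * y2 - c₁) * (c₂ * y3 * y4 - c₁) / ((y3 * y1 * y2 - 1) * (y3 * y2 * y4 - 1) * (y3 * y4 * y5 - 1)))
    (hd4 : d4 = y4 * (y2 * y3 - y5 * y6) * (c₂ - c₁ * y4) * (c₂ * y4 * y3 - c₁) * (c₂ * y4 * y5 - c₁) / ((y4 * y2 * y3 - 1) * (y4 * y3 * y5 - 1) * (y4 * y5 * y6 - 1))) :
    ((c₂ * d2 * y3 + c₂ * y2 * d3) * p2 - q2 * ((d2 * y3 + y2 * d3) * y4 + y2 * y3 * d4)) / p2 ^ 2 = q2 / p2 * (c₁ - q2 / p2) * (q3 / p3 * (q4 / p4) - q1 / p1 * (q0 / p0)) := by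
  have e2a : (y2 * y0 * y1 - 1) ≠ 0 := fun hc => h0 (by rw [hp0]; linear_combination hc)
  have e2b : (y2 * y1 * y3 - 1) ≠ 0 := fun hc => h1 (by rw [hp1]; linear_combination hc)
  have e2c : (y2 * y3 * y4 - 1) ≠ 0 := fun hc => h2 (by rw [hp2]; linear_combination hc)
  have e3a : (y3 * y1 * y2 - 1) ≠ 0 := fun hc => h1 (by rw [hp1]; linear_combination hc)
  have e3b : (y3 * y2 * y4 - 1) ≠ 0 := fun hc => h2 (by rw [hp2]; linear_combination hc)
  have e3c : (y3 * y4 * y5 - 1) ≠ 0 := fun hc => h3 (by rw [hp3]; linear_combination hc)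
  have e4a : (y4 * y2 * y3 - 1) ≠ 0 := fun hc => h2 (by rw [hp2]; linear_combination hc)
  have e4b : (y4 * y3 * y5 - 1) ≠ 0 := fun hc => h3 (by rw [hp3]; linear_combination hc)
  have e4c : (y4 * y5 * y6 - 1) ≠ 0 := fun hc => h4 (by rw [hp4]; linear_combination hc)
  have hK2 : d2 * (p0 * p1 * p2) = (c₂ - c₁ * y2) * q1 * q2 * (p0 - p2) := by
    rw [hd2, hp0, hp1, hp2, hq1, hq2, div_mul_eq_mul_div, div_eq_iff (mul_ne_zero (mul_ne_zero e2a e2b) e2c)]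
    ring
  have hK3 : d3 * (p1 * p2 * p3) = (c₂ - c₁ * y3) * q2 * q3 * (p1 - p3) := by
    rw [hd3, hp1, hp2, hp3, hq2, hq3, div_mul_eq_mul_div, div_eq_iff (mul_ne_zero (mul_ne_zero e3a e3b) e3c)]
    ring
  have hK4 : d4 * (p2 * p3 * p4) = (c₂ - c₁ * y4) * q3 * q4 * (p2 - p4) := by
    rw [hd4, hp2, hp3, hp4, hq3, hq4, div_mul_eq_mul_div, div_eq_iff (mul_ne_zero (mul_ne_zero e4a e4b) e4c)]
    ring
  have eR : q2 / p2 * (c₁ - q2 / p2) * (q3 / p3 * (q4 / p4) - q1 / p1 * (q0 / p0))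
      = q2 * (c₁ * p2 - q2) * (q3 * q4 * (p1 * p0) - p3 * p4 * (q1 * q0)) / (p2 ^ 2 * (p3 * p4 * (p1 * p0))) := by
    field_simp
  rw [eR, div_eq_div_iff (pow_ne_zero 2 h2) (mul_ne_zero (pow_ne_zero 2 h2) (mul_ne_zero (mul_ne_zero h3 h4) (mul_ne_zero h1 h0)))]
  linear_combination ((-1)*y3*y4*p2*p3*p4*q2 + c₂*y3*p2^2*p3*p4) * hK2 + ((-1)*y2*y4*p0*p2*p4*q2 + c₂*y2*p0*p2^2*p4) * hK3 + ((-1)*y2*y3*p0*p1*p2*q2) * hK4 + ((-1)*p2^2*p3*p4*q1*q2^2 + c₁*p2^3*p3*p4*q1*q2) * hq0 + (c₂*y3*y4*p2^2*p3*p4*q2^2 + (-1)*c₂*y3*y4*p0*p2*p3*p4*q2^2 + (-1)*c₂*y0*y1*p2^2*p3*p4*q2^2 + (-1)*c₂^2*y3*p2^3*p3*p4*q2 + c₂^2*y3*p0*p2^2*p3*p4*q2 + c₁*p2^2*p3*p4*q2^2 + (-1)*c₁*y2*y3*y4*p2^2*p3*p4*q2^2 + c₁*y2*y3*y4*p0*p2*p3*p4*q2^2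 + c₁*c₂*y2*y3*p2^3*p3*p4*q2 + (-1)*c₁*c₂*y2*y3*p0*p2^2*p3*p4*q2 + c₁*c₂*y0*y1*p2^3*p3*p4*q2 + (-1)*c₁^2*p2^3*p3*p4*q2) * hq1 + (p0*p1*p2^2*q2*q3*q4 + c₂*y2*y4*p0*p2*p3*p4*q2*q3 + (-1)*c₂*y2*y4*p0*p1*p2*p4*q2*q3 + c₂*y2*y3*p0*p1*p2*p4*q3*q4 + (-1)*c₂^2*y2*p0*p2^2*p3*p4*q3 + c₂^2*y2*p0*p1*p2^2*p4*q3 + c₂^2*y2^2*y3*y4*p0*p2*p3*p4*q3 + (-1)*c₂^2*y2^2*y3*y4*p0*p1*p2*p4*q3 + c₂^2*y1*y2*y3*y4*p2^2*p3*p4*q2 + (-1)*c₂^2*y1*y2*y3*y4*p0*p2*p3*p4*q2 + (-1)*c₂^2*y0*y1^2*y2*p2^2*p3*p4*q2 + (-1)*c₂^3*y1*y2*y3*p2^3*p3*p4 + c₂^3*y1*y2*y3*p0*p2^2*p3*p4 + c₂^3*y1*y2^2*y3^2*y4*p2^2*p3*p4 + (-1)*c₂^3*y1*y2^2*y3^2*y4*p0*p2*p3*p4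 + (-1)*c₂^3*y0*y1^2*y2^2*y3*p2^2*p3*p4 + (-1)*c₁*p0*p1*p2^2*q3*q4 + (-1)*c₁*p0*p1*p2^3*q3*q4 + (-1)*c₁*y2*y3*y4*p0*p2*p3*p4*q2*q3 + (-1)*c₁*y2*y3*y4*p0*p1*p2*p4*q3*q4 + c₁*y2*y3*y4*p0*p1*p2*p4*q2*q3 + c₁*y2*y3*y4*p0*p1*p2^2*q3*q4 + (-1)*c₁*c₂*y3*y4*p2^2*p3*p4*q2 + c₁*c₂*y3*y4*p0*p2*p3*p4*q2 + (-1)*c₁*c₂*y2*y4*p0*p2*p3*p4*q3 + c₁*c₂*y2*y4*p0*p1*p2*p4*q3 + c₁*c₂*y2*y3*p0*p2^2*p3*p4*q3 + (-1)*c₁*c₂*y2*y3*p0*p1*p2^2*p4*q3 + (-1)*c₁*c₂*y2^2*y3^2*y4*p0*p2*p3*p4*q3 + c₁*c₂*y2^2*y3^2*y4*p0*p1*p2*p4*q3 + c₁*c₂*y1*y2*p2^2*p3*p4*q2 + (-1)*c₁*c₂*y1*y2^2*y3*y4*p2^2*p3*p4*q2 + c₁*c₂*y1*y2^2*y3*y4*p0*p2*p3*p4*q2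 + c₁*c₂*y0*y1*p2^2*p3*p4*q2 + c₁*c₂^2*y3*p2^3*p3*p4 + (-1)*c₁*c₂^2*y3*p0*p2^2*p3*p4 + (-1)*c₁*c₂^2*y2*y3^2*y4*p2^2*p3*p4 + c₁*c₂^2*y2*y3^2*y4*p0*p2*p3*p4 + (-1)*c₁*c₂^2*y1*y2*y3*y4*p2^2*p3*p4 + c₁*c₂^2*y1*y2*y3*y4*p0*p2*p3*p4 + c₁*c₂^2*y1*y2^2*y3*p2^2*p3*p4 + c₁*c₂^2*y1*y2^2*y3*p2^3*p3*p4 + (-1)*c₁*c₂^2*y1*y2^2*y3*p0*p2^2*p3*p4 + (-1)*c₁*c₂^2*y1*y2^3*y3^2*y4*p2^2*p3*p4 + c₁*c₂^2*y1*y2^3*y3^2*y4*p0*p2*p3*p4 + c₁*c₂^2*y0*y1*y2*y3*p2^2*p3*p4 + c₁*c₂^2*y0*y1^2*y2*p2^2*p3*p4 + c₁*c₂^2*y0*y1^2*y2*p2^3*p3*p4 + (-1)*c₁^2*p2^2*p3*p4*q2 + c₁^2*y2*y3*y4*p2^2*p3*p4*q2 + c₁^2*y2*y3*y4*p0*p2*p3*p4*q3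 + (-1)*c₁^2*y2*y3*y4*p0*p2*p3*p4*q2 + (-1)*c₁^2*y2*y3*y4*p0*p1*p2*p4*q3 + c₁^2*c₂*y3*y4*p2^2*p3*p4 + (-1)*c₁^2*c₂*y3*y4*p0*p2*p3*p4 + (-1)*c₁^2*c₂*y2*y3*p2^2*p3*p4 + (-1)*c₁^2*c₂*y2*y3*p2^3*p3*p4 + c₁^2*c₂*y2*y3*p0*p2^2*p3*p4 + c₁^2*c₂*y2^2*y3^2*y4*p2^2*p3*p4 + (-1)*c₁^2*c₂*y2^2*y3^2*y4*p0*p2*p3*p4 + (-1)*c₁^2*c₂*y1*y2*p2^2*p3*p4 + (-1)*c₁^2*c₂*y1*y2*p2^3*p3*p4 + c₁^2*c₂*y1*y2^2*y3*y4*p2^2*p3*p4 + (-1)*c₁^2*c₂*y1*y2^2*y3*y4*p0*p2*p3*p4 + (-1)*c₁^2*c₂*y0*y1*p2^2*p3*p4 + (-1)*c₁^2*c₂*y0*y1*p2^3*p3*p4 + c₁^3*p2^2*p3*p4 + c₁^3*p2^3*p3*p4 + (-1)*c₁^3*y2*y3*y4*p2^2*p3*p4 + c₁^3*y2*y3*y4*p0*p2*p3*p4)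 * hq2 + (c₂^2*y2^2*y3^2*p0*p1*p2*p4*q4 + (-1)*c₂^3*y2^2*y3*p0*p2^2*p3*p4 + c₂^3*y2^2*y3*p0*p1*p2^2*p4 + c₂^3*y2^3*y3^2*y4*p0*p2*p3*p4 + (-1)*c₂^3*y2^3*y3^2*y4*p0*p1*p2*p4 + (-1)*c₁*c₂*y2*y3*p0*p1*p2*p4*q4 + (-1)*c₁*c₂*y2*y3*p0*p1*p2^2*q4 + (-1)*c₁*c₂*y2*y3*p0*p1*p2^3*q4 + (-1)*c₁*c₂*y2^2*y3^2*y4*p0*p1*p2*p4*q4 + c₁*c₂*y2^2*y3^2*y4*p0*p1*p2^2*q4 + c₁*c₂^2*y2*p0*p2^2*p3*p4 + (-1)*c₁*c₂^2*y2*p0*p1*p2^2*p4 + (-2)*c₁*c₂^2*y2^2*y3*y4*p0*p2*p3*p4 + 2*c₁*c₂^2*y2^2*y3*y4*p0*p1*p2*p4 + c₁*c₂^2*y2^2*y3^2*p0*p2^2*p3*p4 + (-1)*c₁*c₂^2*y2^2*y3^2*p0*p1*p2^2*p4 + (-1)*c₁*c₂^2*y2^3*y3^3*y4*p0*p2*p3*p4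 + c₁*c₂^2*y2^3*y3^3*y4*p0*p1*p2*p4 + c₁^2*p0*p1*p2^2*q4 + c₁^2*p0*p1*p2^3*q4 + c₁^2*y2*y3*y4*p0*p1*p2*p4*q4 + (-1)*c₁^2*y2*y3*y4*p0*p1*p2^2*q4 + c₁^2*c₂*y2*y4*p0*p2*p3*p4 + (-1)*c₁^2*c₂*y2*y4*p0*p1*p2*p4 + (-1)*c₁^2*c₂*y2*y3*p0*p2^2*p3*p4 + c₁^2*c₂*y2*y3*p0*p1*p2^2*p4 + 2*c₁^2*c₂*y2^2*y3^2*y4*p0*p2*p3*p4 + (-2)*c₁^2*c₂*y2^2*y3^2*y4*p0*p1*p2*p4 + (-1)*c₁^3*y2*y3*y4*p0*p2*p3*p4 + c₁^3*y2*y3*y4*p0*p1*p2*p4) * hq3 + (c₂^3*y2^2*y3^3*y4*p0*p1*p2*p4 + (-1)*c₁*c₂^2*y2*y3^2*y4*p0*p1*p2*p4 + (-1)*c₁*c₂^2*y2*y3^2*y4*p0*p1*p2^2 + (-1)*c₁*c₂^2*y2*y3^2*y4*p0*p1*p2^3 + (-1)*c₁*c₂^2*y2^2*y3^2*p0*p1*p2*p4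 + (-1)*c₁*c₂^2*y2^2*y3^3*y4^2*p0*p1*p2*p4 + c₁*c₂^2*y2^2*y3^3*y4^2*p0*p1*p2^2 + c₁^2*c₂*y3*y4*p0*p1*p2^2 + c₁^2*c₂*y3*y4*p0*p1*p2^3 + c₁^2*c₂*y2*y3*p0*p1*p2*p4 + c₁^2*c₂*y2*y3*p0*p1*p2^2 + c₁^2*c₂*y2*y3*p0*p1*p2^3 + c₁^2*c₂*y2*y3^2*y4^2*p0*p1*p2*p4 + (-1)*c₁^2*c₂*y2*y3^2*y4^2*p0*p1*p2^2 + c₁^2*c₂*y2^2*y3^2*y4*p0*p1*p2*p4 + (-1)*c₁^2*c₂*y2^2*y3^2*y4*p0*p1*p2^2 + (-1)*c₁^3*p0*p1*p2^2 + (-1)*c₁^3*p0*p1*p2^3 + (-1)*c₁^3*y2*y3*y4*p0*p1*p2*p4 + c₁^3*y2*y3*y4*p0*p1*p2^2) * hq4 + ((-1)*c₂^4*y2^2*y3^2*y4*p2^2*p3*p4 + c₂^4*y2^2*y3^2*y4*p1*p2^2*p4 + c₂^4*y2^2*y3^3*y4^2*y5*p1*p2*p4 + c₂^4*y2^3*y3^3*y4^2*p2*p3*p4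 + (-1)*c₂^4*y2^3*y3^3*y4^2*p1*p2*p4 + c₂^4*y1*y2^2*y3^2*p2^2*p3*p4 + (-1)*c₂^4*y1*y2^3*y3^3*y4*p2*p3*p4 + c₁*c₂^3*y2*y3*y4*p2^2*p3*p4 + (-1)*c₁*c₂^3*y2*y3*y4*p1*p2^2*p4 + (-1)*c₁*c₂^3*y2*y3^2*p2^2*p3*p4 + (-1)*c₁*c₂^3*y2*y3^2*y4^2*y5*p1*p2*p4 + (-1)*c₁*c₂^3*y2*y3^2*y4^2*y5*p1*p2^2 + (-1)*c₁*c₂^3*y2*y3^2*y4^2*y5*p1*p2^3 + c₁*c₂^3*y2^2*y3*p2^2*p3*p4 + (-1)*c₁*c₂^3*y2^2*y3*p1*p2^2*p4 + (-1)*c₁*c₂^3*y2^2*y3^2*y4*y5*p1*p2*p4 + (-2)*c₁*c₂^3*y2^2*y3^2*y4^2*p2*p3*p4 + 2*c₁*c₂^3*y2^2*y3^2*y4^2*p1*p2*p4 + c₁*c₂^3*y2^2*y3^3*y4*p2*p3*p4 + c₁*c₂^3*y2^2*y3^3*y4*p2^2*p3*p4 + (-1)*c₁*c₂^3*y2^2*y3^3*y4*p1*p2*p4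 + (-1)*c₁*c₂^3*y2^2*y3^3*y4*p1*p2^2*p4 + (-1)*c₁*c₂^3*y2^2*y3^3*y4^3*y5*p1*p2*p4 + c₁*c₂^3*y2^2*y3^3*y4^3*y5*p1*p2^2 + (-1)*c₁*c₂^3*y2^3*y3^2*y4*p2*p3*p4 + c₁*c₂^3*y2^3*y3^2*y4*p1*p2*p4 + (-1)*c₁*c₂^3*y2^3*y3^4*y4^2*p2*p3*p4 + c₁*c₂^3*y2^3*y3^4*y4^2*p1*p2*p4 + (-1)*c₁*c₂^3*y1*y2*y3*p2^2*p3*p4 + 2*c₁*c₂^3*y1*y2^2*y3^2*y4*p2*p3*p4 + (-1)*c₁*c₂^3*y1*y2^3*y3^2*p2^2*p3*p4 + c₁*c₂^3*y1*y2^4*y3^3*y4*p2*p3*p4 + c₁^2*c₂^2*y3*p2^2*p3*p4 + c₁^2*c₂^2*y3*y4^2*y5*p1*p2^2 + c₁^2*c₂^2*y3*y4^2*y5*p1*p2^3 + (-1)*c₁^2*c₂^2*y2*p2^2*p3*p4 + c₁^2*c₂^2*y2*p1*p2^2*p4 + c₁^2*c₂^2*y2*y3*y4*y5*p1*p2*p4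 + c₁^2*c₂^2*y2*y3*y4*y5*p1*p2^2 + c₁^2*c₂^2*y2*y3*y4*y5*p1*p2^3 + c₁^2*c₂^2*y2*y3*y4^2*p2*p3*p4 + (-1)*c₁^2*c₂^2*y2*y3*y4^2*p1*p2*p4 + (-2)*c₁^2*c₂^2*y2*y3^2*y4*p2*p3*p4 + (-1)*c₁^2*c₂^2*y2*y3^2*y4*p2^2*p3*p4 + c₁^2*c₂^2*y2*y3^2*y4*p1*p2*p4 + c₁^2*c₂^2*y2*y3^2*y4*p1*p2^2 + c₁^2*c₂^2*y2*y3^2*y4*p1*p2^2*p4 + c₁^2*c₂^2*y2*y3^2*y4*p1*p2^3 + c₁^2*c₂^2*y2*y3^2*y4^3*y5*p1*p2*p4 + (-1)*c₁^2*c₂^2*y2*y3^2*y4^3*y5*p1*p2^2 + 2*c₁^2*c₂^2*y2^2*y3*y4*p2*p3*p4 + (-2)*c₁^2*c₂^2*y2^2*y3*y4*p1*p2*p4 + c₁^2*c₂^2*y2^2*y3^2*p1*p2*p4 + c₁^2*c₂^2*y2^2*y3^2*p1*p2^2*p4 + c₁^2*c₂^2*y2^2*y3^2*y4^2*y5*p1*p2*p4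 + (-1)*c₁^2*c₂^2*y2^2*y3^2*y4^2*y5*p1*p2^2 + 2*c₁^2*c₂^2*y2^2*y3^3*y4^2*p2*p3*p4 + (-1)*c₁^2*c₂^2*y2^2*y3^3*y4^2*p1*p2*p4 + (-1)*c₁^2*c₂^2*y2^2*y3^3*y4^2*p1*p2^2 + (-1)*c₁^2*c₂^2*y2^3*y3^3*y4*p1*p2*p4 + (-1)*c₁^2*c₂^2*y1*y2*y3*y4*p2*p3*p4 + c₁^2*c₂^2*y1*y2^2*y3*p2^2*p3*p4 + (-2)*c₁^2*c₂^2*y1*y2^3*y3^2*y4*p2*p3*p4 + (-1)*c₁^3*c₂*y4*y5*p1*p2^2 + (-1)*c₁^3*c₂*y4*y5*p1*p2^3 + c₁^3*c₂*y3*y4*p2*p3*p4 + (-1)*c₁^3*c₂*y3*y4*p1*p2^2 + (-1)*c₁^3*c₂*y3*y4*p1*p2^3 + (-1)*c₁^3*c₂*y2*y4*p2*p3*p4 + c₁^3*c₂*y2*y4*p1*p2*p4 + (-1)*c₁^3*c₂*y2*y3*p1*p2*p4 + (-1)*c₁^3*c₂*y2*y3*p1*p2^2 + (-1)*c₁^3*c₂*y2*y3*p1*p2^2*p4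 + (-1)*c₁^3*c₂*y2*y3*p1*p2^3 + (-1)*c₁^3*c₂*y2*y3*y4^2*y5*p1*p2*p4 + c₁^3*c₂*y2*y3*y4^2*y5*p1*p2^2 + (-1)*c₁^3*c₂*y2*y3^2*y4^2*p2*p3*p4 + c₁^3*c₂*y2*y3^2*y4^2*p1*p2^2 + c₁^3*c₂*y2^2*y3^2*y4*p1*p2*p4 + c₁^3*c₂*y2^2*y3^2*y4*p1*p2^2 + c₁^3*c₂*y1*y2^2*y3*y4*p2*p3*p4 + c₁^4*p1*p2^2 + c₁^4*p1*p2^3 + (-1)*c₁^4*y2*y3*y4*p1*p2^2) * hp0 + ((-1)*c₂^4*y2^2*y3^2*y4*p2^2*p4 + (-1)*c₂^4*y2^2*y3^3*y4^2*y5*p2*p4 + c₂^4*y2^3*y3^3*y4^2*p2*p4 + c₂^4*y0*y1*y2^3*y3^2*y4*p2^2*p4 + c₂^4*y0*y1*y2^3*y3^3*y4^2*y5*p2*p4 + (-1)*c₂^4*y0*y1*y2^4*y3^3*y4^2*p2*p4 + c₁*c₂^3*y2*y3*y4*p2^2*p4 + c₁*c₂^3*y2*y3^2*y4^2*y5*p2*p4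 + c₁*c₂^3*y2*y3^2*y4^2*y5*p2^2 + c₁*c₂^3*y2*y3^2*y4^2*y5*p2^3 + c₁*c₂^3*y2^2*y3*p2^2*p4 + c₁*c₂^3*y2^2*y3^2*y4*y5*p2*p4 + (-2)*c₁*c₂^3*y2^2*y3^2*y4^2*p2*p4 + c₁*c₂^3*y2^2*y3^3*y4*p2*p4 + c₁*c₂^3*y2^2*y3^3*y4*p2^2*p4 + c₁*c₂^3*y2^2*y3^3*y4^3*y5*p2*p4 + (-1)*c₁*c₂^3*y2^2*y3^3*y4^3*y5*p2^2 + (-1)*c₁*c₂^3*y2^3*y3^2*y4*p2*p4 + (-1)*c₁*c₂^3*y2^3*y3^4*y4^2*p2*p4 + (-1)*c₁*c₂^3*y0*y1*y2^2*y3*y4*p2^2*p4 + (-1)*c₁*c₂^3*y0*y1*y2^2*y3^2*y4^2*y5*p2*p4 + (-1)*c₁*c₂^3*y0*y1*y2^2*y3^2*y4^2*y5*p2^2 + (-1)*c₁*c₂^3*y0*y1*y2^2*y3^2*y4^2*y5*p2^3 + (-1)*c₁*c₂^3*y0*y1*y2^3*y3*p2^2*p4 + (-1)*c₁*c₂^3*y0*y1*y2^3*y3^2*y4*y5*p2*p4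 + 2*c₁*c₂^3*y0*y1*y2^3*y3^2*y4^2*p2*p4 + (-1)*c₁*c₂^3*y0*y1*y2^3*y3^3*y4*p2*p4 + (-1)*c₁*c₂^3*y0*y1*y2^3*y3^3*y4*p2^2*p4 + (-1)*c₁*c₂^3*y0*y1*y2^3*y3^3*y4^3*y5*p2*p4 + c₁*c₂^3*y0*y1*y2^3*y3^3*y4^3*y5*p2^2 + c₁*c₂^3*y0*y1*y2^4*y3^2*y4*p2*p4 + c₁*c₂^3*y0*y1*y2^4*y3^4*y4^2*p2*p4 + (-1)*c₁^2*c₂^2*y3*y4^2*y5*p2^2 + (-1)*c₁^2*c₂^2*y3*y4^2*y5*p2^3 + (-1)*c₁^2*c₂^2*y2*p2^2*p4 + (-1)*c₁^2*c₂^2*y2*y3*y4*y5*p2*p4 + (-1)*c₁^2*c₂^2*y2*y3*y4*y5*p2^2 + (-1)*c₁^2*c₂^2*y2*y3*y4*y5*p2^3 + c₁^2*c₂^2*y2*y3*y4^2*p2*p4 + (-1)*c₁^2*c₂^2*y2*y3^2*y4*p2*p4 + (-1)*c₁^2*c₂^2*y2*y3^2*y4*p2^2 + (-1)*c₁^2*c₂^2*y2*y3^2*y4*p2^2*p4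 + (-1)*c₁^2*c₂^2*y2*y3^2*y4*p2^3 + (-1)*c₁^2*c₂^2*y2*y3^2*y4^3*y5*p2*p4 + c₁^2*c₂^2*y2*y3^2*y4^3*y5*p2^2 + 2*c₁^2*c₂^2*y2^2*y3*y4*p2*p4 + (-1)*c₁^2*c₂^2*y2^2*y3^2*p2*p4 + (-1)*c₁^2*c₂^2*y2^2*y3^2*p2^2*p4 + (-1)*c₁^2*c₂^2*y2^2*y3^2*y4^2*y5*p2*p4 + c₁^2*c₂^2*y2^2*y3^2*y4^2*y5*p2^2 + c₁^2*c₂^2*y2^2*y3^3*y4^2*p2*p4 + c₁^2*c₂^2*y2^2*y3^3*y4^2*p2^2 + c₁^2*c₂^2*y2^3*y3^3*y4*p2*p4 + c₁^2*c₂^2*y0*y1*y2*y3*y4^2*y5*p2^2 + c₁^2*c₂^2*y0*y1*y2*y3*y4^2*y5*p2^3 + c₁^2*c₂^2*y0*y1*y2^2*p2^2*p4 + c₁^2*c₂^2*y0*y1*y2^2*y3*y4*y5*p2*p4 + c₁^2*c₂^2*y0*y1*y2^2*y3*y4*y5*p2^2 + c₁^2*c₂^2*y0*y1*y2^2*y3*y4*y5*p2^3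 + (-1)*c₁^2*c₂^2*y0*y1*y2^2*y3*y4^2*p2*p4 + c₁^2*c₂^2*y0*y1*y2^2*y3^2*y4*p2*p4 + c₁^2*c₂^2*y0*y1*y2^2*y3^2*y4*p2^2 + c₁^2*c₂^2*y0*y1*y2^2*y3^2*y4*p2^2*p4 + c₁^2*c₂^2*y0*y1*y2^2*y3^2*y4*p2^3 + c₁^2*c₂^2*y0*y1*y2^2*y3^2*y4^3*y5*p2*p4 + (-1)*c₁^2*c₂^2*y0*y1*y2^2*y3^2*y4^3*y5*p2^2 + (-2)*c₁^2*c₂^2*y0*y1*y2^3*y3*y4*p2*p4 + c₁^2*c₂^2*y0*y1*y2^3*y3^2*p2*p4 + c₁^2*c₂^2*y0*y1*y2^3*y3^2*p2^2*p4 + c₁^2*c₂^2*y0*y1*y2^3*y3^2*y4^2*y5*p2*p4 + (-1)*c₁^2*c₂^2*y0*y1*y2^3*y3^2*y4^2*y5*p2^2 + (-1)*c₁^2*c₂^2*y0*y1*y2^3*y3^3*y4^2*p2*p4 + (-1)*c₁^2*c₂^2*y0*y1*y2^3*y3^3*y4^2*p2^2 + (-1)*c₁^2*c₂^2*y0*y1*y2^4*y3^3*y4*p2*p4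 + c₁^3*c₂*y4*y5*p2^2 + c₁^3*c₂*y4*y5*p2^3 + c₁^3*c₂*y3*y4*p2^2 + c₁^3*c₂*y3*y4*p2^3 + (-1)*c₁^3*c₂*y2*y4*p2*p4 + c₁^3*c₂*y2*y3*p2*p4 + c₁^3*c₂*y2*y3*p2^2 + c₁^3*c₂*y2*y3*p2^2*p4 + c₁^3*c₂*y2*y3*p2^3 + c₁^3*c₂*y2*y3*y4^2*y5*p2*p4 + (-1)*c₁^3*c₂*y2*y3*y4^2*y5*p2^2 + (-1)*c₁^3*c₂*y2*y3^2*y4^2*p2^2 + (-1)*c₁^3*c₂*y2^2*y3^2*y4*p2*p4 + (-1)*c₁^3*c₂*y2^2*y3^2*y4*p2^2 + (-1)*c₁^3*c₂*y0*y1*y2*y4*y5*p2^2 + (-1)*c₁^3*c₂*y0*y1*y2*y4*y5*p2^3 + (-1)*c₁^3*c₂*y0*y1*y2*y3*y4*p2^2 + (-1)*c₁^3*c₂*y0*y1*y2*y3*y4*p2^3 + c₁^3*c₂*y0*y1*y2^2*y4*p2*p4 + (-1)*c₁^3*c₂*y0*y1*y2^2*y3*p2*p4 + (-1)*c₁^3*c₂*y0*y1*y2^2*y3*p2^2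 + (-1)*c₁^3*c₂*y0*y1*y2^2*y3*p2^2*p4 + (-1)*c₁^3*c₂*y0*y1*y2^2*y3*p2^3 + (-1)*c₁^3*c₂*y0*y1*y2^2*y3*y4^2*y5*p2*p4 + c₁^3*c₂*y0*y1*y2^2*y3*y4^2*y5*p2^2 + c₁^3*c₂*y0*y1*y2^2*y3^2*y4^2*p2^2 + c₁^3*c₂*y0*y1*y2^3*y3^2*y4*p2*p4 + c₁^3*c₂*y0*y1*y2^3*y3^2*y4*p2^2 + (-1)*c₁^4*p2^2 + (-1)*c₁^4*p2^3 + c₁^4*y2*y3*y4*p2^2 + c₁^4*y0*y1*y2*p2^2 + c₁^4*y0*y1*y2*p2^3 + (-1)*c₁^4*y0*y1*y2^2*y3*y4*p2^2) * hp1 + ((-1)*c₂^4*y2^2*y3^2*y4*p4 + (-1)*c₂^4*y2^2*y3^2*y4*p3*p4 + c₂^4*y2^2*y3^2*y4*p2*p4 + c₂^4*y2^2*y3^2*y4*p2*p3*p4 + c₂^4*y2^2*y3^3*y4^2*y5*p4 + (-1)*c₂^4*y1*y2^2*y3^2*p2^2*p3*p4 + c₂^4*y1*y2^3*y3^3*y4*p4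 + c₂^4*y1*y2^3*y3^3*y4*p3*p4 + (-1)*c₂^4*y1*y2^3*y3^3*y4*p2*p4 + (-1)*c₂^4*y1*y2^3*y3^4*y4^2*y5*p4 + c₂^4*y0*y1*y2^3*y3^2*y4*p4 + c₂^4*y0*y1*y2^3*y3^2*y4*p3*p4 + (-1)*c₂^4*y0*y1*y2^3*y3^2*y4*p2*p4 + (-1)*c₂^4*y0*y1*y2^3*y3^2*y4*p2*p3*p4 + (-1)*c₂^4*y0*y1*y2^3*y3^3*y4^2*y5*p4 + (-1)*c₂^4*y0*y1^2*y2^4*y3^3*y4*p4 + (-1)*c₂^4*y0*y1^2*y2^4*y3^3*y4*p3*p4 + c₂^4*y0*y1^2*y2^4*y3^3*y4*p2*p4 + c₂^4*y0*y1^2*y2^4*y3^4*y4^2*y5*p4 + c₁*c₂^3*y2*y3*y4*p4 + c₁*c₂^3*y2*y3*y4*p3*p4 + (-1)*c₁*c₂^3*y2*y3*y4*p2*p4 + (-1)*c₁*c₂^3*y2*y3*y4*p2*p3*p4 + c₁*c₂^3*y2*y3^2*p2^2*p3*p4 + (-1)*c₁*c₂^3*y2*y3^2*y4^2*y5*p4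 + (-1)*c₁*c₂^3*y2*y3^2*y4^2*y5*p2^2 + c₁*c₂^3*y2^2*y3*p4 + c₁*c₂^3*y2^2*y3*p3*p4 + (-1)*c₁*c₂^3*y2^2*y3*p2*p4 + (-1)*c₁*c₂^3*y2^2*y3*p2*p3*p4 + (-1)*c₁*c₂^3*y2^2*y3^2*y4*y5*p4 + c₁*c₂^3*y2^2*y3^2*y4^2*p4 + c₁*c₂^3*y2^2*y3^2*y4^2*p3*p4 + (-1)*c₁*c₂^3*y2^2*y3^3*y4*p2*p4 + (-1)*c₁*c₂^3*y2^2*y3^3*y4*p2*p3*p4 + (-1)*c₁*c₂^3*y2^2*y3^3*y4^3*y5*p4 + c₁*c₂^3*y1*y2*y3*p2^2*p3*p4 + (-1)*c₁*c₂^3*y1*y2^2*y3^2*y4*p4 + (-1)*c₁*c₂^3*y1*y2^2*y3^2*y4*p3*p4 + c₁*c₂^3*y1*y2^2*y3^2*y4*p2*p4 + (-1)*c₁*c₂^3*y1*y2^2*y3^2*y4*p2*p3*p4 + c₁*c₂^3*y1*y2^2*y3^3*y4^2*y5*p4 + c₁*c₂^3*y1*y2^2*y3^3*y4^2*y5*p2^2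 + (-1)*c₁*c₂^3*y1*y2^3*y3^2*p4 + (-1)*c₁*c₂^3*y1*y2^3*y3^2*p3*p4 + c₁*c₂^3*y1*y2^3*y3^2*p2*p4 + c₁*c₂^3*y1*y2^3*y3^2*p2*p3*p4 + c₁*c₂^3*y1*y2^3*y3^2*p2^2*p3*p4 + c₁*c₂^3*y1*y2^3*y3^3*y4*y5*p4 + (-1)*c₁*c₂^3*y1*y2^3*y3^3*y4^2*p4 + (-1)*c₁*c₂^3*y1*y2^3*y3^3*y4^2*p3*p4 + c₁*c₂^3*y1*y2^3*y3^4*y4*p2*p4 + c₁*c₂^3*y1*y2^3*y3^4*y4^3*y5*p4 + (-1)*c₁*c₂^3*y0*y1*y2^2*y3*y4*p4 + (-1)*c₁*c₂^3*y0*y1*y2^2*y3*y4*p3*p4 + c₁*c₂^3*y0*y1*y2^2*y3*y4*p2*p4 + c₁*c₂^3*y0*y1*y2^2*y3*y4*p2*p3*p4 + c₁*c₂^3*y0*y1*y2^2*y3^2*y4^2*y5*p4 + c₁*c₂^3*y0*y1*y2^2*y3^2*y4^2*y5*p2^2 + (-1)*c₁*c₂^3*y0*y1*y2^3*y3*p4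 + (-1)*c₁*c₂^3*y0*y1*y2^3*y3*p3*p4 + c₁*c₂^3*y0*y1*y2^3*y3*p2*p4 + c₁*c₂^3*y0*y1*y2^3*y3*p2*p3*p4 + c₁*c₂^3*y0*y1*y2^3*y3^2*y4*y5*p4 + (-1)*c₁*c₂^3*y0*y1*y2^3*y3^2*y4^2*p4 + (-1)*c₁*c₂^3*y0*y1*y2^3*y3^2*y4^2*p3*p4 + c₁*c₂^3*y0*y1*y2^3*y3^3*y4*p2*p4 + c₁*c₂^3*y0*y1*y2^3*y3^3*y4*p2*p3*p4 + c₁*c₂^3*y0*y1*y2^3*y3^3*y4^3*y5*p4 + c₁*c₂^3*y0*y1^2*y2^2*y3*p2^2*p3*p4 + c₁*c₂^3*y0*y1^2*y2^3*y3^2*y4*p4 + c₁*c₂^3*y0*y1^2*y2^3*y3^2*y4*p3*p4 + (-1)*c₁*c₂^3*y0*y1^2*y2^3*y3^2*y4*p2*p4 + c₁*c₂^3*y0*y1^2*y2^3*y3^2*y4*p2*p3*p4 + (-1)*c₁*c₂^3*y0*y1^2*y2^3*y3^3*y4^2*y5*p4 + (-1)*c₁*c₂^3*y0*y1^2*y2^3*y3^3*y4^2*y5*p2^2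 + c₁*c₂^3*y0*y1^2*y2^4*y3^2*p4 + c₁*c₂^3*y0*y1^2*y2^4*y3^2*p3*p4 + (-1)*c₁*c₂^3*y0*y1^2*y2^4*y3^2*p2*p4 + (-1)*c₁*c₂^3*y0*y1^2*y2^4*y3^2*p2*p3*p4 + (-1)*c₁*c₂^3*y0*y1^2*y2^4*y3^3*y4*y5*p4 + c₁*c₂^3*y0*y1^2*y2^4*y3^3*y4^2*p4 + c₁*c₂^3*y0*y1^2*y2^4*y3^3*y4^2*p3*p4 + (-1)*c₁*c₂^3*y0*y1^2*y2^4*y3^4*y4*p2*p4 + (-1)*c₁*c₂^3*y0*y1^2*y2^4*y3^4*y4^3*y5*p4 + (-1)*c₁^2*c₂^2*y3*p2^2*p3*p4 + c₁^2*c₂^2*y3*y4^2*y5*p2^2 + (-1)*c₁^2*c₂^2*y2*p4 + (-1)*c₁^2*c₂^2*y2*p3*p4 + c₁^2*c₂^2*y2*p2*p4 + c₁^2*c₂^2*y2*p2*p3*p4 + c₁^2*c₂^2*y2*y3*y4*y5*p4 + c₁^2*c₂^2*y2*y3*y4*y5*p2^2 + (-1)*c₁^2*c₂^2*y2*y3*y4^2*p4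 + (-1)*c₁^2*c₂^2*y2*y3*y4^2*p3*p4 + c₁^2*c₂^2*y2*y3^2*y4*p2*p4 + 2*c₁^2*c₂^2*y2*y3^2*y4*p2*p3*p4 + c₁^2*c₂^2*y2*y3^2*y4*p2^2 + c₁^2*c₂^2*y2*y3^2*y4^3*y5*p4 + (-1)*c₁^2*c₂^2*y2^2*y3*y4*p4 + (-1)*c₁^2*c₂^2*y2^2*y3*y4*p3*p4 + c₁^2*c₂^2*y2^2*y3^2*p2*p4 + (-1)*c₁^2*c₂^2*y2^2*y3^2*p2^2*p3*p4 + c₁^2*c₂^2*y2^2*y3^2*y4^2*y5*p4 + c₁^2*c₂^2*y1*y2*y3*y4*p2*p3*p4 + (-1)*c₁^2*c₂^2*y1*y2*y3^2*y4^2*y5*p2^2 + c₁^2*c₂^2*y1*y2^2*y3*p4 + c₁^2*c₂^2*y1*y2^2*y3*p3*p4 + (-1)*c₁^2*c₂^2*y1*y2^2*y3*p2*p4 + (-1)*c₁^2*c₂^2*y1*y2^2*y3*p2*p3*p4 + (-2)*c₁^2*c₂^2*y1*y2^2*y3*p2^2*p3*p4 + (-1)*c₁^2*c₂^2*y1*y2^2*y3^2*y4*y5*p4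 + (-1)*c₁^2*c₂^2*y1*y2^2*y3^2*y4*y5*p2^2 + c₁^2*c₂^2*y1*y2^2*y3^2*y4^2*p4 + c₁^2*c₂^2*y1*y2^2*y3^2*y4^2*p3*p4 + (-1)*c₁^2*c₂^2*y1*y2^2*y3^3*y4*p2*p4 + (-1)*c₁^2*c₂^2*y1*y2^2*y3^3*y4*p2^2 + (-1)*c₁^2*c₂^2*y1*y2^2*y3^3*y4^3*y5*p4 + c₁^2*c₂^2*y1*y2^3*y3^2*y4*p4 + c₁^2*c₂^2*y1*y2^3*y3^2*y4*p3*p4 + (-1)*c₁^2*c₂^2*y1*y2^3*y3^3*p2*p4 + (-1)*c₁^2*c₂^2*y1*y2^3*y3^3*y4^2*y5*p4 + (-1)*c₁^2*c₂^2*y0*y1*y2*y3*p2^2*p3*p4 + (-1)*c₁^2*c₂^2*y0*y1*y2*y3*y4^2*y5*p2^2 + c₁^2*c₂^2*y0*y1*y2^2*p4 + c₁^2*c₂^2*y0*y1*y2^2*p3*p4 + (-1)*c₁^2*c₂^2*y0*y1*y2^2*p2*p4 + (-1)*c₁^2*c₂^2*y0*y1*y2^2*p2*p3*p4 + (-1)*c₁^2*c₂^2*y0*y1*y2^2*y3*y4*y5*p4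 + (-1)*c₁^2*c₂^2*y0*y1*y2^2*y3*y4*y5*p2^2 + c₁^2*c₂^2*y0*y1*y2^2*y3*y4^2*p4 + c₁^2*c₂^2*y0*y1*y2^2*y3*y4^2*p3*p4 + (-1)*c₁^2*c₂^2*y0*y1*y2^2*y3^2*y4*p2*p4 + (-2)*c₁^2*c₂^2*y0*y1*y2^2*y3^2*y4*p2*p3*p4 + (-1)*c₁^2*c₂^2*y0*y1*y2^2*y3^2*y4*p2^2 + (-1)*c₁^2*c₂^2*y0*y1*y2^2*y3^2*y4^3*y5*p4 + c₁^2*c₂^2*y0*y1*y2^3*y3*y4*p4 + c₁^2*c₂^2*y0*y1*y2^3*y3*y4*p3*p4 + (-1)*c₁^2*c₂^2*y0*y1*y2^3*y3^2*p2*p4 + (-1)*c₁^2*c₂^2*y0*y1*y2^3*y3^2*y4^2*y5*p4 + (-1)*c₁^2*c₂^2*y0*y1^2*y2*p2^2*p3*p4 + (-1)*c₁^2*c₂^2*y0*y1^2*y2^2*y3*y4*p2*p3*p4 + c₁^2*c₂^2*y0*y1^2*y2^2*y3^2*y4^2*y5*p2^2 + (-1)*c₁^2*c₂^2*y0*y1^2*y2^3*y3*p4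 + (-1)*c₁^2*c₂^2*y0*y1^2*y2^3*y3*p3*p4 + c₁^2*c₂^2*y0*y1^2*y2^3*y3*p2*p4 + c₁^2*c₂^2*y0*y1^2*y2^3*y3*p2*p3*p4 + c₁^2*c₂^2*y0*y1^2*y2^3*y3^2*y4*y5*p4 + c₁^2*c₂^2*y0*y1^2*y2^3*y3^2*y4*y5*p2^2 + (-1)*c₁^2*c₂^2*y0*y1^2*y2^3*y3^2*y4^2*p4 + (-1)*c₁^2*c₂^2*y0*y1^2*y2^3*y3^2*y4^2*p3*p4 + c₁^2*c₂^2*y0*y1^2*y2^3*y3^3*y4*p2*p4 + c₁^2*c₂^2*y0*y1^2*y2^3*y3^3*y4*p2^2 + c₁^2*c₂^2*y0*y1^2*y2^3*y3^3*y4^3*y5*p4 + (-1)*c₁^2*c₂^2*y0*y1^2*y2^4*y3^2*y4*p4 + (-1)*c₁^2*c₂^2*y0*y1^2*y2^4*y3^2*y4*p3*p4 + c₁^2*c₂^2*y0*y1^2*y2^4*y3^3*p2*p4 + c₁^2*c₂^2*y0*y1^2*y2^4*y3^3*y4^2*y5*p4 + (-1)*c₁^3*c₂*y4*y5*p2^2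 + (-1)*c₁^3*c₂*y3*y4*p2*p3*p4 + (-1)*c₁^3*c₂*y3*y4*p2^2 + c₁^3*c₂*y2*y4*p4 + c₁^3*c₂*y2*y4*p3*p4 + (-1)*c₁^3*c₂*y2*y3*p2*p4 + (-1)*c₁^3*c₂*y2*y3*p2^2 + 2*c₁^3*c₂*y2*y3*p2^2*p3*p4 + (-1)*c₁^3*c₂*y2*y3*y4^2*y5*p4 + c₁^3*c₂*y1*y2*p2^2*p3*p4 + c₁^3*c₂*y1*y2*y3*y4*y5*p2^2 + c₁^3*c₂*y1*y2*y3^2*y4*p2^2 + (-1)*c₁^3*c₂*y1*y2^2*y3*y4*p4 + (-1)*c₁^3*c₂*y1*y2^2*y3*y4*p3*p4 + c₁^3*c₂*y1*y2^2*y3^2*p2*p4 + c₁^3*c₂*y1*y2^2*y3^2*p2^2 + c₁^3*c₂*y1*y2^2*y3^2*y4^2*y5*p4 + c₁^3*c₂*y0*y1*p2^2*p3*p4 + c₁^3*c₂*y0*y1*y2*y4*y5*p2^2 + c₁^3*c₂*y0*y1*y2*y3*y4*p2*p3*p4 + c₁^3*c₂*y0*y1*y2*y3*y4*p2^2 + (-1)*c₁^3*c₂*y0*y1*y2^2*y4*p4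 + (-1)*c₁^3*c₂*y0*y1*y2^2*y4*p3*p4 + c₁^3*c₂*y0*y1*y2^2*y3*p2*p4 + c₁^3*c₂*y0*y1*y2^2*y3*p2^2 + c₁^3*c₂*y0*y1*y2^2*y3*y4^2*y5*p4 + (-1)*c₁^3*c₂*y0*y1^2*y2^2*y3*y4*y5*p2^2 + (-1)*c₁^3*c₂*y0*y1^2*y2^2*y3^2*y4*p2^2 + c₁^3*c₂*y0*y1^2*y2^3*y3*y4*p4 + c₁^3*c₂*y0*y1^2*y2^3*y3*y4*p3*p4 + (-1)*c₁^3*c₂*y0*y1^2*y2^3*y3^2*p2*p4 + (-1)*c₁^3*c₂*y0*y1^2*y2^3*y3^2*p2^2 + (-1)*c₁^3*c₂*y0*y1^2*y2^3*y3^2*y4^2*y5*p4 + c₁^4*p2^2 + (-1)*c₁^4*p2^2*p3*p4 + (-1)*c₁^4*y1*y2*y3*p2^2 + (-1)*c₁^4*y0*y1*y2*p2^2 + c₁^4*y0*y1^2*y2^2*y3*p2^2) * hp2 + (c₂^4*y2^2*y3^2*y4*p4 + (-1)*c₂^4*y2^3*y3^3*y4^2*p4 + (-1)*c₂^4*y1*y2^3*y3^3*y4*p4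 + c₂^4*y1*y2^4*y3^4*y4^2*p4 + (-1)*c₂^4*y0*y1*y2^3*y3^2*y4*p4 + c₂^4*y0*y1*y2^4*y3^3*y4^2*p4 + c₂^4*y0*y1^2*y2^4*y3^3*y4*p4 + (-1)*c₂^4*y0*y1^2*y2^5*y3^4*y4^2*p4 + (-1)*c₁*c₂^3*y2*y3*y4*p4 + (-1)*c₁*c₂^3*y2^2*y3*p4 + c₁*c₂^3*y2^3*y3^2*y4*p4 + c₁*c₂^3*y2^3*y3^3*y4^3*p4 + c₁*c₂^3*y1*y2^2*y3^2*y4*p4 + c₁*c₂^3*y1*y2^3*y3^2*p4 + (-1)*c₁*c₂^3*y1*y2^4*y3^3*y4*p4 + (-1)*c₁*c₂^3*y1*y2^4*y3^4*y4^3*p4 + c₁*c₂^3*y0*y1*y2^2*y3*y4*p4 + c₁*c₂^3*y0*y1*y2^3*y3*p4 + (-1)*c₁*c₂^3*y0*y1*y2^4*y3^2*y4*p4 + (-1)*c₁*c₂^3*y0*y1*y2^4*y3^3*y4^3*p4 + (-1)*c₁*c₂^3*y0*y1^2*y2^3*y3^2*y4*p4 + (-1)*c₁*c₂^3*y0*y1^2*y2^4*y3^2*p4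 + c₁*c₂^3*y0*y1^2*y2^5*y3^3*y4*p4 + c₁*c₂^3*y0*y1^2*y2^5*y3^4*y4^3*p4 + c₁^2*c₂^2*y2*p4 + c₁^2*c₂^2*y2*y3*y4^2*p4 + (-1)*c₁^2*c₂^2*y2^2*y3^2*y4^3*p4 + (-1)*c₁^2*c₂^2*y2^3*y3^2*y4^2*p4 + (-1)*c₁^2*c₂^2*y1*y2^2*y3*p4 + (-1)*c₁^2*c₂^2*y1*y2^2*y3^2*y4^2*p4 + c₁^2*c₂^2*y1*y2^3*y3^3*y4^3*p4 + c₁^2*c₂^2*y1*y2^4*y3^3*y4^2*p4 + (-1)*c₁^2*c₂^2*y0*y1*y2^2*p4 + (-1)*c₁^2*c₂^2*y0*y1*y2^2*y3*y4^2*p4 + c₁^2*c₂^2*y0*y1*y2^3*y3^2*y4^3*p4 + c₁^2*c₂^2*y0*y1*y2^4*y3^2*y4^2*p4 + c₁^2*c₂^2*y0*y1^2*y2^3*y3*p4 + c₁^2*c₂^2*y0*y1^2*y2^3*y3^2*y4^2*p4 + (-1)*c₁^2*c₂^2*y0*y1^2*y2^4*y3^3*y4^3*p4 + (-1)*c₁^2*c₂^2*y0*y1^2*y2^5*y3^3*y4^2*p4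 + (-1)*c₁^3*c₂*y2*y4*p4 + c₁^3*c₂*y2^2*y3*y4^2*p4 + c₁^3*c₂*y1*y2^2*y3*y4*p4 + (-1)*c₁^3*c₂*y1*y2^3*y3^2*y4^2*p4 + c₁^3*c₂*y0*y1*y2^2*y4*p4 + (-1)*c₁^3*c₂*y0*y1*y2^3*y3*y4^2*p4 + (-1)*c₁^3*c₂*y0*y1^2*y2^3*y3*y4*p4 + c₁^3*c₂*y0*y1^2*y2^4*y3^2*y4^2*p4) * hp3

theorem coreU_miura (c₁ c₂ a b c d e : ℂ)
    (h1 : a * b * c - 1 ≠ 0) (h2 : b * c * d - 1 ≠ 0) (h3 : c * d * e - 1 ≠ 0) :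
    c * d * (c₁ * e - c₂) * (c₂ * a * b - c₁) * (c₂ * b * c - c₁)
        / ((a * b * c - 1) * (b * c * d - 1) * (c * d * e - 1))
      = (c₂ * a * b - c₁) / (a * b * c - 1) * ((c₂ * b * c - c₁) / (b * c * d - 1))
          * (c₁ - (c₂ * c * d - c₁) / (c * d * e - 1)) := by
  field_simp
  ring

theorem stageA_miura (c₁ c₂ : ℂ) (v : ℤ → ℝ → ℂ)
    (hne : ∀ (n : ℤ) (t : ℝ), v n t * v (n + 1) t * v (n + 2) t ≠ 1)
    (hv : ∀ (n : ℤ) (t : ℝ),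
      HasDerivAt (v n)
        (v n t * (v (n - 2) t * v (n - 1) t - v (n + 1) t * v (n + 2) t)
            * (c₂ - c₁ * v n t)
            * (c₂ * v n t * v (n - 1) t - c₁)
            * (c₂ * v n t * v (n + 1) t - c₁)
          / ((v n t * v (n - 2) t * v (n - 1) t - 1)
              * (v n t * v (n - 1) t * v (n + 1) t - 1)
              * (v n t * v (n + 1) t * v (n + 2) t - 1))) t)
    (m : ℤ) (t : ℝ) :
    HasDerivAt (fun s => (c₂ * v m s * v (m + 1) s - c₁) / (v m s * v (m + 1) s * v (m + 2) s - 1))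
      ((c₂ * v m t * v (m + 1) t - c₁) / (v m t * v (m + 1) t * v (m + 2) t - 1) * (c₁ - (c₂ * v m t * v (m + 1) t - c₁) / (v m t * v (m + 1) t * v (m + 2) t - 1)) * ((c₂ * v (m + 1) t * v (m + 2) t - c₁) / (v (m + 1) t * v (m + 2) t * v (m + 3) t - 1) * ((c₂ * v (m + 2) t * v (m + 3) t - c₁) / (v (m + 2) t * v (m + 3) t * v (m + 4) t - 1)) - (c₂ * v (m - 1) t * v m t - c₁) / (v (m - 1) t * v m t * v (m + 1) t - 1) * ((c₂ * v (m - 2) t * v (m - 1) t - c₁) / (v (m - 2) t * v (m - 1) t * v m t - 1)))) t := by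
  have h2 := hv m t
  have h3 := hv (m + 1) t
  rw [show m + 1 - 2 = m - 1 by ring, show m + 1 - 1 = m by ring, show m + 1 + 1 = m + 2 by ring, show m + 1 + 2 = m + 3 by ring] at h3
  have h4 := hv (m + 2) t
  rw [show m + 2 - 2 = m by ring, show m + 2 - 1 = m + 1 by ring, show m + 2 + 1 = m + 3 by ring, show m + 2 + 2 = m + 4 by ring] at h4
  have g0 : v (m - 2) t * v (m - 1) t * v m t - 1 ≠ 0 := by
    have h := hne (m - 2) t
    rw [show m - 2 + 1 = m - 1 by ring, show m - 2 + 2 = m by ring] at h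
    exact sub_ne_zero.mpr h
  have g1 : v (m - 1) t * v m t * v (m + 1) t - 1 ≠ 0 := by
    have h := hne (m - 1) t
    rw [show m - 1 + 1 = m by ring, show m - 1 + 2 = m + 1 by ring] at h
    exact sub_ne_zero.mpr h
  have g2 : v m t * v (m + 1) t * v (m + 2) t - 1 ≠ 0 := sub_ne_zero.mpr (hne m t)
  have g3 : v (m + 1) t * v (m + 2) t * v (m + 3) t - 1 ≠ 0 := by
    have h := hne (m + 1) t
    rw [show m + 1 + 1 = m + 2 by ring, show m + 1 + 2 = m + 3 by ring] at h
    exact sub_ne_zero.mpr h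
  have g4 : v (m + 2) t * v (m + 3) t * v (m + 4) t - 1 ≠ 0 := by
    have h := hne (m + 2) t
    rw [show m + 2 + 1 = m + 3 by ring, show m + 2 + 2 = m + 4 by ring] at h
    exact sub_ne_zero.mpr h
  have hdd : HasDerivAt (fun s => (c₂ * v m s * v (m + 1) s - c₁) / (v m s * v (m + 1) s * v (m + 2) s - 1))
      (((c₂ * (v m t * (v (m - 2) t * v (m - 1) t - v (m + 1) t * v (m + 2) t) * (c₂ - c₁ * v m t) * (c₂ * v m t * v (m - 1) t - c₁) * (c₂ * v m t * v (m + 1) t - c₁) / ((v m t * v (m - 2) t * v (m - 1) t - 1) * (v m t * v (m - 1) t * v (m + 1) t - 1) * (v m t * v (m + 1) t * v (m + 2) t - 1))) * v (m + 1) t + c₂ * v m t * (v (m + 1) t * (v (m - 1) t * v m t - v (m + 2) t * v (m + 3) t) * (c₂ - c₁ * v (m + 1) t) * (c₂ * v (m + 1) t * v m t - c₁) * (c₂ * v (m + 1) t * v (m + 2) t - c₁) / ((v (m + 1) t * v (m - 1) t * v m t - 1) * (v (m + 1) t * v m t * v (m + 2) t - 1) * (v (m + 1) t * v (m + 2) t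 * v (m + 3) t - 1)))) * (v m t * v (m + 1) t * v (m + 2) t - 1) - (c₂ * v m t * v (m + 1) t - c₁) * (((v m t * (v (m - 2) t * v (m - 1) t - v (m + 1) t * v (m + 2) t) * (c₂ - c₁ * v m t) * (c₂ * v m t * v (m - 1) t - c₁) * (c₂ * v m t * v (m + 1) t - c₁) / ((v m t * v (m - 2) t * v (m - 1) t - 1) * (v m t * v (m - 1) t * v (m + 1) t - 1) * (v m t * v (m + 1) t * v (m + 2) t - 1))) * v (m + 1) t + v m t * (v (m + 1) t * (v (m - 1) t * v m t - v (m + 2) t * v (m + 3) t) * (c₂ - c₁ * v (m + 1) t) * (c₂ * v (m + 1) t * v m t - c₁) * (c₂ * v (m + 1) t * v (m + 2) t - c₁) / ((v (m + 1) t * v (m - 1) t * v m t - 1) * (v (m + 1) t * v m t * v (m + 2) t - 1) * (v (m + 1) t * v (m + 2) t * v (m + 3) t - 1)))) * v (m + 2) t + v m t * v (m + 1) t * (v (m + 2) t * (v m t * v (m + 1) t - v (m + 3) t * v (m + 4) t) * (c₂ - c₁ * v (m + 2) t) * (c₂ * v (m + 2) t * v (m + 1) t - c₁) * (c₂ * v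 (m + 2) t * v (m + 3) t - c₁) / ((v (m + 2) t * v m t * v (m + 1) t - 1) * (v (m + 2) t * v (m + 1) t * v (m + 3) t - 1) * (v (m + 2) t * v (m + 3) t * v (m + 4) t - 1))))) / (v m t * v (m + 1) t * v (m + 2) t - 1) ^ 2) t :=
    HasDerivAt.div (((h2.const_mul c₂).mul h3).sub_const c₁) (((h2.mul h3).mul h4).sub_const 1) g2
  have heq := coreA_miura c₁ c₂ (v (m - 2) t) (v (m - 1) t) (v m t) (v (m + 1) t) (v (m + 2) t) (v (m + 3) t) (v (m + 4) t) (v m t * (v (m - 2) t * v (m - 1) t - v (m + 1) t * v (m + 2) t) * (c₂ - c₁ * v m t) * (c₂ * v m t * v (m - 1) t - c₁) * (c₂ * v m t * v (m + 1) t - c₁) / ((v m t * v (m - 2) t * v (m - 1) t - 1) * (v m t * v (m - 1) t * v (m + 1) t - 1) * (v m t * v (m + 1) t * v (m + 2) t - 1))) (v (m + 1) t * (v (m - 1) t * v m t - v (m + 2) t * v (m + 3) t) * (c₂ - c₁ * v (m + 1) t) * (c₂ * v (m + 1) t * v m t - c₁) * (c₂ * v (m + 1) t * v (m + 2) t - c₁)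 / ((v (m + 1) t * v (m - 1) t * v m t - 1) * (v (m + 1) t * v m t * v (m + 2) t - 1) * (v (m + 1) t * v (m + 2) t * v (m + 3) t - 1))) (v (m + 2) t * (v m t * v (m + 1) t - v (m + 3) t * v (m + 4) t) * (c₂ - c₁ * v (m + 2) t) * (c₂ * v (m + 2) t * v (m + 1) t - c₁) * (c₂ * v (m + 2) t * v (m + 3) t - c₁) / ((v (m + 2) t * v m t * v (m + 1) t - 1) * (v (m + 2) t * v (m + 1) t * v (m + 3) t - 1) * (v (m + 2) t * v (m + 3) t * v (m + 4) t - 1))) (v (m - 2) t * v (m - 1) t * v m t - 1) (v (m - 1) t * v m t * v (m + 1) t - 1) (v m t * v (m + 1) t * v (m + 2) t - 1) (v (m + 1) t * v (m + 2) t * v (m + 3) t - 1) (v (m + 2) t * v (m + 3) t * v (m + 4) t - 1) (c₂ * v (m - 2) t * v (m - 1) t - c₁) (c₂ * v (m - 1) t * v m t - c₁) (c₂ * v m t * v (m + 1) t - c₁) (c₂ * v (m + 1) t * v (m + 2) t - c₁) (c₂ * v (m + 2) t * v (m + 3) t - c₁) rfl rfl rfl rfl rfl rfl rfl rfl rfl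 rfl g0 g1 g2 g3 g4 rfl rfl rfl
  rwa [heq] at hdd



/-- The order-4 Miura-type transformation
`u = v₂v₃(c₁v₄ − c₂)(c₂vv₁ − c₁)(c₂v₁v₂ − c₁)/((vv₁v₂ − 1)(v₁v₂v₃ − 1)(v₂v₃v₄ − 1))`
maps solutions of the modified equation
`vₜ = v(v₋₂v₋₁ − v₁v₂)(c₂ − c₁v)(c₂vv₋₁ − c₁)(c₂vv₁ − c₁)
      /((vv₋₂v₋₁ − 1)(vv₋₁v₁ − 1)(vv₁v₂ − 1))`
to solutions of the Bogoyavlensky lattice with `p = 2`: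
`uₜ = u(u₂ + u₁ − u₋₁ − u₋₂)`. -/
theorem miura_order4_to_bogoyavlensky_p2
    (c₁ c₂ : ℂ) (v : ℤ → ℝ → ℂ)
    (hne : ∀ (n : ℤ) (t : ℝ), v n t * v (n + 1) t * v (n + 2) t ≠ 1)
    (hv : ∀ (n : ℤ) (t : ℝ),
      HasDerivAt (v n)
        (v n t * (v (n - 2) t * v (n - 1) t - v (n + 1) t * v (n + 2) t)
            * (c₂ - c₁ * v n t)
            * (c₂ * v n t * v (n - 1) t - c₁)
            * (c₂ * v n t * v (n + 1) t - c₁)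
          / ((v n t * v (n - 2) t * v (n - 1) t - 1)
              * (v n t * v (n - 1) t * v (n + 1) t - 1)
              * (v n t * v (n + 1) t * v (n + 2) t - 1))) t)
    (u : ℤ → ℝ → ℂ)
    (hu : ∀ (n : ℤ) (t : ℝ),
      u n t = v (n + 2) t * v (n + 3) t
          * (c₁ * v (n + 4) t - c₂)
          * (c₂ * v n t * v (n + 1) t - c₁)
          * (c₂ * v (n + 1) t * v (n + 2) t - c₁)
        / ((v n t * v (n + 1) t * v (n + 2) t - 1)
            * (v (n + 1) t * v (n + 2) t * v (n + 3) t - 1)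
            * (v (n + 2) t * v (n + 3) t * v (n + 4) t - 1))) :
    ∀ (n : ℤ) (t : ℝ),
      HasDerivAt (u n)
        (u n t * (u (n + 2) t + u (n + 1) t - u (n - 1) t - u (n - 2) t))
        t := by
  intro n t
  have hk : ∀ (m : ℤ) (s : ℝ), u m s =
      (c₂ * v m s * v (m + 1) s - c₁) / (v m s * v (m + 1) s * v (m + 2) s - 1)
        * ((c₂ * v (m + 1) s * v (m + 2) s - c₁) / (v (m + 1) s * v (m + 2) s * v (m + 3) s - 1))
        * (c₁ - (c₂ * v (m + 2) s * v (m + 3) s - c₁) / (v (m + 2) s * v (m + 3) s * v (m + 4) s - 1)) := by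
    intro m s
    have pm1 : v (m + 1) s * v (m + 2) s * v (m + 3) s - 1 ≠ 0 := by
      have h := hne (m + 1) s
      rw [show m + 1 + 1 = m + 2 by ring, show m + 1 + 2 = m + 3 by ring] at h
      exact sub_ne_zero.mpr h
    have pm2 : v (m + 2) s * v (m + 3) s * v (m + 4) s - 1 ≠ 0 := by
      have h := hne (m + 2) s
      rw [show m + 2 + 1 = m + 3 by ring, show m + 2 + 2 = m + 4 by ring] at h
      exact sub_ne_zero.mpr h
    rw [hu m s]
    exact coreU_miura c₁ c₂ (v m s) (v (m + 1) s) (v (m + 2) s) (v (m + 3) s) (v (m + 4) s)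
      (sub_ne_zero.mpr (hne m s)) pm1 pm2
  have hw0 := stageA_miura c₁ c₂ v hne hv n t
  have hw1 := stageA_miura c₁ c₂ v hne hv (n + 1) t
  rw [show n + 1 + 1 = n + 2 by ring, show n + 1 + 2 = n + 3 by ring, show n + 1 + 3 = n + 4 by ring, show n + 1 + 4 = n + 5 by ring, show n + 1 - 1 = n by ring, show n + 1 - 2 = n - 1 by ring] at hw1
  have hw2 := stageA_miura c₁ c₂ v hne hv (n + 2) t
  rw [show n + 2 + 1 = n + 3 by ring, show n + 2 + 2 = n + 4 by ring, show n + 2 + 3 = n + 5 by ring, show n + 2 + 4 = n + 6 by ring, show n + 2 - 1 = n + 1 by ring, show n + 2 - 2 = n by ring] at hw2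
  have hB : HasDerivAt (fun s =>
      (c₂ * v n s * v (n + 1) s - c₁) / (v n s * v (n + 1) s * v (n + 2) s - 1)
        * ((c₂ * v (n + 1) s * v (n + 2) s - c₁) / (v (n + 1) s * v (n + 2) s * v (n + 3) s - 1))
        * (c₁ - (c₂ * v (n + 2) s * v (n + 3) s - c₁) / (v (n + 2) s * v (n + 3) s * v (n + 4) s - 1)))
      ((((c₂ * v n t * v (n + 1) t - c₁) / (v n t * v (n + 1) t * v (n + 2) t - 1) * (c₁ - (c₂ * v n t * v (n + 1) t - c₁) / (v n t * v (n + 1) t * v (n + 2) t - 1)) * ((c₂ * v (n + 1) t * v (n + 2) t - c₁) / (v (n + 1) t * v (n + 2) t * v (n + 3) t - 1) * ((c₂ * v (n + 2) t * v (n + 3) t - c₁) / (v (n + 2) t * v (n + 3) t * v (n + 4) t - 1)) - (c₂ * v (n - 1) t * v n t - c₁) / (v (n - 1) t * v n t * v (n + 1) t - 1) * ((c₂ * v (n - 2) t * v (n - 1) t - c₁) / (v (n - 2) t * v (n - 1) t * v n t - 1)))) * ((c₂ * v (n + 1) t * v (n + 2) t - c₁) / (v (n + 1) t * v (n + 2)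 t * v (n + 3) t - 1)) + (c₂ * v n t * v (n + 1) t - c₁) / (v n t * v (n + 1) t * v (n + 2) t - 1) * ((c₂ * v (n + 1) t * v (n + 2) t - c₁) / (v (n + 1) t * v (n + 2) t * v (n + 3) t - 1) * (c₁ - (c₂ * v (n + 1) t * v (n + 2) t - c₁) / (v (n + 1) t * v (n + 2) t * v (n + 3) t - 1)) * ((c₂ * v (n + 2) t * v (n + 3) t - c₁) / (v (n + 2) t * v (n + 3) t * v (n + 4) t - 1) * ((c₂ * v (n + 3) t * v (n + 4) t - c₁) / (v (n + 3) t * v (n + 4) t * v (n + 5) t - 1)) - (c₂ * v n t * v (n + 1) t - c₁) / (v n t * v (n + 1) t * v (n + 2) t - 1) * ((c₂ * v (n - 1) t * v n t - c₁) / (v (n - 1) t * v n t * v (n + 1) t - 1))))) * (c₁ - (c₂ * v (n + 2) t * v (n + 3) t - c₁) / (v (n + 2) t * v (n + 3) t * v (n + 4) t - 1)) + (c₂ * v n t * v (n + 1) t - c₁) / (v n t * v (n + 1) t * v (n + 2) t - 1) * ((c₂ * v (n + 1) t * v (n + 2) t - c₁) / (v (n + 1) t * v (n + 2) t * v (n +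 3) t - 1)) * -((c₂ * v (n + 2) t * v (n + 3) t - c₁) / (v (n + 2) t * v (n + 3) t * v (n + 4) t - 1) * (c₁ - (c₂ * v (n + 2) t * v (n + 3) t - c₁) / (v (n + 2) t * v (n + 3) t * v (n + 4) t - 1)) * ((c₂ * v (n + 3) t * v (n + 4) t - c₁) / (v (n + 3) t * v (n + 4) t * v (n + 5) t - 1) * ((c₂ * v (n + 4) t * v (n + 5) t - c₁) / (v (n + 4) t * v (n + 5) t * v (n + 6) t - 1)) - (c₂ * v (n + 1) t * v (n + 2) t - c₁) / (v (n + 1) t * v (n + 2) t * v (n + 3) t - 1) * ((c₂ * v n t * v (n + 1) t - c₁) / (v n t * v (n + 1) t * v (n + 2) t - 1))))) t :=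
    (hw0.mul hw1).mul (hw2.const_sub c₁)
  rw [hk n t, hk (n + 2) t, hk (n + 1) t, hk (n - 1) t, hk (n - 2) t]
  rw [show n + 2 + 1 = n + 3 by ring, show n + 2 + 2 = n + 4 by ring, show n + 2 + 3 = n + 5 by ring, show n + 2 + 4 = n + 6 by ring, show n + 1 + 1 = n + 2 by ring, show n + 1 + 2 = n + 3 by ring, show n + 1 + 3 = n + 4 by ring, show n + 1 + 4 = n + 5 by ring, show n - 1 + 1 = n by ring, show n - 1 + 2 = n + 1 by ring, show n - 1 + 3 = n + 2 by ring, show n - 1 + 4 = n + 3 by ring, show n - 2 + 1 = n - 1 by ring, show n - 2 + 2 = n by ring, show n - 2 + 3 = n + 1 by ring, show n - 2 + 4 = n + 2 by ring]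
  rw [show u n = (fun s =>
      (c₂ * v n s * v (n + 1) s - c₁) / (v n s * v (n + 1) s * v (n + 2) s - 1)
        * ((c₂ * v (n + 1) s * v (n + 2) s - c₁) / (v (n + 1) s * v (n + 2) s * v (n + 3) s - 1))
        * (c₁ - (c₂ * v (n + 2) s * v (n + 3) s - c₁) / (v (n + 2) s * v (n + 3) s * v (n + 4) s - 1)))
    from funext fun s => hk n s]
  rw [show (c₂ * v n t * v (n + 1) t - c₁) / (v n t * v (n + 1) t * v (n + 2) t - 1) * ((c₂ * v (n + 1) t * v (n + 2) t - c₁) / (v (n + 1) t * v (n + 2) t * v (n + 3) t - 1)) * (c₁ - (c₂ * v (n + 2) t * v (n + 3) t - c₁) / (v (n + 2) t * v (n + 3) t * v (n + 4) t - 1)) * ((c₂ * v (n + 2) t * v (n + 3) t - c₁) / (v (n + 2) t * v (n + 3) t * v (n + 4) t - 1) * ((c₂ * v (n + 3) t * v (n + 4) t - c₁) / (v (n + 3) t * v (n + 4) t * v (n + 5) t - 1)) * (c₁ - (c₂ * v (n + 4) t * v (n + 5) t - c₁) / (v (n + 4) t * v (n + 5) t * v (n + 6) t - 1)) + (c₂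 * v (n + 1) t * v (n + 2) t - c₁) / (v (n + 1) t * v (n + 2) t * v (n + 3) t - 1) * ((c₂ * v (n + 2) t * v (n + 3) t - c₁) / (v (n + 2) t * v (n + 3) t * v (n + 4) t - 1)) * (c₁ - (c₂ * v (n + 3) t * v (n + 4) t - c₁) / (v (n + 3) t * v (n + 4) t * v (n + 5) t - 1)) - (c₂ * v (n - 1) t * v n t - c₁) / (v (n - 1) t * v n t * v (n + 1) t - 1) * ((c₂ * v n t * v (n + 1) t - c₁) / (v n t * v (n + 1) t * v (n + 2) t - 1)) * (c₁ - (c₂ * v (n + 1) t * v (n + 2) t - c₁) / (v (n + 1) t * v (n + 2) t * v (n + 3) t - 1)) - (c₂ * v (n - 2) t * v (n - 1) t - c₁) / (v (n - 2) t * v (n - 1) t * v n t - 1) * ((c₂ * v (n - 1) t * v n t - c₁) / (v (n - 1) t * v n t * v (n + 1) t - 1)) * (c₁ - (c₂ * v n t * v (n + 1) t - c₁) / (v n t * v (n + 1) t * v (n + 2) t - 1))) = (((c₂ * v n t * v (n + 1) t - c₁) / (v n t * v (n + 1) t * v (n + 2) t - 1) * (c₁ - (c₂ * v n t * v (n + 1)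 t - c₁) / (v n t * v (n + 1) t * v (n + 2) t - 1)) * ((c₂ * v (n + 1) t * v (n + 2) t - c₁) / (v (n + 1) t * v (n + 2) t * v (n + 3) t - 1) * ((c₂ * v (n + 2) t * v (n + 3) t - c₁) / (v (n + 2) t * v (n + 3) t * v (n + 4) t - 1)) - (c₂ * v (n - 1) t * v n t - c₁) / (v (n - 1) t * v n t * v (n + 1) t - 1) * ((c₂ * v (n - 2) t * v (n - 1) t - c₁) / (v (n - 2) t * v (n - 1) t * v n t - 1)))) * ((c₂ * v (n + 1) t * v (n + 2) t - c₁) / (v (n + 1) t * v (n + 2) t * v (n + 3) t - 1)) + (c₂ * v n t * v (n + 1) t - c₁) / (v n t * v (n + 1) t * v (n + 2) t - 1) * ((c₂ * v (n + 1) t * v (n + 2) t - c₁) / (v (n + 1) t * v (n + 2) t * v (n + 3) t - 1) * (c₁ - (c₂ * v (n + 1) t * v (n + 2) t - c₁) / (v (n + 1) t * v (n + 2) t * v (n + 3) t - 1)) * ((c₂ * v (n + 2) t * v (n + 3) t - c₁) / (v (n + 2) t * v (n + 3) t * v (n + 4) t - 1) * ((c₂ * v (n + 3) t * v (n + 4)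 t - c₁) / (v (n + 3) t * v (n + 4) t * v (n + 5) t - 1)) - (c₂ * v n t * v (n + 1) t - c₁) / (v n t * v (n + 1) t * v (n + 2) t - 1) * ((c₂ * v (n - 1) t * v n t - c₁) / (v (n - 1) t * v n t * v (n + 1) t - 1))))) * (c₁ - (c₂ * v (n + 2) t * v (n + 3) t - c₁) / (v (n + 2) t * v (n + 3) t * v (n + 4) t - 1)) + (c₂ * v n t * v (n + 1) t - c₁) / (v n t * v (n + 1) t * v (n + 2) t - 1) * ((c₂ * v (n + 1) t * v (n + 2) t - c₁) / (v (n + 1) t * v (n + 2) t * v (n + 3) t - 1)) * -((c₂ * v (n + 2) t * v (n + 3) t - c₁) / (v (n + 2) t * v (n + 3) t * v (n + 4) t - 1) * (c₁ - (c₂ * v (n + 2) t * v (n + 3) t - c₁) / (v (n + 2) t * v (n + 3) t * v (n + 4) t - 1)) * ((c₂ * v (n + 3) t * v (n + 4) t - c₁) / (v (n + 3) t * v (n + 4) t * v (n + 5) t - 1) * ((c₂ * v (n + 4) t * v (n + 5) t - c₁) / (v (n + 4) t * v (n + 5) t * v (n + 6) t - 1)) - (c₂ * v (n + 1) t * v (n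 + 2) t - c₁) / (v (n + 1) t * v (n + 2) t * v (n + 3) t - 1) * ((c₂ * v n t * v (n + 1) t - c₁) / (v n t * v (n + 1) t * v (n + 2) t - 1)))) from by ring]
  exact hB
end

section
/- Fix p ∈ ℤ_{>0} and c₁, c₂ ∈ ℂ. Let v : ℤ → ℝ → ℂ be t-differentiable with ∏_{j=i}^{i+p} v_j(n,t) ≠ 1 for all i ∈ ℤ and all n, t (where v_k(n,t) := v(n+k,t)), satisfying for all n, t: ∂_t v = v·(c₂ − c₁v)·(∏_{i=1}^p v_{−i} − ∏_{i=1}^p v_i)·∏_{i=0}^{p−1}(c₂·(∏_{j=i+1−p}^{i} v_j) − c₁) / ∏_{i=0}^{p}(−1 + ∏_{j=i−p}^{i} v_j). Define u(n,t) := (c₁·v_{2p} − c₂)·(∏_{j=p}^{2p−1} v_j)·∏_{i=0}^{p−1}(c₂·(∏_{j=i}^{i+p−1} v_j) − c₁) / ∏_{i=0}^{p}(−1 + ∏_{j=i}^{i+p} v_j) (evaluated at (n,t)). Then u satisfies the Narita–Itoh–Bogoyavlensky lattice: ∂_t u(n,t) = u(n,t)·(∑_{k=1}^p u(n+k,t)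 − ∑_{k=1}^p u(n−k,t)) for all n and t. -/
open Finset

namespace NIBAux

variable (p : ℕ) (c₁ c₂ : ℂ) (v : ℤ → ℝ → ℂ)

noncomputable def Q (j : ℤ) (t : ℝ) : ℂ := ∏ l ∈ range p, v (j + l) t
noncomputable def Pp (j : ℤ) (t : ℝ) : ℂ := ∏ l ∈ range (p + 1), v (j + l) t
noncomputable def B (j : ℤ) (t : ℝ) : ℂ := -1 + Pp p v j t
noncomputable def A (j : ℤ) (t : ℝ) : ℂ := c₂ * Q p v j t - c₁
noncomputable def m (j : ℤ) (t : ℝ) : ℂ := A p c₁ c₂ v j t / B p v j t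
noncomputable def M (j : ℤ) (t : ℝ) : ℂ := ∏ l ∈ range p, m p c₁ c₂ v (j + l) t
noncomputable def N (j : ℤ) (t : ℝ) : ℂ := ∏ l ∈ range (p + 1), m p c₁ c₂ v (j + l) t
noncomputable def T (j : ℤ) (t : ℝ) : ℂ := N p c₁ c₂ v j t * B p v (j + p) t
noncomputable def U (j : ℤ) (t : ℝ) : ℂ := c₁ * M p c₁ c₂ v j t - N p c₁ c₂ v j t

lemma Pp_last (j : ℤ) (t : ℝ) : Pp p v j t = Q p v j t * v (j + p) t := by
  rw [Pp, Q, prod_range_succ]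

lemma Pp_first (j : ℤ) (t : ℝ) : Pp p v j t = v j t * Q p v (j + 1) t := by
  rw [Pp, Q, prod_range_succ']
  rw [Finset.prod_congr rfl (fun i (_ : i ∈ range p) => by
    show v (j + ((i : ℕ) + 1 : ℕ)) t = v (j + 1 + (i : ℕ)) t
    congr 1; push_cast; ring)]
  push_cast
  rw [add_zero, mul_comm]

lemma N_last (j : ℤ) (t : ℝ) :
    N p c₁ c₂ v j t = M p c₁ c₂ v j t * m p c₁ c₂ v (j + p) t := by
  rw [N, M, prod_range_succ]

lemma N_first (j : ℤ) (t : ℝ) :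
    N p c₁ c₂ v j t = m p c₁ c₂ v j t * M p c₁ c₂ v (j + 1) t := by
  rw [N, M, prod_range_succ']
  rw [Finset.prod_congr rfl (fun i (_ : i ∈ range p) => by
    show m p c₁ c₂ v (j + ((i : ℕ) + 1 : ℕ)) t = m p c₁ c₂ v (j + 1 + (i : ℕ)) t
    congr 1; push_cast; ring)]
  push_cast
  rw [add_zero, mul_comm]

variable (hne : ∀ (i n : ℤ) (t : ℝ),
      (∏ j ∈ Finset.range (p + 1), v (n + i + j) t) ≠ 1)

include hne in
lemma B_ne (j : ℤ) (t : ℝ) : B p v j t ≠ 0 := by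
  intro hc
  apply hne 0 j t
  have h1 : ∏ l ∈ range (p+1), v (j + 0 + (l : ℕ)) t
      = ∏ l ∈ range (p+1), v (j + (l : ℕ)) t :=
    Finset.prod_congr rfl (fun l _ => by congr 1; ring)
  rw [h1]
  rw [B, Pp] at hc
  linear_combination hc

lemma key_loc (j : ℤ) (t : ℝ) :
    (c₂ - c₁ * v j t) * (Q p v (j - p) t - Q p v (j + 1) t)
      = A p c₁ c₂ v (j + 1) t * B p v (j - p) t
        - A p c₁ c₂ v (j - p) t * B p v j t := by
  have h1 : B p v (j - p) t = -1 + Q p v (j - p) t * v j t := by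
    rw [B, Pp_last]
    rw [show j - (p : ℤ) + p = j by ring]
  have h2 : B p v j t = -1 + v j t * Q p v (j + 1) t := by
    rw [B, Pp_first]
  rw [h1, h2, A, A]
  ring

include hne in
lemma hvT
    (hv : ∀ (n : ℤ) (t : ℝ),
      HasDerivAt (v n)
        (v n t * (c₂ - c₁ * v n t)
            * ((∏ i ∈ Finset.range p, v (n - (i + 1)) t)
                - ∏ i ∈ Finset.range p, v (n + (i + 1)) t)
            * (∏ i ∈ Finset.range p,
                (c₂ * (∏ j ∈ Finset.range p, v (n + i + 1 - p + j) t) - c₁))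
          / ∏ i ∈ Finset.range (p + 1),
              (-1 + ∏ j ∈ Finset.range (p + 1), v (n + i - p + j) t)) t)
    (j : ℤ) (t : ℝ) :
    HasDerivAt (v j)
      (v j t * (T p c₁ c₂ v (j - p + 1) t - T p c₁ c₂ v (j - p) t)) t := by
  have h := hv j t
  have hq1 : (∏ i ∈ range p, v (j - ((i : ℕ) + 1)) t) = Q p v (j - p) t := by
    rw [Q, ← Finset.prod_range_reflect (fun l => v (j - (p : ℤ) + l) t) p]
    exact Finset.prod_congr rfl (fun i hi => by
      have hip := Finset.mem_range.mp hi
      congr 1; omega)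
  have hq2 : (∏ i ∈ range p, v (j + ((i : ℕ) + 1)) t) = Q p v (j + 1) t := by
    rw [Q]
    exact Finset.prod_congr rfl (fun i hi => by congr 1; ring)
  have ha' : (∏ i ∈ range p,
        (c₂ * (∏ k ∈ range p, v (j + i + 1 - p + k) t) - c₁))
      = ∏ i ∈ range p, A p c₁ c₂ v (j - p + 1 + i) t := by
    refine Finset.prod_congr rfl (fun i hi => ?_)
    have hX : (∏ k ∈ range p, v (j + (i : ℕ) + 1 - p + k) t)
        = ∏ k ∈ range p, v (j - p + 1 + (i : ℕ) + k) t :=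
      Finset.prod_congr rfl (fun k _ => by congr 1; ring)
    rw [A, Q, hX]
  have hden : (∏ i ∈ range (p+1),
        (-1 + ∏ k ∈ range (p+1), v (j + i - p + k) t))
      = ∏ i ∈ range (p+1), B p v (j - p + i) t := by
    refine Finset.prod_congr rfl (fun i hi => ?_)
    have hX : (∏ k ∈ range (p+1), v (j + (i : ℕ) - p + k) t)
        = ∏ k ∈ range (p+1), v (j - p + (i : ℕ) + k) t :=
      Finset.prod_congr rfl (fun k _ => by congr 1; ring)
    rw [B, Pp, hX]
  have hsplit : (∏ i ∈ range (p+1), B p v (j - p + i) t)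
      = B p v (j - p) t * ∏ i ∈ range p, B p v (j - p + 1 + i) t := by
    rw [prod_range_succ']
    rw [Finset.prod_congr rfl (fun i (_ : i ∈ range p) => by
      show B p v (j - p + ((i : ℕ) + 1 : ℕ)) t = B p v (j - p + 1 + (i : ℕ)) t
      congr 1; push_cast; ring)]
    push_cast
    rw [add_zero, mul_comm]
  have hM1 : M p c₁ c₂ v (j - p + 1) t
      = (∏ i ∈ range p, A p c₁ c₂ v (j - p + 1 + i) t)
        / (∏ i ∈ range p, B p v (j - p + 1 + i) t) := by
    rw [M, ← Finset.prod_div_distrib]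
    exact Finset.prod_congr rfl (fun i _ => by rw [m])
  have hTdiff : T p c₁ c₂ v (j - p + 1) t - T p c₁ c₂ v (j - p) t
      = M p c₁ c₂ v (j - p + 1) t
        * (A p c₁ c₂ v (j + 1) t - m p c₁ c₂ v (j - p) t * B p v j t) := by
    have h1 : T p c₁ c₂ v (j - p + 1) t
        = M p c₁ c₂ v (j - p + 1) t * A p c₁ c₂ v (j + 1) t := by
      rw [T, N_last]
      rw [show j - (p : ℤ) + 1 + p = j + 1 by ring]
      rw [mul_assoc, m, div_mul_cancel₀ _ (B_ne p v hne (j + 1) t)]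
    have h2 : T p c₁ c₂ v (j - p) t
        = m p c₁ c₂ v (j - p) t * M p c₁ c₂ v (j - p + 1) t * B p v j t := by
      rw [T, N_first]
      rw [show j - (p : ℤ) + p = j by ring]
    rw [h1, h2]; ring
  have hBne : B p v (j - p) t ≠ 0 := B_ne p v hne (j - p) t
  have hCne : (∏ i ∈ range p, B p v (j - p + 1 + i) t) ≠ 0 :=
    Finset.prod_ne_zero_iff.mpr (fun i _ => B_ne p v hne _ t)
  have e : v j t * (c₂ - c₁ * v j t)
            * ((∏ i ∈ Finset.range p, v (j - (i + 1)) t)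
                - ∏ i ∈ Finset.range p, v (j + (i + 1)) t)
            * (∏ i ∈ Finset.range p,
                (c₂ * (∏ k ∈ Finset.range p, v (j + i + 1 - p + k) t) - c₁))
          / ∏ i ∈ Finset.range (p + 1),
              (-1 + ∏ k ∈ Finset.range (p + 1), v (j + i - p + k) t)
      = v j t * (T p c₁ c₂ v (j - p + 1) t - T p c₁ c₂ v (j - p) t) := by
    rw [hq1, hq2, ha', hden, hsplit, hTdiff, hM1]
    rw [mul_assoc (v j t) (c₂ - c₁ * v j t), key_loc, m]
    field_simp
  rw [← e]
  exact h

variable (hv : ∀ (n : ℤ) (t : ℝ),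
      HasDerivAt (v n)
        (v n t * (c₂ - c₁ * v n t)
            * ((∏ i ∈ Finset.range p, v (n - (i + 1)) t)
                - ∏ i ∈ Finset.range p, v (n + (i + 1)) t)
            * (∏ i ∈ Finset.range p,
                (c₂ * (∏ j ∈ Finset.range p, v (n + i + 1 - p + j) t) - c₁))
          / ∏ i ∈ Finset.range (p + 1),
              (-1 + ∏ j ∈ Finset.range (p + 1), v (n + i - p + j) t)) t)

include hne hv in
lemma hQd (j : ℤ) (t : ℝ) :
    HasDerivAt (Q p v j)
      (Q p v j t * (T p c₁ c₂ v j t - T p c₁ c₂ v (j - p) t)) t := by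
  have h := HasDerivAt.finset_prod (𝕜 := ℝ) (u := range p)
    (f := fun l (s : ℝ) => v (j + l) s)
    (f' := fun l => v (j + l) t
      * (T p c₁ c₂ v (j + l - p + 1) t - T p c₁ c₂ v (j + l - p) t))
    (x := t) (fun l _ => hvT p c₁ c₂ v hne hv (j + l) t)
  have e1 : ∀ i ∈ range p, (∏ l ∈ (range p).erase i, v (j + l) t) •
      (v (j + i) t * (T p c₁ c₂ v (j + i - p + 1) t - T p c₁ c₂ v (j + i - p) t))
      = Q p v j t * (T p c₁ c₂ v (j - p + ((i : ℕ) + 1 : ℕ)) t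
          - T p c₁ c₂ v (j - p + i) t) := by
    intro i hi
    rw [smul_eq_mul, ← mul_assoc,
      Finset.prod_erase_mul _ _ hi, ← Q]
    congr 3
    · push_cast; ring
    · ring
  have e : (∑ i ∈ range p, (∏ l ∈ (range p).erase i, v (j + l) t) •
      (v (j + i) t * (T p c₁ c₂ v (j + i - p + 1) t - T p c₁ c₂ v (j + i - p) t)))
      = Q p v j t * (T p c₁ c₂ v j t - T p c₁ c₂ v (j - p) t) := by
    rw [Finset.sum_congr rfl e1, ← Finset.mul_sum]
    congr 1
    have hs := Finset.sum_range_sub (f := fun k => T p c₁ c₂ v (j - p + k) t) (n := p)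
    rw [hs]
    congr 2
    · ring
    · push_cast; ring
  rw [Finset.prod_fn] at h
  exact e ▸ h

include hne hv in
lemma hPpd (j : ℤ) (t : ℝ) :
    HasDerivAt (Pp p v j)
      (Pp p v j t * (T p c₁ c₂ v (j + 1) t - T p c₁ c₂ v (j - p) t)) t := by
  have h := HasDerivAt.finset_prod (𝕜 := ℝ) (u := range (p + 1))
    (f := fun l (s : ℝ) => v (j + l) s)
    (f' := fun l => v (j + l) t
      * (T p c₁ c₂ v (j + l - p + 1) t - T p c₁ c₂ v (j + l - p) t))
    (x := t) (fun l _ => hvT p c₁ c₂ v hne hv (j + l) t)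
  have e1 : ∀ i ∈ range (p + 1), (∏ l ∈ (range (p + 1)).erase i, v (j + l) t) •
      (v (j + i) t * (T p c₁ c₂ v (j + i - p + 1) t - T p c₁ c₂ v (j + i - p) t))
      = Pp p v j t * (T p c₁ c₂ v (j - p + ((i : ℕ) + 1 : ℕ)) t
          - T p c₁ c₂ v (j - p + i) t) := by
    intro i hi
    rw [smul_eq_mul, ← mul_assoc,
      Finset.prod_erase_mul _ _ hi, ← Pp]
    congr 3
    · push_cast; ring
    · ring
  have e : (∑ i ∈ range (p + 1), (∏ l ∈ (range (p + 1)).erase i, v (j + l) t) •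
      (v (j + i) t * (T p c₁ c₂ v (j + i - p + 1) t - T p c₁ c₂ v (j + i - p) t)))
      = Pp p v j t * (T p c₁ c₂ v (j + 1) t - T p c₁ c₂ v (j - p) t) := by
    rw [Finset.sum_congr rfl e1, ← Finset.mul_sum]
    congr 1
    have hs := Finset.sum_range_sub (f := fun k => T p c₁ c₂ v (j - p + k) t) (n := p + 1)
    rw [hs]
    congr 2
    · push_cast; ring
    · push_cast; ring
  rw [Finset.prod_fn] at h
  exact e ▸ h

include hne hv in
lemma hmd (j : ℤ) (t : ℝ) :
    HasDerivAt (m p c₁ c₂ v j)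
      (m p c₁ c₂ v j t * (c₁ - m p c₁ c₂ v j t)
        * (M p c₁ c₂ v (j + 1) t - M p c₁ c₂ v (j - p) t)) t := by
  have hA : HasDerivAt (A p c₁ c₂ v j)
      (c₂ * (Q p v j t * (T p c₁ c₂ v j t - T p c₁ c₂ v (j - p) t))) t :=
    ((hQd p c₁ c₂ v hne hv j t).const_mul c₂).sub_const c₁
  have hB : HasDerivAt (B p v j)
      (Pp p v j t * (T p c₁ c₂ v (j + 1) t - T p c₁ c₂ v (j - p) t)) t :=
    (hPpd p c₁ c₂ v hne hv j t).const_add (-1)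
  have hdiv := hA.div hB (B_ne p v hne j t)
  have hT0 : T p c₁ c₂ v j t
      = A p c₁ c₂ v j t / B p v j t * M p c₁ c₂ v (j + 1) t * B p v (j + p) t := by
    rw [T, N_first, m]
  have hT1 : T p c₁ c₂ v (j + 1) t
      = M p c₁ c₂ v (j + 1) t * A p c₁ c₂ v (j + p + 1) t := by
    rw [T, N_last, show j + 1 + (p : ℤ) = j + p + 1 by ring, mul_assoc, m,
      div_mul_cancel₀ _ (B_ne p v hne (j + p + 1) t)]
  have hTm : T p c₁ c₂ v (j - p) t
      = M p c₁ c₂ v (j - p) t * A p c₁ c₂ v j t := by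
    rw [T, N_last, show j - (p : ℤ) + p = j by ring, mul_assoc, m,
      div_mul_cancel₀ _ (B_ne p v hne j t)]
  have hrel : (A p c₁ c₂ v j t + c₁) * (1 + B p v (j + p) t)
      = (1 + B p v j t) * (A p c₁ c₂ v (j + p + 1) t + c₁) := by
    have h1 : A p c₁ c₂ v j t + c₁ = c₂ * Q p v j t := by rw [A]; ring
    have h2 : A p c₁ c₂ v (j + p + 1) t + c₁ = c₂ * Q p v (j + p + 1) t := by
      rw [A]; ring
    have h3 : (1 : ℂ) + B p v j t = Pp p v j t := by rw [B]; ring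
    have h4 : (1 : ℂ) + B p v (j + p) t = Pp p v (j + p) t := by rw [B]; ring
    rw [h1, h2, h3, h4, Pp_last p v j, Pp_first p v (j + p)]
    ring
  have hc2q : c₂ * (Q p v j t * (T p c₁ c₂ v j t - T p c₁ c₂ v (j - p) t))
      = (A p c₁ c₂ v j t + c₁) * (T p c₁ c₂ v j t - T p c₁ c₂ v (j - p) t) := by
    rw [A]; ring
  have hPpB : Pp p v j t = 1 + B p v j t := by rw [B]; ring
  have e : (c₂ * (Q p v j t * (T p c₁ c₂ v j t - T p c₁ c₂ v (j - p) t)) * B p v j t -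
        A p c₁ c₂ v j t * (Pp p v j t * (T p c₁ c₂ v (j + 1) t - T p c₁ c₂ v (j - p) t))) /
      B p v j t ^ 2
      = m p c₁ c₂ v j t * (c₁ - m p c₁ c₂ v j t)
        * (M p c₁ c₂ v (j + 1) t - M p c₁ c₂ v (j - p) t) := by
    rw [hc2q, hPpB, hT0, hT1, hTm, m]
    have hBne := B_ne p v hne j t
    field_simp
    linear_combination (A p c₁ c₂ v j t * M p c₁ c₂ v (j + 1) t) * hrel
  exact e ▸ hdiv

include hne hv in
lemma hMd (j : ℤ) (t : ℝ) :
    HasDerivAt (M p c₁ c₂ v j)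
      (M p c₁ c₂ v j t * ∑ i ∈ range p,
        ((c₁ - m p c₁ c₂ v (j + i) t)
          * (M p c₁ c₂ v (j + i + 1) t - M p c₁ c₂ v (j + i - p) t))) t := by
  have h := HasDerivAt.finset_prod (𝕜 := ℝ) (u := range p)
    (f := fun l (s : ℝ) => m p c₁ c₂ v (j + l) s)
    (f' := fun l => m p c₁ c₂ v (j + l) t * (c₁ - m p c₁ c₂ v (j + l) t)
      * (M p c₁ c₂ v (j + l + 1) t - M p c₁ c₂ v (j + l - p) t))
    (x := t) (fun l _ => hmd p c₁ c₂ v hne hv (j + l) t)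
  have e1 : ∀ i ∈ range p, (∏ l ∈ (range p).erase i, m p c₁ c₂ v (j + l) t) •
      (m p c₁ c₂ v (j + i) t * (c₁ - m p c₁ c₂ v (j + i) t)
        * (M p c₁ c₂ v (j + i + 1) t - M p c₁ c₂ v (j + i - p) t))
      = M p c₁ c₂ v j t * ((c₁ - m p c₁ c₂ v (j + i) t)
          * (M p c₁ c₂ v (j + i + 1) t - M p c₁ c₂ v (j + i - p) t)) := by
    intro i hi
    have hM : (∏ l ∈ (range p).erase i, m p c₁ c₂ v (j + l) t) * m p c₁ c₂ v (j + i) t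
        = M p c₁ c₂ v j t := by
      rw [M]; exact Finset.prod_erase_mul _ _ hi
    rw [smul_eq_mul, ← hM]
    ring
  have e : (∑ i ∈ range p, (∏ l ∈ (range p).erase i, m p c₁ c₂ v (j + l) t) •
      (m p c₁ c₂ v (j + i) t * (c₁ - m p c₁ c₂ v (j + i) t)
        * (M p c₁ c₂ v (j + i + 1) t - M p c₁ c₂ v (j + i - p) t)))
      = M p c₁ c₂ v j t * ∑ i ∈ range p,
        ((c₁ - m p c₁ c₂ v (j + i) t)
          * (M p c₁ c₂ v (j + i + 1) t - M p c₁ c₂ v (j + i - p) t)) := by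
    rw [Finset.sum_congr rfl e1, ← Finset.mul_sum]
  rw [Finset.prod_fn] at h
  exact e ▸ h

include hne hv in
lemma hNd (j : ℤ) (t : ℝ) :
    HasDerivAt (N p c₁ c₂ v j)
      (N p c₁ c₂ v j t * ∑ i ∈ range (p + 1),
        ((c₁ - m p c₁ c₂ v (j + i) t)
          * (M p c₁ c₂ v (j + i + 1) t - M p c₁ c₂ v (j + i - p) t))) t := by
  have h := HasDerivAt.finset_prod (𝕜 := ℝ) (u := range (p + 1))
    (f := fun l (s : ℝ) => m p c₁ c₂ v (j + l) s)
    (f' := fun l => m p c₁ c₂ v (j + l) t * (c₁ - m p c₁ c₂ v (j + l) t)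
      * (M p c₁ c₂ v (j + l + 1) t - M p c₁ c₂ v (j + l - p) t))
    (x := t) (fun l _ => hmd p c₁ c₂ v hne hv (j + l) t)
  have e1 : ∀ i ∈ range (p + 1), (∏ l ∈ (range (p + 1)).erase i, m p c₁ c₂ v (j + l) t) •
      (m p c₁ c₂ v (j + i) t * (c₁ - m p c₁ c₂ v (j + i) t)
        * (M p c₁ c₂ v (j + i + 1) t - M p c₁ c₂ v (j + i - p) t))
      = N p c₁ c₂ v j t * ((c₁ - m p c₁ c₂ v (j + i) t)
          * (M p c₁ c₂ v (j + i + 1) t - M p c₁ c₂ v (j + i - p) t)) := by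
    intro i hi
    have hN : (∏ l ∈ (range (p + 1)).erase i, m p c₁ c₂ v (j + l) t) * m p c₁ c₂ v (j + i) t
        = N p c₁ c₂ v j t := by
      rw [N]; exact Finset.prod_erase_mul _ _ hi
    rw [smul_eq_mul, ← hN]
    ring
  have e : (∑ i ∈ range (p + 1), (∏ l ∈ (range (p + 1)).erase i, m p c₁ c₂ v (j + l) t) •
      (m p c₁ c₂ v (j + i) t * (c₁ - m p c₁ c₂ v (j + i) t)
        * (M p c₁ c₂ v (j + i + 1) t - M p c₁ c₂ v (j + i - p) t)))
      = N p c₁ c₂ v j t * ∑ i ∈ range (p + 1),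
        ((c₁ - m p c₁ c₂ v (j + i) t)
          * (M p c₁ c₂ v (j + i + 1) t - M p c₁ c₂ v (j + i - p) t)) := by
    rw [Finset.sum_congr rfl e1, ← Finset.mul_sum]
  rw [Finset.prod_fn] at h
  exact e ▸ h

lemma MN_comm (n : ℤ) (t : ℝ) :
    M p c₁ c₂ v n t * N p c₁ c₂ v (n + p) t
      = N p c₁ c₂ v n t * M p c₁ c₂ v (n + p + 1) t := by
  have h1 := Finset.prod_range_add (fun l => m p c₁ c₂ v (n + l) t) p (p + 1)
  have h2 := Finset.prod_range_add (fun l => m p c₁ c₂ v (n + l) t) (p + 1) p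
  have e1 : (∏ x ∈ range (p + 1), m p c₁ c₂ v (n + (p + x : ℕ)) t)
      = N p c₁ c₂ v (n + p) t := by
    rw [N]
    exact Finset.prod_congr rfl (fun x _ => by congr 1; push_cast; ring)
  have e2 : (∏ x ∈ range p, m p c₁ c₂ v (n + ((p + 1) + x : ℕ)) t)
      = M p c₁ c₂ v (n + p + 1) t := by
    rw [M]
    exact Finset.prod_congr rfl (fun x _ => by congr 1; push_cast; ring)
  rw [e1] at h1
  rw [e2] at h2
  rw [show p + (p + 1) = (p + 1) + p by ring] at h1
  exact h1.symm.trans h2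

include hne hv in
lemma hUd (n : ℤ) (t : ℝ) :
    HasDerivAt (U p c₁ c₂ v n)
      (U p c₁ c₂ v n t * ((∑ k ∈ range p, U p c₁ c₂ v (n + (k + 1)) t)
          - ∑ k ∈ range p, U p c₁ c₂ v (n - (k + 1)) t)) t := by
  have h := ((hMd p c₁ c₂ v hne hv n t).const_mul c₁).sub (hNd p c₁ c₂ v hne hv n t)
  have hphi1 : ∀ k : ℤ,
      (c₁ - m p c₁ c₂ v k t) * (M p c₁ c₂ v (k + 1) t - M p c₁ c₂ v (k - p) t)
      = (U p c₁ c₂ v (k + 1) t + N p c₁ c₂ v (k + 1) t - N p c₁ c₂ v k t)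
        - U p c₁ c₂ v (k - p) t := by
    intro k
    simp only [U]
    rw [N_first p c₁ c₂ v k, N_last p c₁ c₂ v (k - p),
      show k - (p : ℤ) + p = k by ring]
    ring
  have hphi2 : ∀ k : ℤ,
      (c₁ - m p c₁ c₂ v k t) * (M p c₁ c₂ v (k + 1) t - M p c₁ c₂ v (k - p) t)
      = (U p c₁ c₂ v k t + c₁ * M p c₁ c₂ v (k + 1) t - c₁ * M p c₁ c₂ v k t)
        - U p c₁ c₂ v (k - p) t := by
    intro k
    simp only [U]
    rw [N_first p c₁ c₂ v k, N_last p c₁ c₂ v (k - p),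
      show k - (p : ℤ) + p = k by ring]
    ring
  have hS1 : (∑ i ∈ range p, ((c₁ - m p c₁ c₂ v (n + i) t)
        * (M p c₁ c₂ v (n + i + 1) t - M p c₁ c₂ v (n + i - p) t)))
      = ((∑ k ∈ range p, U p c₁ c₂ v (n + (k + 1)) t) + (N p c₁ c₂ v (n + p) t - N p c₁ c₂ v n t))
        - ∑ i ∈ range p, U p c₁ c₂ v (n + i - p) t := by
    rw [Finset.sum_congr rfl (fun i (_ : i ∈ range p) => hphi1 (n + i)),
      Finset.sum_sub_distrib]
    congr 1
    rw [Finset.sum_sub_distrib, Finset.sum_add_distrib]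
    have hU' : (∑ i ∈ range p, U p c₁ c₂ v (n + i + 1) t)
        = ∑ k ∈ range p, U p c₁ c₂ v (n + (k + 1)) t :=
      Finset.sum_congr rfl (fun i _ => by congr 1; ring)
    have hNN : (∑ i ∈ range p, N p c₁ c₂ v (n + i + 1) t)
        - (∑ i ∈ range p, N p c₁ c₂ v (n + i) t)
        = N p c₁ c₂ v (n + p) t - N p c₁ c₂ v n t := by
      rw [← Finset.sum_sub_distrib]
      calc (∑ i ∈ range p, (N p c₁ c₂ v (n + i + 1) t - N p c₁ c₂ v (n + i) t))
          = ∑ i ∈ range p, (N p c₁ c₂ v (n + ((i + 1 : ℕ) : ℤ)) t - N p c₁ c₂ v (n + i) t) :=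
            Finset.sum_congr rfl (fun i _ => by
              rw [show n + (i : ℤ) + 1 = n + ((i + 1 : ℕ) : ℤ) by push_cast; ring])
        _ = N p c₁ c₂ v (n + ((p : ℕ) : ℤ)) t - N p c₁ c₂ v (n + ((0 : ℕ) : ℤ)) t :=
            Finset.sum_range_sub (fun k => N p c₁ c₂ v (n + k) t) p
        _ = N p c₁ c₂ v (n + p) t - N p c₁ c₂ v n t := by norm_num
    rw [hU']
    linear_combination hNN
  have hS2 : (∑ i ∈ range (p + 1), ((c₁ - m p c₁ c₂ v (n + i) t)
        * (M p c₁ c₂ v (n + i + 1) t - M p c₁ c₂ v (n + i - p) t)))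
      = ((U p c₁ c₂ v n t + ∑ k ∈ range p, U p c₁ c₂ v (n + (k + 1)) t)
          + (c₁ * M p c₁ c₂ v (n + p + 1) t - c₁ * M p c₁ c₂ v n t))
        - ((∑ i ∈ range p, U p c₁ c₂ v (n + i - p) t) + U p c₁ c₂ v n t) := by
    rw [Finset.sum_congr rfl (fun i (_ : i ∈ range (p + 1)) => hphi2 (n + i)),
      Finset.sum_sub_distrib]
    congr 1
    · rw [Finset.sum_sub_distrib, Finset.sum_add_distrib]
      have hU0 : (∑ i ∈ range (p + 1), U p c₁ c₂ v (n + i) t)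
          = U p c₁ c₂ v n t + ∑ k ∈ range p, U p c₁ c₂ v (n + (k + 1)) t := by
        rw [Finset.sum_range_succ']
        rw [Finset.sum_congr rfl (fun i (_ : i ∈ range p) => by
          show U p c₁ c₂ v (n + ((i : ℕ) + 1 : ℕ)) t = U p c₁ c₂ v (n + ((i : ℤ) + 1)) t
          congr 1)]
        push_cast
        rw [add_zero, add_comm]
      have hMM : (∑ i ∈ range (p + 1), c₁ * M p c₁ c₂ v (n + i + 1) t)
          - (∑ i ∈ range (p + 1), c₁ * M p c₁ c₂ v (n + i) t)
          = c₁ * M p c₁ c₂ v (n + p + 1) t - c₁ * M p c₁ c₂ v n t := by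
        rw [← Finset.sum_sub_distrib]
        calc (∑ i ∈ range (p + 1), (c₁ * M p c₁ c₂ v (n + i + 1) t - c₁ * M p c₁ c₂ v (n + i) t))
            = ∑ i ∈ range (p + 1),
                (c₁ * M p c₁ c₂ v (n + ((i + 1 : ℕ) : ℤ)) t - c₁ * M p c₁ c₂ v (n + i) t) :=
              Finset.sum_congr rfl (fun i _ => by
                rw [show n + (i : ℤ) + 1 = n + ((i + 1 : ℕ) : ℤ) by push_cast; ring])
          _ = c₁ * M p c₁ c₂ v (n + ((p + 1 : ℕ) : ℤ)) t - c₁ * M p c₁ c₂ v (n + ((0 : ℕ) : ℤ)) t :=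
              Finset.sum_range_sub (fun k => c₁ * M p c₁ c₂ v (n + k) t) (p + 1)
          _ = c₁ * M p c₁ c₂ v (n + p + 1) t - c₁ * M p c₁ c₂ v n t := by
              push_cast
              rw [add_zero, show n + ((p : ℤ) + 1) = n + p + 1 by ring]
      rw [hU0]
      linear_combination hMM
    · rw [Finset.sum_range_succ, show n + (p : ℤ) - p = n by ring]
  have hrefl : (∑ i ∈ range p, U p c₁ c₂ v (n + i - p) t)
      = ∑ k ∈ range p, U p c₁ c₂ v (n - (k + 1)) t := by
    rw [← Finset.sum_range_reflect]
    exact Finset.sum_congr rfl (fun i hi => by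
      have hip := Finset.mem_range.mp hi
      congr 1; omega)
  have hMN := MN_comm p c₁ c₂ v n t
  have hUn : U p c₁ c₂ v n t = c₁ * M p c₁ c₂ v n t - N p c₁ c₂ v n t := by rw [U]
  have e : c₁ * (M p c₁ c₂ v n t * ∑ i ∈ range p,
        ((c₁ - m p c₁ c₂ v (n + i) t)
          * (M p c₁ c₂ v (n + i + 1) t - M p c₁ c₂ v (n + i - p) t)))
      - N p c₁ c₂ v n t * ∑ i ∈ range (p + 1),
        ((c₁ - m p c₁ c₂ v (n + i) t)
          * (M p c₁ c₂ v (n + i + 1) t - M p c₁ c₂ v (n + i - p) t))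
      = U p c₁ c₂ v n t * ((∑ k ∈ range p, U p c₁ c₂ v (n + (k + 1)) t)
          - ∑ k ∈ range p, U p c₁ c₂ v (n - (k + 1)) t) := by
    rw [hS1, hS2, hrefl, hUn]
    linear_combination c₁ * hMN
  exact e ▸ h

include hne in
lemma u_eq_U (u : ℤ → ℝ → ℂ)
    (hu : ∀ (n : ℤ) (t : ℝ),
      u n t = (c₁ * v (n + 2 * p) t - c₂)
          * (∏ j ∈ Finset.range p, v (n + p + j) t)
          * (∏ i ∈ Finset.range p,
              (c₂ * (∏ j ∈ Finset.range p, v (n + i + j) t) - c₁))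
        / ∏ i ∈ Finset.range (p + 1),
            (-1 + ∏ j ∈ Finset.range (p + 1), v (n + i + j) t))
    (n : ℤ) (t : ℝ) : u n t = U p c₁ c₂ v n t := by
  rw [hu n t]
  have hq : (∏ k ∈ range p, v (n + p + k) t) = Q p v (n + p) t := rfl
  have ha : (∏ i ∈ range p, (c₂ * (∏ k ∈ range p, v (n + i + k) t) - c₁))
      = ∏ i ∈ range p, A p c₁ c₂ v (n + i) t := rfl
  have hb : (∏ i ∈ range (p + 1), (-1 + ∏ k ∈ range (p + 1), v (n + i + k) t))
      = ∏ i ∈ range (p + 1), B p v (n + i) t := rfl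
  rw [hq, ha, hb, Finset.prod_range_succ]
  have hUn : U p c₁ c₂ v n t
      = (c₁ - m p c₁ c₂ v (n + p) t) * M p c₁ c₂ v n t := by
    rw [U, N_last]; ring
  have hMn : M p c₁ c₂ v n t
      = (∏ i ∈ range p, A p c₁ c₂ v (n + i) t) / (∏ i ∈ range p, B p v (n + i) t) := by
    rw [M, ← Finset.prod_div_distrib]
    exact Finset.prod_congr rfl (fun i _ => by rw [m])
  have hkey : c₁ * B p v (n + p) t - A p c₁ c₂ v (n + p) t
      = (c₁ * v (n + 2 * p) t - c₂) * Q p v (n + p) t := by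
    rw [A, B, Pp_last, show n + (p : ℤ) + p = n + 2 * p by ring]
    ring
  rw [hUn, hMn, m]
  have h1 : B p v (n + p) t ≠ 0 := B_ne p v hne (n + p) t
  have h2 : (∏ i ∈ range p, B p v (n + i) t) ≠ 0 :=
    Finset.prod_ne_zero_iff.mpr (fun i _ => B_ne p v hne _ t)
  field_simp
  linear_combination (-(∏ i ∈ range p, A p c₁ c₂ v (n + i) t)) * hkey

end NIBAux


/-- For arbitrary `p ∈ ℤ_{>0}` and `c₁, c₂ ∈ ℂ`, the formula
`u = (c₁v_{2p} − c₂)(∏_{j=p}^{2p−1} v_j)·∏_{i=0}^{p−1}(c₂(∏_{j=i}^{i+p−1} v_j) − c₁)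
     / ∏_{i=0}^{p}(−1 + ∏_{j=i}^{i+p} v_j)`
is a Miura-type transformation from the modified equation
`vₜ = v(c₂ − c₁v)(∏_{i=1}^p v_{−i} − ∏_{i=1}^p v_i)
      ·∏_{i=0}^{p−1}(c₂(∏_{j=i+1−p}^{i} v_j) − c₁) / ∏_{i=0}^{p}(−1 + ∏_{j=i−p}^{i} v_j)`
to the Narita–Itoh–Bogoyavlensky lattice
`uₜ = u(∑_{k=1}^p u_k − ∑_{k=1}^p u_{−k})`. -/
theorem miura_to_bogoyavlensky_general_p
    (p : ℕ) (hp : 0 < p) (c₁ c₂ : ℂ) (v : ℤ → ℝ → ℂ)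
    (hne : ∀ (i n : ℤ) (t : ℝ),
      (∏ j ∈ Finset.range (p + 1), v (n + i + j) t) ≠ 1)
    (hv : ∀ (n : ℤ) (t : ℝ),
      HasDerivAt (v n)
        (v n t * (c₂ - c₁ * v n t)
            * ((∏ i ∈ Finset.range p, v (n - (i + 1)) t)
                - ∏ i ∈ Finset.range p, v (n + (i + 1)) t)
            * (∏ i ∈ Finset.range p,
                (c₂ * (∏ j ∈ Finset.range p, v (n + i + 1 - p + j) t) - c₁))
          / ∏ i ∈ Finset.range (p + 1),
              (-1 + ∏ j ∈ Finset.range (p + 1), v (n + i - p + j) t)) t)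
    (u : ℤ → ℝ → ℂ)
    (hu : ∀ (n : ℤ) (t : ℝ),
      u n t = (c₁ * v (n + 2 * p) t - c₂)
          * (∏ j ∈ Finset.range p, v (n + p + j) t)
          * (∏ i ∈ Finset.range p,
              (c₂ * (∏ j ∈ Finset.range p, v (n + i + j) t) - c₁))
        / ∏ i ∈ Finset.range (p + 1),
            (-1 + ∏ j ∈ Finset.range (p + 1), v (n + i + j) t)) :
    ∀ (n : ℤ) (t : ℝ),
      HasDerivAt (u n)
        (u n t * ((∑ k ∈ Finset.range p, u (n + (k + 1)) t)
            - ∑ k ∈ Finset.range p, u (n - (k + 1)) t)) t := by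
  intro n t
  have hUeq : ∀ (k : ℤ) (s : ℝ), u k s = NIBAux.U p c₁ c₂ v k s :=
    fun k s => NIBAux.u_eq_U p c₁ c₂ v hne u hu k s
  have hfun : u n = NIBAux.U p c₁ c₂ v n := funext (hUeq n)
  rw [hfun]
  simp only [hUeq]
  exact NIBAux.hUd p c₁ c₂ v hne hv n t
end

section
/- Fix p ∈ ℤ_{>0} and α, β ∈ ℂ. Let w : ℤ → ℝ → ℂ be t-differentiable, satisfying for all n, t: ∂_t w(n,t) = w(n,t)·(α + β·w(n,t))·(∏_{i=1}^p w(n+i,t) − ∏_{i=1}^p w(n−i,t)). Define u(n,t) := (α + β·w(n+p,t))·∏_{i=0}^{p−1} w(n+i,t). Then u satisfies the Narita–Itoh–Bogoyavlensky lattice: ∂_t u(n,t) = u(n,t)·(∑_{k=1}^p u(n+k,t) − ∑_{k=1}^p u(n−k,t)) for all n and t. -/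
open Finset

private def Qf (W : ℤ → ℂ) (p : ℕ) (m : ℤ) : ℂ := ∏ i ∈ Finset.range p, W (m + i)

private def Rf (W : ℤ → ℂ) (p : ℕ) (m : ℤ) : ℂ := ∏ i ∈ Finset.range (p + 1), W (m + i)

private lemma Rf_eq1 (W : ℤ → ℂ) (p : ℕ) (m : ℤ) : Rf W p m = W m * Qf W p (m + 1) := by
  unfold Rf Qf
  rw [Finset.prod_range_succ']
  have : ∀ i ∈ Finset.range p, W (m + ((i : ℕ) + 1 : ℕ)) = W (m + 1 + i) := by
    intro i _; congr 1; push_cast; ring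
  rw [Finset.prod_congr rfl this]
  ring

private lemma Rf_eq2 (W : ℤ → ℂ) (p : ℕ) (m : ℤ) : Rf W p m = Qf W p m * W (m + p) := by
  unfold Rf Qf
  rw [Finset.prod_range_succ]

private lemma Qf_neg (W : ℤ → ℂ) (p : ℕ) (k : ℤ) :
    ∏ i ∈ Finset.range p, W (k - ((i : ℤ) + 1)) = Qf W p (k - p) := by
  unfold Qf
  rw [← Finset.prod_range_reflect]
  apply Finset.prod_congr rfl
  intro j hj
  have hj' : j < p := Finset.mem_range.mp hj
  congr 1
  omega

private lemma Qf_pos (W : ℤ → ℂ) (p : ℕ) (k : ℤ) :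
    ∏ i ∈ Finset.range p, W (k + ((i : ℤ) + 1)) = Qf W p (k + 1) := by
  unfold Qf
  apply Finset.prod_congr rfl
  intro j _
  congr 1
  ring

private lemma key_neg (W : ℤ → ℂ) (p : ℕ) (α β : ℂ) (n : ℤ) :
    ∑ k ∈ Finset.range p, (α + β * W (n - ((k : ℤ) + 1) + p)) * Qf W p (n - ((k : ℤ) + 1))
      = ∑ j ∈ Finset.range p, (α + β * W (n + j)) * Qf W p (n + j - p) := by
  rw [← Finset.sum_range_reflect]
  apply Finset.sum_congr rfl
  intro j hj
  have hj' : j < p := Finset.mem_range.mp hj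
  have h1 : n - ((((p - 1 - j : ℕ) : ℤ)) + 1) + p = n + j := by omega
  have h2 : n - ((((p - 1 - j : ℕ) : ℤ)) + 1) = n + j - p := by omega
  rw [h1, h2]

private lemma key_tele (W : ℤ → ℂ) (p : ℕ) (n : ℤ) :
    ∑ k ∈ Finset.range p, (Rf W p (n + (k + 1)) - Rf W p (n + k)) = Rf W p (n + p) - Rf W p n := by
  have h := Finset.sum_range_sub (fun i : ℕ => Rf W p (n + i)) p
  push_cast at h
  simpa using h

private lemma key_pos (W : ℤ → ℂ) (p : ℕ) (α β : ℂ) (n : ℤ) :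
    ∑ k ∈ Finset.range p, (α + β * W (n + ((k : ℤ) + 1) + p)) * Qf W p (n + ((k : ℤ) + 1))
      = β * W (n + p) * (Qf W p (n + p + 1) - Qf W p n)
        + ∑ j ∈ Finset.range p, (α + β * W (n + j)) * Qf W p (n + j + 1) := by
  have step : ∀ k ∈ Finset.range p,
      (α + β * W (n + ((k : ℤ) + 1) + p)) * Qf W p (n + ((k : ℤ) + 1))
        = (α + β * W (n + k)) * Qf W p (n + k + 1)
          + β * (Rf W p (n + ((k : ℤ) + 1)) - Rf W p (n + k)) := by
    intro k _
    have e1 : Rf W p (n + ((k : ℤ) + 1)) = Qf W p (n + ((k : ℤ) + 1)) * W (n + ((k : ℤ) + 1) + p) :=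
      Rf_eq2 W p _
    have e2 : Rf W p (n + k) = W (n + k) * Qf W p (n + k + 1) := Rf_eq1 W p _
    have e3 : Qf W p (n + ((k : ℤ) + 1)) = Qf W p (n + k + 1) := by rw [← add_assoc]
    rw [e1, e2, e3]
    ring
  rw [Finset.sum_congr rfl step, Finset.sum_add_distrib, ← Finset.mul_sum, key_tele,
    Rf_eq1 W p (n + p), Rf_eq2 W p n]
  ring

private lemma key_id (W : ℤ → ℂ) (p : ℕ) (α β : ℂ) (n : ℤ) :
    (∑ k ∈ Finset.range p, (α + β * W (n + ((k : ℤ) + 1) + p)) * Qf W p (n + ((k : ℤ) + 1)))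
      - ∑ k ∈ Finset.range p, (α + β * W (n - ((k : ℤ) + 1) + p)) * Qf W p (n - ((k : ℤ) + 1))
      = β * W (n + p) * (Qf W p (n + p + 1) - Qf W p n)
        + ∑ j ∈ Finset.range p,
            (α + β * W (n + j)) * (Qf W p (n + j + 1) - Qf W p (n + j - p)) := by
  rw [key_pos, key_neg]
  simp only [mul_sub, Finset.sum_sub_distrib]
  ring

/-- For `p ∈ ℤ_{>0}` and `α, β ∈ ℂ`, the formula
`u = (α + βw_p)·∏_{i=0}^{p−1} w_i`
is a Miura-type transformation from the equation
`wₜ = w(α + βw)(∏_{i=1}^p w_i − ∏_{i=1}^p w_{−i})`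
to the Narita–Itoh–Bogoyavlensky lattice
`uₜ = u(∑_{k=1}^p u_k − ∑_{k=1}^p u_{−k})`. -/
theorem miura_wtw_to_bogoyavlensky
    (p : ℕ) (hp : 0 < p) (α β : ℂ) (w : ℤ → ℝ → ℂ)
    (hw : ∀ (n : ℤ) (t : ℝ),
      HasDerivAt (w n)
        (w n t * (α + β * w n t)
          * ((∏ i ∈ Finset.range p, w (n + (i + 1)) t)
              - ∏ i ∈ Finset.range p, w (n - (i + 1)) t)) t)
    (u : ℤ → ℝ → ℂ)
    (hu : ∀ (n : ℤ) (t : ℝ),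
      u n t = (α + β * w (n + p) t) * ∏ i ∈ Finset.range p, w (n + i) t) :
    ∀ (n : ℤ) (t : ℝ),
      HasDerivAt (u n)
        (u n t * ((∑ k ∈ Finset.range p, u (n + (k + 1)) t)
            - ∑ k ∈ Finset.range p, u (n - (k + 1)) t)) t := by
  intro n t
  set W : ℤ → ℂ := fun m => w m t with hWdef
  -- rewritten form of the w-equation
  have hw' : ∀ k : ℤ, HasDerivAt (w k)
      (W k * (α + β * W k) * (Qf W p (k + 1) - Qf W p (k - p))) t := by
    intro k
    have h := hw k t
    rwa [show (∏ i ∈ Finset.range p, w (k + (i + 1)) t) = Qf W p (k + 1) from Qf_pos W p k,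
      show (∏ i ∈ Finset.range p, w (k - (i + 1)) t) = Qf W p (k - p) from Qf_neg W p k] at h
  -- derivative of the product part
  have hprod : HasDerivAt (fun s => ∏ i ∈ Finset.range p, w (n + i) s)
      (∑ i ∈ Finset.range p, (∏ j ∈ (Finset.range p).erase i, W (n + j)) •
        (W (n + i) * (α + β * W (n + i)) * (Qf W p (n + i + 1) - Qf W p (n + i - p)))) t :=
    HasDerivAt.fun_finsetProd (fun i _ => hw' (n + i))
  have hA : HasDerivAt (fun s => α + β * w (n + p) s)
      (β * (W (n + p) * (α + β * W (n + p)) * (Qf W p (n + p + 1) - Qf W p (n + p - p)))) t :=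
    ((hw' (n + p)).const_mul β).const_add α
  have hD := hA.mul hprod
  have hfun : u n = fun s => (α + β * w (n + p) s) * ∏ i ∈ Finset.range p, w (n + i) s := by
    funext s; exact hu n s
  rw [hfun]
  refine hD.congr_deriv (Eq.symm ?_)
  -- now prove the value equality
  have hsum : ∀ i ∈ Finset.range p,
      (∏ j ∈ (Finset.range p).erase i, W (n + j)) •
        (W (n + i) * (α + β * W (n + i)) * (Qf W p (n + i + 1) - Qf W p (n + i - p)))
      = Qf W p n * ((α + β * W (n + i)) * (Qf W p (n + i + 1) - Qf W p (n + i - p))) := by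
    intro i hi
    rw [smul_eq_mul, show Qf W p n = (∏ j ∈ (Finset.range p).erase i, W (n + j)) * W (n + i) from
      (Finset.prod_erase_mul _ _ hi).symm]
    ring
  rw [Finset.sum_congr rfl hsum, ← Finset.mul_sum]
  have hun : (fun s => (α + β * w (n + p) s) * ∏ i ∈ Finset.range p, w (n + i) s) t
      = (α + β * W (n + p)) * Qf W p n := rfl
  rw [hun]
  have h1 : ∀ k ∈ Finset.range p, u (n + ((k : ℤ) + 1)) t
      = (α + β * W (n + ((k : ℤ) + 1) + p)) * Qf W p (n + ((k : ℤ) + 1)) := by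
    intro k _; exact hu _ t
  have h2 : ∀ k ∈ Finset.range p, u (n - ((k : ℤ) + 1)) t
      = (α + β * W (n - ((k : ℤ) + 1) + p)) * Qf W p (n - ((k : ℤ) + 1)) := by
    intro k _; exact hu _ t
  rw [Finset.sum_congr rfl h1, Finset.sum_congr rfl h2, key_id W p α β n,
    show n + (p : ℤ) - p = n by ring]
  have hQn : (∏ i ∈ Finset.range p, w (n + (i : ℤ)) t) = Qf W p n := rfl
  rw [hQn]
  ring
end

section
/- Fix p ∈ ℤ_{>0} and α, β ∈ ℂ. Let v : ℤ → ℝ → ℂ be t-differentiable with 1 − β·∏_{i=0}^p v(n−i,t) ≠ 0 for all n, t, satisfying for all n, t: ∂_t v = v·(α + βv)·(∏_{i=1}^p v_i − ∏_{i=1}^p v_{−i})·∏_{j=1}^p(1 + α·∏_{i=1}^p v_{j−i}) / ∏_{j=0}^p(1 − β·∏_{i=0}^p v_{j−i}), where v_k(n,t) := v(n+k,t). Define w(n,t) := v(n,t)·(1 + α·∏_{i=1}^p v(n−i,t)) / (1 − β·∏_{i=0}^p v(n−i,t)). Then w satisfies ∂_t w(n,t) = w(n,t)·(α + β·w(n,t))·(∏_{i=1}^p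 w(n+i,t) − ∏_{i=1}^p w(n−i,t)) for all n and t. -/
noncomputable section MiuraAux

def mR (g : ℤ → ℂ) (a : ℤ) (q : ℕ) : ℂ := ∏ i ∈ Finset.range q, g (a + i)

lemma mR_succ_top (g : ℤ → ℂ) (a : ℤ) (q : ℕ) :
    mR g a (q + 1) = mR g a q * g (a + q) := by
  unfold mR; rw [Finset.prod_range_succ]

lemma mR_succ_bot (g : ℤ → ℂ) (a : ℤ) (q : ℕ) :
    mR g a (q + 1) = g a * mR g (a + 1) q := by
  unfold mR
  rw [Finset.prod_range_succ', mul_comm]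
  congr 1
  · norm_num
  · exact Finset.prod_congr rfl fun i _ => by push_cast; ring_nf

lemma prod_sub_eq (g : ℤ → ℂ) (m : ℤ) (q : ℕ) :
    ∏ i ∈ Finset.range q, g (m - (i + 1)) = mR g (m - q) q := by
  unfold mR
  rw [← Finset.prod_range_reflect]
  exact Finset.prod_congr rfl fun i hi => by
    have hi' := Finset.mem_range.1 hi
    congr 1
    omega

lemma prod_sub_eq' (g : ℤ → ℂ) (m : ℤ) (q : ℕ) :
    ∏ i ∈ Finset.range (q + 1), g (m - i) = mR g (m - q) (q + 1) := by
  unfold mR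
  rw [← Finset.prod_range_reflect]
  exact Finset.prod_congr rfl fun i hi => by
    have hi' := Finset.mem_range.1 hi
    congr 1
    omega

lemma prod_add_eq (g : ℤ → ℂ) (m : ℤ) (q : ℕ) :
    ∏ i ∈ Finset.range q, g (m + (i + 1)) = mR g (m + 1) q := by
  unfold mR
  exact Finset.prod_congr rfl fun i _ => by congr 1; push_cast; ring

def mP (p : ℕ) (v : ℤ → ℝ → ℂ) (t : ℝ) (m : ℤ) : ℂ :=
  ∏ i ∈ Finset.range p, v (m - (i + 1)) t

def mV (p : ℕ) (v : ℤ → ℝ → ℂ) (t : ℝ) (m : ℤ) : ℂ :=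
  ∏ i ∈ Finset.range p, v (m + (i + 1)) t

def mQ (p : ℕ) (v : ℤ → ℝ → ℂ) (t : ℝ) (m : ℤ) : ℂ :=
  ∏ i ∈ Finset.range (p + 1), v (m - i) t

def mA (α : ℂ) (p : ℕ) (v : ℤ → ℝ → ℂ) (t : ℝ) (m : ℤ) : ℂ :=
  1 + α * mP p v t m

def mB (β : ℂ) (p : ℕ) (v : ℤ → ℝ → ℂ) (t : ℝ) (m : ℤ) : ℂ :=
  1 - β * mQ p v t m

def mC (α : ℂ) (p : ℕ) (v : ℤ → ℝ → ℂ) (t : ℝ) (m : ℤ) : ℂ :=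
  ∏ j ∈ Finset.range p, mA α p v t (m + (j + 1))

def mD (β : ℂ) (p : ℕ) (v : ℤ → ℝ → ℂ) (t : ℝ) (m : ℤ) : ℂ :=
  ∏ j ∈ Finset.range (p + 1), mB β p v t (m + j)

def mh (α β : ℂ) (p : ℕ) (v : ℤ → ℝ → ℂ) (t : ℝ) (m : ℤ) : ℂ :=
  (α + β * v m t) * (mV p v t m - mP p v t m) * mC α p v t m / mD β p v t m

section keys

variable (α β : ℂ) (p : ℕ) (v : ℤ → ℝ → ℂ) (t : ℝ)

lemma mP_eq (m : ℤ) : mP p v t m = mR (fun k => v k t) (m - p) p :=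
  prod_sub_eq (fun k => v k t) m p

lemma mQ_eq (m : ℤ) : mQ p v t m = mR (fun k => v k t) (m - p) (p + 1) :=
  prod_sub_eq' (fun k => v k t) m p

lemma mV_eq (m : ℤ) : mV p v t m = mR (fun k => v k t) (m + 1) p :=
  prod_add_eq (fun k => v k t) m p

lemma mC_eq (m : ℤ) : mC α p v t m = mR (mA α p v t) (m + 1) p :=
  prod_add_eq _ m p

lemma mD_eq (m : ℤ) : mD β p v t m = mR (mB β p v t) m (p + 1) := rfl

-- key1 : A_{m+p+1} = 1 + α V_m
lemma key1 (m : ℤ) : mA α p v t (m + p + 1) = 1 + α * mV p v t m := by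
  unfold mA
  rw [mP_eq, mV_eq]
  have : m + (p : ℤ) + 1 - p = m + 1 := by ring
  rw [this]

-- key2 : B_{m+p} = 1 - β x_m V_m
lemma key2 (m : ℤ) : mB β p v t (m + p) = 1 - β * (v m t * mV p v t m) := by
  unfold mB
  rw [mQ_eq, mV_eq]
  have : m + (p : ℤ) - p = m := by ring
  rw [this, mR_succ_bot]

-- key3 : Q_m = x_m P_m
lemma key3 (m : ℤ) : mQ p v t m = v m t * mP p v t m := by
  rw [mQ_eq, mP_eq, mR_succ_top]
  have : m - (p : ℤ) + p = m := by ring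
  rw [this, mul_comm]

-- key4 : A_{m+1} C_{m+1} = C_m A_{m+p+1}
lemma key4 (m : ℤ) :
    mA α p v t (m + 1) * mC α p v t (m + 1) = mC α p v t m * mA α p v t (m + p + 1) := by
  rw [mC_eq, mC_eq]
  have h1 : m + 1 + (1 : ℤ) = m + 1 + 1 := rfl
  rw [show (mA α p v t (m+1) * mR (mA α p v t) (m+1+1) p)
      = mR (mA α p v t) (m+1) (p+1) from (mR_succ_bot _ _ _).symm]
  rw [mR_succ_top]
  have : m + 1 + (p : ℤ) = m + p + 1 := by ring
  rw [this]

-- key5 : D_m B_{m+p+1} = D_{m+1} B_m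
lemma key5 (m : ℤ) :
    mD β p v t m * mB β p v t (m + p + 1) = mD β p v t (m + 1) * mB β p v t m := by
  rw [mD_eq, mD_eq]
  have h1 : mR (mB β p v t) m (p + 1 + 1) = mR (mB β p v t) m (p + 1) * mB β p v t (m + (p + 1 : ℕ)) :=
    mR_succ_top _ _ _
  have h2 : mR (mB β p v t) m (p + 1 + 1) = mB β p v t m * mR (mB β p v t) (m + 1) (p + 1) :=
    mR_succ_bot _ _ _
  have h3 : (m + ((p : ℤ) + 1)) = m + p + 1 := by ring
  push_cast at h1
  rw [h3] at h1
  calc mR (mB β p v t) m (p + 1) * mB β p v t (m + p + 1)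
      = mR (mB β p v t) m (p + 1 + 1) := h1.symm
    _ = mB β p v t m * mR (mB β p v t) (m + 1) (p + 1) := h2
    _ = mR (mB β p v t) (m + 1) (p + 1) * mB β p v t m := mul_comm _ _

-- key6 : A_m C_{m-p-1} = A_{m-p} C_{m-p}
lemma key6 (m : ℤ) :
    mA α p v t m * mC α p v t (m - p - 1) = mA α p v t (m - p) * mC α p v t (m - p) := by
  rw [mC_eq, mC_eq]
  have h3 : m - (p : ℤ) - 1 + 1 = m - p := by ring
  rw [h3]
  have h1 : mR (mA α p v t) (m - p) (p + 1) = mR (mA α p v t) (m - p) p * mA α p v t (m - p + p) :=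
    mR_succ_top _ _ _
  have h2 : mR (mA α p v t) (m - p) (p + 1) = mA α p v t (m - p) * mR (mA α p v t) (m - p + 1) p :=
    mR_succ_bot _ _ _
  have h4 : m - (p : ℤ) + p = m := by ring
  rw [h4] at h1
  calc mA α p v t m * mR (mA α p v t) (m - p) p
      = mR (mA α p v t) (m - p) (p + 1) := by rw [h1]; ring
    _ = mA α p v t (m - p) * mR (mA α p v t) (m - p + 1) p := h2


-- F_m := A_m C_m B_{m+p} / D_m, the telescoping potential
def mF' (m : ℤ) : ℂ :=
  mA α p v t m * mC α p v t m * mB β p v t (m + p) / mD β p v t m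

lemma mD_ne (hB : ∀ m : ℤ, mB β p v t m ≠ 0) (m : ℤ) : mD β p v t m ≠ 0 := by
  unfold mD
  exact Finset.prod_ne_zero_iff.2 fun j _ => hB _

lemma hF1 (hB : ∀ m : ℤ, mB β p v t m ≠ 0) (m : ℤ) :
    mF' α β p v t (m + 1)
      = mC α p v t m * mA α p v t (m + p + 1) * mB β p v t m / mD β p v t m := by
  unfold mF'
  rw [div_eq_div_iff (mD_ne β p v t hB (m + 1)) (mD_ne β p v t hB m)]
  have h4 := key4 α p v t m
  have h5 := key5 β p v t m
  have harg : m + 1 + (p : ℤ) = m + (p : ℤ) + 1 := by ring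
  rw [harg]
  linear_combination (mB β p v t (m + p + 1) * mD β p v t m) * h4
    + (mC α p v t m * mA α p v t (m + p + 1)) * h5

lemma htel (hB : ∀ m : ℤ, mB β p v t m ≠ 0) (m : ℤ) :
    mh α β p v t m = mF' α β p v t (m + 1) - mF' α β p v t m := by
  rw [hF1 α β p v t hB m]
  unfold mF' mh
  rw [div_sub_div_same]
  congr 1
  rw [key1, key2]
  unfold mA mB
  rw [key3]
  ring


lemma hSum (hB : ∀ m : ℤ, mB β p v t m ≠ 0) (n : ℤ) :
    (∑ i ∈ Finset.range p, mh α β p v t (n - (i + 1)))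
      = mF' α β p v t n - mF' α β p v t (n - p) := by
  have step1 : (∑ i ∈ Finset.range p, mh α β p v t (n - (i + 1)))
      = ∑ i ∈ Finset.range p, mh α β p v t (n - p + i) := by
    rw [← Finset.sum_range_reflect (fun i => mh α β p v t (n - p + i)) p]
    refine Finset.sum_congr rfl fun i hi => ?_
    have hi' := Finset.mem_range.1 hi
    congr 1
    omega
  rw [step1]
  calc ∑ i ∈ Finset.range p, mh α β p v t (n - p + i)
      = ∑ i ∈ Finset.range p,
          (mF' α β p v t (n - p + (i + 1 : ℕ)) - mF' α β p v t (n - p + i)) := by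
        refine Finset.sum_congr rfl fun i _ => ?_
        rw [htel α β p v t hB (n - p + i)]
        have e : ((n : ℤ) - p + ((i : ℕ) + 1 : ℕ)) = n - p + i + 1 := by push_cast; ring
        rw [e]
    _ = mF' α β p v t (n - p + (p : ℕ)) - mF' α β p v t (n - p + (0 : ℕ)) :=
        Finset.sum_range_sub (fun j : ℕ => mF' α β p v t (n - p + j)) p
    _ = mF' α β p v t n - mF' α β p v t (n - p) := by norm_num

lemma hSum0 (n : ℤ) :
    (∑ i ∈ Finset.range (p + 1), mh α β p v t (n - i))
      = mh α β p v t n + ∑ i ∈ Finset.range p, mh α β p v t (n - (i + 1)) := by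
  rw [Finset.sum_range_succ' (fun i : ℕ => mh α β p v t (n - i)) p, add_comm]
  have e0 : n - ((0 : ℕ) : ℤ) = n := by norm_num
  rw [e0]
  congr 1

end keys

end MiuraAux



set_option maxHeartbeats 1000000 in
lemma final_algebra (α β X P V C Cm DB DBm b : ℂ)
    (hrel : b = 1 - β * (X * P)) (hb : b ≠ 0) (hDB : DB ≠ 0) (hDBm : DBm ≠ 0) :
    ((X * ((α + β * X) * (V - P) * C / (b * DB)) * (1 + α * P) +
        X * (α * (P * ((1 + α * P) * C * (1 - β * (X * V)) / (b * DB) -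
            (1 + α * P) * Cm * b / (DBm * b))))) * b -
      X * (1 + α * P) * -(β * (X * P * ((α + β * X) * (V - P) * C / (b * DB) +
          ((1 + α * P) * C * (1 - β * (X * V)) / (b * DB) -
            (1 + α * P) * Cm * b / (DBm * b)))))) / b ^ 2
    = X * (1 + α * P) / b * (α + β * (X * (1 + α * P) / b)) *
        (V * C * b / (b * DB) - P * Cm * b / (DBm * b)) := by
  have hb2 : b ^ 2 ≠ 0 := pow_ne_zero 2 hb
  have hbDB : b * DB ≠ 0 := mul_ne_zero hb hDB
  have hDBmb : DBm * b ≠ 0 := mul_ne_zero hDBm hb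
  rw [div_eq_iff hb2]
  field_simp
  rw [hrel]
  ring

set_option maxHeartbeats 2000000 in
/-- For `p ∈ ℤ_{>0}` and `α, β ∈ ℂ`, the formula
`w = v(1 + α∏_{i=1}^p v_{−i})/(1 − β∏_{i=0}^p v_{−i})`
is a Miura-type transformation from the modified equation
`vₜ = v(α + βv)(∏_{i=1}^p v_i − ∏_{i=1}^p v_{−i})
      ·∏_{j=1}^p(1 + α∏_{i=1}^p v_{j−i}) / ∏_{j=0}^p(1 − β∏_{i=0}^p v_{j−i})`
to the equation `wₜ = w(α + βw)(∏_{i=1}^p w_i − ∏_{i=1}^p w_{−i})`. -/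
theorem miura_valbe_to_wtw
    (p : ℕ) (hp : 0 < p) (α β : ℂ) (v : ℤ → ℝ → ℂ)
    (hne : ∀ (n : ℤ) (t : ℝ),
      1 - β * ∏ i ∈ Finset.range (p + 1), v (n - i) t ≠ 0)
    (hv : ∀ (n : ℤ) (t : ℝ),
      HasDerivAt (v n)
        (v n t * (α + β * v n t)
            * ((∏ i ∈ Finset.range p, v (n + (i + 1)) t)
                - ∏ i ∈ Finset.range p, v (n - (i + 1)) t)
            * (∏ j ∈ Finset.range p,
                (1 + α * ∏ i ∈ Finset.range p, v (n + (j + 1) - (i + 1)) t))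
          / ∏ j ∈ Finset.range (p + 1),
              (1 - β * ∏ i ∈ Finset.range (p + 1), v (n + j - i) t)) t)
    (w : ℤ → ℝ → ℂ)
    (hw : ∀ (n : ℤ) (t : ℝ),
      w n t = v n t * (1 + α * ∏ i ∈ Finset.range p, v (n - (i + 1)) t)
        / (1 - β * ∏ i ∈ Finset.range (p + 1), v (n - i) t)) :
    ∀ (n : ℤ) (t : ℝ),
      HasDerivAt (w n)
        (w n t * (α + β * w n t)
          * ((∏ i ∈ Finset.range p, w (n + (i + 1)) t)
              - ∏ i ∈ Finset.range p, w (n - (i + 1)) t)) t := by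
  intro n t
  have hB : ∀ m : ℤ, mB β p v t m ≠ 0 := fun m => hne m t
  have hv' : ∀ k : ℤ, HasDerivAt (v k) (v k t * mh α β p v t k) t := by
    intro k
    have e : v k t * mh α β p v t k
        = v k t * (α + β * v k t)
            * ((∏ i ∈ Finset.range p, v (k + (i + 1)) t)
                - ∏ i ∈ Finset.range p, v (k - (i + 1)) t)
            * (∏ j ∈ Finset.range p,
                (1 + α * ∏ i ∈ Finset.range p, v (k + (j + 1) - (i + 1)) t))
          / ∏ j ∈ Finset.range (p + 1),
              (1 - β * ∏ i ∈ Finset.range (p + 1), v (k + j - i) t) := by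
      simp only [mh, mV, mP, mC, mD, mA, mB, mQ]
      ring
    rw [e]
    exact hv k t
  have hP' : HasDerivAt (fun s => ∏ i ∈ Finset.range p, v (n - (i + 1)) s)
      (mP p v t n * ∑ i ∈ Finset.range p, mh α β p v t (n - (i + 1))) t := by
    have h := HasDerivAt.fun_finsetProd (x := t) (u := Finset.range p)
      (f := fun (i : ℕ) => v (n - (i + 1)))
      (f' := fun (i : ℕ) => v (n - (i + 1)) t * mh α β p v t (n - (i + 1)))
      (fun i _ => hv' (n - (i + 1)))
    have e : ∑ i ∈ Finset.range p,
          (∏ j ∈ (Finset.range p).erase i, v (n - (j + 1)) t)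
            • (v (n - (i + 1)) t * mh α β p v t (n - (i + 1)))
        = mP p v t n * ∑ i ∈ Finset.range p, mh α β p v t (n - (i + 1)) := by
      rw [Finset.mul_sum]
      refine Finset.sum_congr rfl fun i hi => ?_
      rw [smul_eq_mul, ← mul_assoc, Finset.prod_erase_mul _ _ hi]
      rfl
    rw [← e]
    exact h
  have hQ' : HasDerivAt (fun s => ∏ i ∈ Finset.range (p + 1), v (n - i) s)
      (mQ p v t n * ∑ i ∈ Finset.range (p + 1), mh α β p v t (n - i)) t := by
    have h := HasDerivAt.fun_finsetProd (x := t) (u := Finset.range (p + 1))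
      (f := fun (i : ℕ) => v (n - i))
      (f' := fun (i : ℕ) => v (n - i) t * mh α β p v t (n - i))
      (fun i _ => hv' (n - i))
    have e : ∑ i ∈ Finset.range (p + 1),
          (∏ j ∈ (Finset.range (p + 1)).erase i, v (n - j) t)
            • (v (n - i) t * mh α β p v t (n - i))
        = mQ p v t n * ∑ i ∈ Finset.range (p + 1), mh α β p v t (n - i) := by
      rw [Finset.mul_sum]
      refine Finset.sum_congr rfl fun i hi => ?_
      rw [smul_eq_mul, ← mul_assoc, Finset.prod_erase_mul _ _ hi]
      rfl
    rw [← e]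
    exact h
  have hnum : HasDerivAt
      (fun s => v n s * (1 + α * ∏ i ∈ Finset.range p, v (n - (i + 1)) s))
      (v n t * mh α β p v t n * (1 + α * mP p v t n)
        + v n t * (α * (mP p v t n
            * ∑ i ∈ Finset.range p, mh α β p v t (n - (i + 1))))) t :=
    (hv' n).mul ((hP'.const_mul α).const_add 1)
  have hden : HasDerivAt
      (fun s => 1 - β * ∏ i ∈ Finset.range (p + 1), v (n - i) s)
      (-(β * (mQ p v t n
          * ∑ i ∈ Finset.range (p + 1), mh α β p v t (n - i)))) t :=
    (hQ'.const_mul β).const_sub 1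
  have hd2 : HasDerivAt (w n)
      (((v n t * mh α β p v t n * (1 + α * mP p v t n)
          + v n t * (α * (mP p v t n
              * ∑ i ∈ Finset.range p, mh α β p v t (n - (i + 1)))))
            * (1 - β * mQ p v t n)
        - v n t * (1 + α * mP p v t n)
            * -(β * (mQ p v t n
                * ∑ i ∈ Finset.range (p + 1), mh α β p v t (n - i))))
        / (1 - β * mQ p v t n) ^ 2) t := by
    have hdiv := hnum.div hden (hne n t)
    exact hdiv.congr_of_eventuallyEq (Filter.Eventually.of_forall fun s => hw n s)
  suffices hval : ((v n t * mh α β p v t n * (1 + α * mP p v t n)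
          + v n t * (α * (mP p v t n
              * ∑ i ∈ Finset.range p, mh α β p v t (n - (i + 1)))))
            * (1 - β * mQ p v t n)
        - v n t * (1 + α * mP p v t n)
            * -(β * (mQ p v t n
                * ∑ i ∈ Finset.range (p + 1), mh α β p v t (n - i))))
        / (1 - β * mQ p v t n) ^ 2
      = w n t * (α + β * w n t)
          * ((∏ i ∈ Finset.range p, w (n + (i + 1)) t)
              - ∏ i ∈ Finset.range p, w (n - (i + 1)) t) by
    rw [← hval]
    exact hd2
  -- auxiliary decompositions
  have hDBn : mD β p v t n
      = mB β p v t n * ∏ i ∈ Finset.range p, mB β p v t (n + (i + 1)) := by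
    rw [mD_eq, prod_add_eq (mB β p v t) n p, mR_succ_bot]
  have hDmn : mD β p v t (n - p)
      = (∏ i ∈ Finset.range p, mB β p v t (n - (i + 1))) * mB β p v t n := by
    rw [mD_eq, prod_sub_eq (mB β p v t) n p, mR_succ_top]
    have e : n - (p : ℤ) + p = n := by ring
    rw [e]
  have hDBne : (∏ i ∈ Finset.range p, mB β p v t (n + (i + 1))) ≠ 0 :=
    Finset.prod_ne_zero_iff.2 fun i _ => hB _
  have hDmne : (∏ i ∈ Finset.range p, mB β p v t (n - (i + 1))) ≠ 0 :=
    Finset.prod_ne_zero_iff.2 fun i _ => hB _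
  have hWp : (∏ i ∈ Finset.range p, w (n + (i + 1)) t)
      = mV p v t n * mC α p v t n * mB β p v t n / mD β p v t n := by
    have e1 : (∏ i ∈ Finset.range p, w (n + (i + 1)) t)
        = ∏ i ∈ Finset.range p,
            (v (n + (i + 1)) t * mA α p v t (n + (i + 1)) / mB β p v t (n + (i + 1))) :=
      Finset.prod_congr rfl fun i _ => hw (n + (i + 1)) t
    rw [e1, Finset.prod_div_distrib, Finset.prod_mul_distrib]
    have hv1 : (∏ i ∈ Finset.range p, v (n + (i + 1)) t) = mV p v t n := rfl
    have hc1 : (∏ i ∈ Finset.range p, mA α p v t (n + (i + 1))) = mC α p v t n := rfl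
    rw [hv1, hc1, hDBn]
    have hBn := hB n
    field_simp
  have hWm : (∏ i ∈ Finset.range p, w (n - (i + 1)) t)
      = mP p v t n * mC α p v t (n - p - 1) * mB β p v t n / mD β p v t (n - p) := by
    have e1 : (∏ i ∈ Finset.range p, w (n - (i + 1)) t)
        = ∏ i ∈ Finset.range p,
            (v (n - (i + 1)) t * mA α p v t (n - (i + 1)) / mB β p v t (n - (i + 1))) :=
      Finset.prod_congr rfl fun i _ => hw (n - (i + 1)) t
    rw [e1, Finset.prod_div_distrib, Finset.prod_mul_distrib]
    have hv1 : (∏ i ∈ Finset.range p, v (n - (i + 1)) t) = mP p v t n := rfl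
    have hc1 : (∏ i ∈ Finset.range p, mA α p v t (n - (i + 1))) = mC α p v t (n - p - 1) := by
      rw [prod_sub_eq (mA α p v t) n p, mC_eq]
      have e : n - (p : ℤ) - 1 + 1 = n - (p : ℤ) := by ring
      rw [e]
    rw [hv1, hc1, hDmn]
    have hBn := hB n
    field_simp
  have hSig := hSum α β p v t hB n
  have hFn : mF' α β p v t n
      = (1 + α * mP p v t n) * mC α p v t n
          * (1 - β * (v n t * mV p v t n)) / mD β p v t n := by
    unfold mF' mA
    rw [key2]
  have hFnp : mF' α β p v t (n - p)
      = (1 + α * mP p v t n) * mC α p v t (n - p - 1)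
          * mB β p v t n / mD β p v t (n - p) := by
    unfold mF'
    have e : n - (p : ℤ) + p = n := by ring
    rw [e, ← key6 α p v t n]
    rfl
  have hmh : mh α β p v t n
      = (α + β * v n t) * (mV p v t n - mP p v t n) * mC α p v t n / mD β p v t n := rfl
  have hmBn : mB β p v t n = 1 - β * (v n t * mP p v t n) := by
    unfold mB
    rw [key3]
  have hBne : (1 : ℂ) - β * (v n t * mP p v t n) ≠ 0 := hmBn ▸ hB n
  have hPr : (∏ i ∈ Finset.range p, v (n - (i + 1)) t) = mP p v t n := rfl
  have hQr : (∏ i ∈ Finset.range (p + 1), v (n - i) t) = mQ p v t n := rfl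
  rw [hw n t, hPr, hQr, hWp, hWm, hSum0 α β p v t n, hSig, hFn, hFnp, hmh,
    key3 p v t n, hDBn, hDmn, hmBn]
  exact final_algebra α β (v n t) (mP p v t n) (mV p v t n) (mC α p v t n)
    (mC α p v t (n - (p : ℤ) - 1))
    (∏ i ∈ Finset.range p, mB β p v t (n + (i + 1)))
    (∏ i ∈ Finset.range p, mB β p v t (n - (i + 1)))
    (1 - β * (v n t * mP p v t n)) rfl hBne hDBne hDmne
end

section
/- Fix λ ∈ ℂ. Let u¹, u² : ℤ → ℝ → ℂ be t-differentiable functions. Define 2×2 matrices M(n,t) := [[λ + u²(n,t), u¹(n,t)], [−1, 0]] and 𝒰(n,t) := [[0, −u¹(n,t)], [1, λ + u²(n−1,t)]]. Then the Darboux–Lax equation ∂_t M(n,t) = 𝒰(n+1,t)·M(n,t) − M(n,t)·𝒰(n,t) holds for all n ∈ ℤ and t ∈ ℝ if and only if (u¹,u²) satisfies the relabelled Toda lattice: ∂_t u¹(n,t) = u¹(n,t)·(u²(n,t) − u²(n−1,t)) and ∂_t u²(n,t) = u¹(n+1,t) − u¹(n,t) for all n and t. -/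
/-- For t-differentiable `u¹, u² : ℤ → ℝ → ℂ` and fixed `λ ∈ ℂ`, the
Darboux–Lax equation `∂ₜ M = S(𝒰)·M − M·𝒰` for
`M = [[λ + u², u¹],[−1, 0]]`, `𝒰 = [[0, −u¹],[1, λ + u²₋₁]]`
holds for all `n`, `t` if and only if `(u¹, u²)` satisfies the relabelled Toda
lattice `u¹ₜ = u¹(u² − u²₋₁)`, `u²ₜ = u¹₁ − u¹`. -/
theorem DLR_toda_iff
    (lam : ℂ) (u1 u2 : ℤ → ℝ → ℂ)
    (hd1 : ∀ (n : ℤ) (t : ℝ), DifferentiableAt ℝ (u1 n) t)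
    (hd2 : ∀ (n : ℤ) (t : ℝ), DifferentiableAt ℝ (u2 n) t)
    (M 𝒰 : ℤ → ℝ → Matrix (Fin 2) (Fin 2) ℂ)
    (hM : ∀ (n : ℤ) (t : ℝ), M n t = !![lam + u2 n t, u1 n t; -1, 0])
    (hU : ∀ (n : ℤ) (t : ℝ), 𝒰 n t = !![0, -u1 n t; 1, lam + u2 (n - 1) t]) :
    (∀ (n : ℤ) (t : ℝ) (i j : Fin 2),
        HasDerivAt (fun s => M n s i j)
          ((𝒰 (n + 1) t * M n t - M n t * 𝒰 n t) i j) t)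
    ↔ (∀ (n : ℤ) (t : ℝ),
        HasDerivAt (u1 n) (u1 n t * (u2 n t - u2 (n - 1) t)) t ∧
        HasDerivAt (u2 n) (u1 (n + 1) t - u1 n t) t) := by
  have key : ∀ (n : ℤ) (t : ℝ), (𝒰 (n + 1) t * M n t - M n t * 𝒰 n t) =
      !![u1 (n+1) t - u1 n t, u1 n t * (u2 n t - u2 (n-1) t); 0, 0] := by
    intro n t
    rw [hM, hU, hU]
    ext i j
    fin_cases i <;> fin_cases j <;>
      simp [Matrix.mul_apply, Fin.sum_univ_two] <;> ring
  constructor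
  · intro h n t
    constructor
    · have := h n t 0 1
      rw [key] at this
      simp only [hM] at this
      simpa using this
    · have := h n t 0 0
      rw [key] at this
      simp only [hM] at this
      have h2 : HasDerivAt (fun s => lam + u2 n s) (u1 (n+1) t - u1 n t) t := by
        simpa using this
      have := h2.const_add (-lam)
      simpa [← add_assoc] using this
  · intro h n t i j
    rw [key]
    have hM' : (fun s => M n s i j) = fun s => (!![lam + u2 n s, u1 n s; -1, 0] : Matrix (Fin 2) (Fin 2) ℂ) i j := by
      funext s; rw [hM]
    rw [hM']
    fin_cases i <;> fin_cases j <;> simp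
    · exact (h n t).2
    · exact (h n t).1
    · exact hasDerivAt_const t _
    · exact hasDerivAt_const t _
end

section
/- Let v¹, v² : ℤ → ℝ → ℂ be t-differentiable with v¹(n−1,t)·v²(n,t) − v¹(n,t)·v²(n−1,t) ≠ 0 and v¹(n+1,t)·v²(n,t) − v¹(n,t)·v²(n+1,t) ≠ 0 for all n, t, satisfying for all n, t: ∂_t v¹(n,t) = v¹(n−1,t)·(v¹(n,t)v²(n+1,t) − v¹(n+1,t)v²(n,t)) / (v¹(n−1,t)v²(n,t) − v¹(n,t)v²(n−1,t)) and ∂_t v²(n,t) = v²(n−1,t)·(v¹(n,t)v²(n+1,t) − v¹(n+1,t)v²(n,t)) / (v¹(n−1,t)v²(n,t) − v¹(n,t)v²(n−1,t)). Fix c₁ ∈ ℂ and define u¹(n,t) := (v¹(n+2,t)v²(n+1,t) − v¹(n+1,t)v²(n+2,t)) / (v¹(n+1,t)v²(n,t) − v¹(n,t)v²(n+1,t)) and u²(n,t) := −c₁ + (v¹(n,t)v²(n+2,t) − v¹(n+2,t)v²(n,t)) / (v¹(n,t)v²(n+1,t) − v¹(n+1,t)v²(n,t)). Then for all n, t: ∂_t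 u¹(n,t) = u¹(n,t)·(u²(n,t) − u²(n−1,t)) and ∂_t u²(n,t) = u¹(n+1,t) − u¹(n,t), i.e. (u¹,u²) satisfies the relabelled Toda lattice. -/
set_option maxHeartbeats 1000000 in
/-- The formulas
`u¹ = (v¹₂v²₁ − v¹₁v²₂)/(v¹₁v² − v¹v²₁)`,
`u² = −c₁ + (v¹v²₂ − v¹₂v²)/(v¹v²₁ − v¹₁v²)`
determine a Miura-type transformation from the modified Toda system
`v¹ₜ = v¹₋₁(v¹v²₁ − v¹₁v²)/(v¹₋₁v² − v¹v²₋₁)`,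
`v²ₜ = v²₋₁(v¹v²₁ − v¹₁v²)/(v¹₋₁v² − v¹v²₋₁)`
to the relabelled Toda lattice `u¹ₜ = u¹(u² − u²₋₁)`, `u²ₜ = u¹₁ − u¹`. -/

theorem miura_to_toda
    (c₁ : ℂ) (v1 v2 : ℤ → ℝ → ℂ)
    (hne₁ : ∀ (n : ℤ) (t : ℝ),
      v1 (n - 1) t * v2 n t - v1 n t * v2 (n - 1) t ≠ 0)
    (hne₂ : ∀ (n : ℤ) (t : ℝ),
      v1 (n + 1) t * v2 n t - v1 n t * v2 (n + 1) t ≠ 0)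
    (hv1 : ∀ (n : ℤ) (t : ℝ),
      HasDerivAt (v1 n)
        (v1 (n - 1) t * (v1 n t * v2 (n + 1) t - v1 (n + 1) t * v2 n t)
          / (v1 (n - 1) t * v2 n t - v1 n t * v2 (n - 1) t)) t)
    (hv2 : ∀ (n : ℤ) (t : ℝ),
      HasDerivAt (v2 n)
        (v2 (n - 1) t * (v1 n t * v2 (n + 1) t - v1 (n + 1) t * v2 n t)
          / (v1 (n - 1) t * v2 n t - v1 n t * v2 (n - 1) t)) t)
    (u1 u2 : ℤ → ℝ → ℂ)
    (hu1 : ∀ (n : ℤ) (t : ℝ),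
      u1 n t = (v1 (n + 2) t * v2 (n + 1) t - v1 (n + 1) t * v2 (n + 2) t)
        / (v1 (n + 1) t * v2 n t - v1 n t * v2 (n + 1) t))
    (hu2 : ∀ (n : ℤ) (t : ℝ),
      u2 n t = -c₁ + (v1 n t * v2 (n + 2) t - v1 (n + 2) t * v2 n t)
        / (v1 n t * v2 (n + 1) t - v1 (n + 1) t * v2 n t)) :
    ∀ (n : ℤ) (t : ℝ),
      HasDerivAt (u1 n) (u1 n t * (u2 n t - u2 (n - 1) t)) t ∧
      HasDerivAt (u2 n) (u1 (n + 1) t - u1 n t) t := by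
  intro n t
  have e1 : n + 1 - 1 = n := by ring
  have e2 : n + 2 - 1 = n + 1 := by ring
  have e3 : n + 1 + 1 = n + 2 := by ring
  have e4 : n + 2 + 1 = n + 3 := by ring
  have e5 : n - 1 + 1 = n := by ring
  have e7 : n - 1 + 2 = n + 1 := by ring
  have e8 : n + 1 + 2 = n + 3 := by ring
  have hA0 : v1 (n - 1) t * v2 n t - v1 n t * v2 (n - 1) t ≠ 0 := hne₁ n t
  have hA0' : v1 n t * v2 (n - 1) t - v1 (n - 1) t * v2 n t ≠ 0 := by
    intro h; exact hA0 (by linear_combination -h)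
  have hA1 : v1 n t * v2 (n + 1) t - v1 (n + 1) t * v2 n t ≠ 0 := by
    have := hne₁ (n + 1) t; rwa [e1] at this
  have hA2 : v1 (n + 1) t * v2 (n + 2) t - v1 (n + 2) t * v2 (n + 1) t ≠ 0 := by
    have := hne₁ (n + 2) t; rwa [e2] at this
  have hB0 : v1 (n + 1) t * v2 n t - v1 n t * v2 (n + 1) t ≠ 0 := hne₂ n t
  have hB1 : v1 (n + 2) t * v2 (n + 1) t - v1 (n + 1) t * v2 (n + 2) t ≠ 0 := by
    have := hne₂ (n + 1) t; rwa [e3] at this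
  have H1 := hv1 n t
  have H2 := hv2 n t
  have H1p := hv1 (n + 1) t; rw [e1, e3] at H1p
  have H2p := hv2 (n + 1) t; rw [e1, e3] at H2p
  have H1pp := hv1 (n + 2) t; rw [e2, e4] at H1pp
  have H2pp := hv2 (n + 2) t; rw [e2, e4] at H2pp
  -- clean derivative of W n = v1 (n+1) v2 n - v1 n v2 (n+1)
  have hWn : HasDerivAt (fun s => v1 (n + 1) s * v2 n s - v1 n s * v2 (n + 1) s)
      ((v1 (n + 1) t * v2 (n - 1) t - v1 (n - 1) t * v2 (n + 1) t)
        * (v1 (n + 1) t * v2 n t - v1 n t * v2 (n + 1) t)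
        / (v1 n t * v2 (n - 1) t - v1 (n - 1) t * v2 n t)) t := by
    refine ((H1p.mul H2).sub (H1.mul H2p)).congr_deriv ?_
    field_simp at hA0 hA0' hA1 hA2 hB0 hB1 ⊢
    ring
  -- clean derivative of -(W n)
  have hWn' : HasDerivAt (fun s => v1 n s * v2 (n + 1) s - v1 (n + 1) s * v2 n s)
      ((v1 (n - 1) t * v2 (n + 1) t - v1 (n + 1) t * v2 (n - 1) t)
        * (v1 (n + 1) t * v2 n t - v1 n t * v2 (n + 1) t)
        / (v1 n t * v2 (n - 1) t - v1 (n - 1) t * v2 n t)) t := by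
    refine ((H1.mul H2p).sub (H1p.mul H2)).congr_deriv ?_
    field_simp at hA0 hA0' hA1 hA2 hB0 hB1 ⊢
    ring
  -- clean derivative of W (n+1)
  have hWn1 : HasDerivAt (fun s => v1 (n + 2) s * v2 (n + 1) s - v1 (n + 1) s * v2 (n + 2) s)
      ((v1 (n + 2) t * v2 n t - v1 n t * v2 (n + 2) t)
        * (v1 (n + 2) t * v2 (n + 1) t - v1 (n + 1) t * v2 (n + 2) t)
        / (v1 (n + 1) t * v2 n t - v1 n t * v2 (n + 1) t)) t := by
    refine ((H1pp.mul H2p).sub (H1p.mul H2pp)).congr_deriv ?_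
    field_simp at hA0 hA0' hA1 hA2 hB0 hB1 ⊢
    ring
  -- clean derivative of E n = v1 n v2 (n+2) - v1 (n+2) v2 n
  have hE : HasDerivAt (fun s => v1 n s * v2 (n + 2) s - v1 (n + 2) s * v2 n s)
      ((v1 (n - 1) t * v2 (n + 2) t - v1 (n + 2) t * v2 (n - 1) t)
          * (v1 (n + 1) t * v2 n t - v1 n t * v2 (n + 1) t)
          / (v1 n t * v2 (n - 1) t - v1 (n - 1) t * v2 n t)
        - (v1 (n + 3) t * v2 (n + 2) t - v1 (n + 2) t * v2 (n + 3) t)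
          * (v1 (n + 1) t * v2 n t - v1 n t * v2 (n + 1) t)
          / (v1 (n + 2) t * v2 (n + 1) t - v1 (n + 1) t * v2 (n + 2) t)) t := by
    refine ((H1.mul H2pp).sub (H1pp.mul H2)).congr_deriv ?_
    field_simp at hA0 hA0' hA1 hA2 hB0 hB1 ⊢
    ring
  have hu1f : u1 n = fun s => (v1 (n + 2) s * v2 (n + 1) s - v1 (n + 1) s * v2 (n + 2) s)
      / (v1 (n + 1) s * v2 n s - v1 n s * v2 (n + 1) s) := funext (hu1 n)
  have hu2f : u2 n = fun s => -c₁ + (v1 n s * v2 (n + 2) s - v1 (n + 2) s * v2 n s)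
      / (v1 n s * v2 (n + 1) s - v1 (n + 1) s * v2 n s) := funext (hu2 n)
  have hu2m : u2 (n - 1) t = -c₁ + (v1 (n - 1) t * v2 (n + 1) t - v1 (n + 1) t * v2 (n - 1) t)
      / (v1 (n - 1) t * v2 n t - v1 n t * v2 (n - 1) t) := by
    have := hu2 (n - 1) t; rwa [e5, e7] at this
  have hu1p : u1 (n + 1) t = (v1 (n + 3) t * v2 (n + 2) t - v1 (n + 2) t * v2 (n + 3) t)
      / (v1 (n + 2) t * v2 (n + 1) t - v1 (n + 1) t * v2 (n + 2) t) := by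
    have := hu1 (n + 1) t; rwa [e3, e8] at this
  constructor
  · have D := hWn1.div hWn hB0
    rw [hu1f]
    refine D.congr_deriv ?_
    rw [hu2 n t, hu2m]
    field_simp at hA0 hA0' hA1 hA2 hB0 hB1 ⊢
    ring
  · have D := (hasDerivAt_const t (-c₁)).add (hE.div hWn' hA1)
    rw [hu2f]
    refine D.congr_deriv ?_
    rw [hu1p, hu1 n t]
    field_simp at hA0 hA0' hA1 hA2 hB0 hB1 ⊢
    ring
end

section
/- Let b₁, b₂, b₃, b₄ ∈ ℂ with b₁b₄ − b₂b₃ ≠ 0. Define v¹(n,t) := (b₁t + b₃ − n·b₁)·e^t and v²(n,t) := (b₂t + b₄ − n·b₂)·e^t for n ∈ ℤ, t ∈ ℝ. Then for all n and t: v¹(n−1,t)·v²(n,t) − v¹(n,t)·v²(n−1,t) ≠ 0, and the pair (v¹,v²) satisfies the system ∂_t v¹(n,t) = v¹(n−1,t)·(v¹(n,t)v²(n+1,t) − v¹(n+1,t)v²(n,t)) / (v¹(n−1,t)v²(n,t) − v¹(n,t)v²(n−1,t)), ∂_t v²(n,t) = v²(n−1,t)·(v¹(n,t)v²(n+1,t)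 − v¹(n+1,t)v²(n,t)) / (v¹(n−1,t)v²(n,t) − v¹(n,t)v²(n−1,t)). -/
/-- Explicit solutions of the modified Toda system: for constants
`b₁, b₂, b₃, b₄ ∈ ℂ` with `b₁b₄ − b₂b₃ ≠ 0`, the functions
`v¹(n,t) = (b₁t + b₃ − nb₁)eᵗ`, `v²(n,t) = (b₂t + b₄ − nb₂)eᵗ`
have nonvanishing denominator `v¹₋₁v² − v¹v²₋₁` and satisfy the modified Toda
system. -/
theorem explicit_solution_modified_toda
    (b₁ b₂ b₃ b₄ : ℂ) (h : b₁ * b₄ - b₂ * b₃ ≠ 0)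
    (v1 v2 : ℤ → ℝ → ℂ)
    (hv1 : ∀ (n : ℤ) (t : ℝ),
      v1 n t = (b₁ * (t : ℂ) + b₃ - (n : ℂ) * b₁) * (Real.exp t : ℂ))
    (hv2 : ∀ (n : ℤ) (t : ℝ),
      v2 n t = (b₂ * (t : ℂ) + b₄ - (n : ℂ) * b₂) * (Real.exp t : ℂ)) :
    ∀ (n : ℤ) (t : ℝ),
      v1 (n - 1) t * v2 n t - v1 n t * v2 (n - 1) t ≠ 0 ∧
      HasDerivAt (v1 n)
        (v1 (n - 1) t * (v1 n t * v2 (n + 1) t - v1 (n + 1) t * v2 n t)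
          / (v1 (n - 1) t * v2 n t - v1 n t * v2 (n - 1) t)) t ∧
      HasDerivAt (v2 n)
        (v2 (n - 1) t * (v1 n t * v2 (n + 1) t - v1 (n + 1) t * v2 n t)
          / (v1 (n - 1) t * v2 n t - v1 n t * v2 (n - 1) t)) t := by
  intro n t
  have hexp : (Real.exp t : ℂ) ≠ 0 := by
    exact_mod_cast Complex.ofReal_ne_zero.mpr (Real.exp_ne_zero t)
  have hden : v1 (n - 1) t * v2 n t - v1 n t * v2 (n - 1) t
      = (b₁ * b₄ - b₂ * b₃) * ((Real.exp t : ℂ) * (Real.exp t : ℂ)) := by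
    rw [hv1, hv1, hv2, hv2]; push_cast; ring
  have hdne : v1 (n - 1) t * v2 n t - v1 n t * v2 (n - 1) t ≠ 0 := by
    rw [hden]; exact mul_ne_zero h (mul_ne_zero hexp hexp)
  have hnum : v1 n t * v2 (n + 1) t - v1 (n + 1) t * v2 n t
      = (b₁ * b₄ - b₂ * b₃) * ((Real.exp t : ℂ) * (Real.exp t : ℂ)) := by
    rw [hv1, hv1, hv2, hv2]; push_cast; ring
  have hquot : ∀ x : ℂ, x * (v1 n t * v2 (n + 1) t - v1 (n + 1) t * v2 n t)
      / (v1 (n - 1) t * v2 n t - v1 n t * v2 (n - 1) t) = x := by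
    intro x
    rw [hnum, hden, mul_div_assoc,
      div_self (mul_ne_zero h (mul_ne_zero hexp hexp)), mul_one]
  -- derivative of t ↦ (t : ℂ)
  have hid : HasDerivAt (fun s : ℝ => (s : ℂ)) 1 t := by
    simpa using (hasDerivAt_id t).ofReal_comp
  have hexp' : HasDerivAt (fun s : ℝ => (Real.exp s : ℂ)) (Real.exp t : ℂ) t :=
    (Real.hasDerivAt_exp t).ofReal_comp
  have key : ∀ b c : ℂ, HasDerivAt (fun s : ℝ => (b * (s : ℂ) + c) * (Real.exp s : ℂ))
      ((b * (t : ℂ) + c + b) * (Real.exp t : ℂ)) t := by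
    intro b c
    have h1 : HasDerivAt (fun s : ℝ => b * (s : ℂ) + c) b t := by
      simpa using (hid.const_mul b).add_const c
    have : HasDerivAt (fun s : ℝ => (b * (s : ℂ) + c) * (Real.exp s : ℂ))
        (b * (Real.exp t : ℂ) + (b * (t : ℂ) + c) * (Real.exp t : ℂ)) t := h1.mul hexp'
    convert this using 1
    ring
  have hd1 : HasDerivAt (v1 n) (v1 (n - 1) t) t := by
    have heqf : v1 n = fun s : ℝ =>
        (b₁ * (s : ℂ) + (b₃ - (n : ℂ) * b₁)) * (Real.exp s : ℂ) :=
      funext fun s => by rw [hv1]; ring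
    have heqd : v1 (n - 1) t
        = (b₁ * (t : ℂ) + (b₃ - (n : ℂ) * b₁) + b₁) * (Real.exp t : ℂ) := by
      rw [hv1]; push_cast; ring
    rw [heqf, heqd]; exact key _ _
  have hd2 : HasDerivAt (v2 n) (v2 (n - 1) t) t := by
    have heqf : v2 n = fun s : ℝ =>
        (b₂ * (s : ℂ) + (b₄ - (n : ℂ) * b₂)) * (Real.exp s : ℂ) :=
      funext fun s => by rw [hv2]; ring
    have heqd : v2 (n - 1) t
        = (b₂ * (t : ℂ) + (b₄ - (n : ℂ) * b₂) + b₂) * (Real.exp t : ℂ) := by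
      rw [hv2]; push_cast; ring
    rw [heqf, heqd]; exact key _ _
  exact ⟨hdne, by rw [hquot]; exact hd1, by rw [hquot]; exact hd2⟩
end
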